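/- arXiv:1001.2026 — 8 statements merged into one kernel-verified Lean document; each statement's English description precedes it below -/
import Mathlib

section
/- Let X be a complex separable infinite-dimensional Banach space and let T be a bounded hypercyclic operator on X such that the linear span of the eigenvectors of T associated to eigenvalues of modulus 1 is dense in X. Then for every finite subset F of σ_p(T)∩𝕋, the linear span of ⋃_{λ ∈ 𝕋∖F} ker(T − λ) is dense in X. -/
open MeasureTheory Filter Topology

open scoped Classical in
/-- Lower density of a set of natural numbers. -/
noncomputable def lowerDensity (A : Set ℕ) : ℝ :=
  Filter.atTop.liminf fun N : ℕ =>
    (((Finset.range N).filter (fun n => n ∈ A)).card : ℝ) / (N : ℝ)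

/-- `x` is a frequently hypercyclic vector for `T`. -/
def FreqHCVector {X : Type*} [NormedAddCommGroup X] [NormedSpace ℂ X]
    (T : X →L[ℂ] X) (x : X) : Prop :=
  ∀ U : Set X, IsOpen U → U.Nonempty → 0 < lowerDensity {n : ℕ | (T ^ n) x ∈ U}

/-- `T` is frequently hypercyclic. -/
def FrequentlyHypercyclic {X : Type*} [NormedAddCommGroup X] [NormedSpace ℂ X]
    (T : X →L[ℂ] X) : Prop :=
  ∃ x : X, FreqHCVector T x

/-- `T` is hypercyclic. -/
def Hypercyclic {X : Type*} [NormedAddCommGroup X] [NormedSpace ℂ X]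
    (T : X →L[ℂ] X) : Prop :=
  ∃ x : X, Dense (Set.range fun n : ℕ => (T ^ n) x)

/-- `T` has a perfectly spanning set of eigenvectors associated to unimodular
eigenvalues: there is a continuous (atomless) probability measure `σ` on the unit
circle such that whenever `A` is a measurable subset of the circle with `σ A = 1`,
the span of the eigenspaces `ker (T - c)`, `c ∈ A`, is dense in `X`. -/
def PerfectlySpanning {X : Type*} [NormedAddCommGroup X] [NormedSpace ℂ X]
    (T : X →L[ℂ] X) : Prop :=
  ∃ σ : Measure ℂ, IsProbabilityMeasure σ ∧ (∀ c : ℂ, σ {c} = 0) ∧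
    σ {c : ℂ | ‖c‖ = 1} = 1 ∧
    ∀ A : Set ℂ, A ⊆ {c : ℂ | ‖c‖ = 1} → MeasurableSet A → σ A = 1 →
      Dense (Submodule.span ℂ (⋃ c ∈ A, {x : X | T x = c • x}) : Set X)

section Aux

variable {X : Type*} [NormedAddCommGroup X] [NormedSpace ℂ X]

lemma exists_functional_of_not_dense (W : Submodule ℂ X) (x : X)
    (hx : x ∉ closure (W : Set X)) :
    ∃ f : X →L[ℂ] ℂ, (∀ w ∈ W, f w = 0) ∧ f x ≠ 0 := by
  obtain ⟨f, u, hfa, hfx⟩ := RCLike.geometric_hahn_banach_closed_point (𝕜 := ℂ)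
    ((W.restrictScalars ℝ).convex.closure) isClosed_closure hx
  have hu : 0 < u := by
    have := hfa 0 (subset_closure W.zero_mem)
    simpa using this
  refine ⟨f, ?_, ?_⟩
  · intro w hw
    by_contra hfw
    have hmem : ((2 * u / f w : ℂ)) • w ∈ W := W.smul_mem _ hw
    have h2 := hfa _ (subset_closure hmem)
    rw [_root_.map_smul, smul_eq_mul, div_mul_cancel₀ _ hfw] at h2
    simp at h2
    linarith
  · intro h
    rw [h] at hfx
    simp at hfx
    linarith

end Aux

section Aux2

variable {X : Type*} [NormedAddCommGroup X] [NormedSpace ℂ X]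

lemma denseRange_sub_smul (T : X →L[ℂ] X) (hhc : Hypercyclic T) (lam : ℂ) :
    DenseRange ⇑(T - lam • (1 : X →L[ℂ] X)) := by
  by_contra hnd
  obtain ⟨x₀, hx₀⟩ := hhc
  set S := T - lam • (1 : X →L[ℂ] X) with hS
  have hrange : ((LinearMap.range (S : X →ₗ[ℂ] X) : Submodule ℂ X) : Set X)
      = Set.range ⇑S := by
    ext y; simp [LinearMap.mem_range]
  obtain ⟨x, hx⟩ : ∃ x : X, x ∉ closure (Set.range ⇑S) := by
    by_contra h
    push_neg at h
    exact hnd h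
  rw [← hrange] at hx
  obtain ⟨f, hf0, hfx⟩ := exists_functional_of_not_dense _ x hx
  have hft : ∀ y : X, f (T y) = lam * f y := by
    intro y
    have h1 : S y ∈ LinearMap.range (S : X →ₗ[ℂ] X) := ⟨y, rfl⟩
    have h2 := hf0 _ h1
    have h3 : S y = T y - lam • y := by
      simp [hS, ContinuousLinearMap.sub_apply, ContinuousLinearMap.smul_apply]
    rw [h3, map_sub, _root_.map_smul, smul_eq_mul, sub_eq_zero] at h2
    exact h2
  have hiter : ∀ n : ℕ, f ((T ^ n) x₀) = lam ^ n * f x₀ := by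
    intro n
    induction n with
    | zero => simp
    | succ n ih =>
        rw [pow_succ', ContinuousLinearMap.mul_apply, hft, ih, pow_succ]
        ring
  have hfsurj : Function.Surjective ⇑f := by
    intro c
    exact ⟨(c / f x) • x, by rw [_root_.map_smul, smul_eq_mul, div_mul_cancel₀ _ hfx]⟩
  have hdd : DenseRange (⇑f ∘ fun n : ℕ => (T ^ n) x₀) :=
    DenseRange.comp hfsurj.denseRange hx₀ f.continuous
  have heq : (⇑f ∘ fun n : ℕ => (T ^ n) x₀) = fun n : ℕ => lam ^ n * f x₀ := by
    funext n
    exact hiter n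
  rw [heq] at hdd
  have hdd' : DenseRange (fun n : ℕ => lam ^ n * f x₀) := hdd
  by_cases hc : f x₀ = 0
  · obtain ⟨n, hn⟩ := hdd'.exists_dist_lt (1 : ℂ) (by norm_num : (0:ℝ) < 1/2)
    rw [hc, mul_zero, dist_zero_right] at hn
    norm_num at hn
  · set r := ‖f x₀‖ with hr
    have hrpos : 0 < r := norm_pos_iff.mpr hc
    by_cases hl : ‖lam‖ ≤ 1
    · obtain ⟨n, hn⟩ := hdd'.exists_dist_lt (((3 * r : ℝ)) : ℂ) hrpos
      have h1 : ‖lam ^ n * f x₀‖ ≤ r := by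
        rw [norm_mul, norm_pow]
        have := pow_le_one₀ (norm_nonneg lam) hl (n := n)
        nlinarith
      have h2 : (2 : ℝ) * r ≤ dist (((3 * r : ℝ)) : ℂ) (lam ^ n * f x₀) := by
        rw [dist_eq_norm]
        have h3 : ‖(((3 * r : ℝ)) : ℂ)‖ = 3 * r := by
          rw [Complex.norm_real]
          exact abs_of_pos (by linarith)
        have h4 := norm_sub_norm_le (((3 * r : ℝ)) : ℂ) (lam ^ n * f x₀)
        linarith
      linarith
    · push_neg at hl
      obtain ⟨n, hn⟩ := hdd'.exists_dist_lt (0 : ℂ) hrpos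
      have h1 : r ≤ ‖lam ^ n * f x₀‖ := by
        rw [norm_mul, norm_pow]
        have : (1:ℝ) ≤ ‖lam‖ ^ n := one_le_pow₀ hl.le
        nlinarith
      rw [dist_comm, dist_zero_right] at hn
      linarith

end Aux2

section Aux3

variable {X : Type*} [NormedAddCommGroup X] [NormedSpace ℂ X]

noncomputable def prodOp (T : X →L[ℂ] X) : List ℂ → (X →L[ℂ] X)
  | [] => 1
  | a :: l => (T - a • (1 : X →L[ℂ] X)) * prodOp T l

lemma denseRange_prodOp (T : X →L[ℂ] X) (hhc : Hypercyclic T) (l : List ℂ) :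
    DenseRange ⇑(prodOp T l) := by
  induction l with
  | nil => simpa [prodOp] using denseRange_id
  | cons a l ih =>
      have hco : ⇑(prodOp T (a :: l)) = ⇑(T - a • (1 : X →L[ℂ] X)) ∘ ⇑(prodOp T l) := rfl
      rw [hco]
      exact (denseRange_sub_smul T hhc a).comp ih (T - a • (1 : X →L[ℂ] X)).continuous

lemma prodOp_apply_eigen (T : X →L[ℂ] X) (l : List ℂ) {c : ℂ} {v : X}
    (hv : T v = c • v) :
    (prodOp T l) v = ((l.map (fun lam => c - lam)).prod) • v := by
  induction l with
  | nil => simp [prodOp]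
  | cons a l ih =>
      have h0 : (prodOp T (a :: l)) v
          = (T - a • (1 : X →L[ℂ] X)) ((prodOp T l) v) := rfl
      rw [h0, ih, _root_.map_smul]
      have h1 : (T - a • (1 : X →L[ℂ] X)) v = (c - a) • v := by
        simp [ContinuousLinearMap.sub_apply, hv, sub_smul]
      rw [h1, smul_smul, List.map_cons, List.prod_cons, mul_comm]

lemma list_prod_eq_zero {c : ℂ} {l : List ℂ} (hc : c ∈ l) :
    (l.map (fun lam => c - lam)).prod = 0 := by
  induction l with
  | nil => simp at hc
  | cons a l ih =>
      rw [List.map_cons, List.prod_cons]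
      rcases List.mem_cons.mp hc with h | h
      · rw [h]; simp
      · rw [ih h, mul_zero]

end Aux3

/-- If `T` is a bounded hypercyclic operator whose unimodular eigenvectors span a
dense subspace, then for every finite set `F` of unimodular eigenvalues of `T`, the
span of the eigenspaces associated to unimodular eigenvalues outside `F` is still
dense. -/
theorem span_eigenvectors_avoiding_finite_set_dense
    {X : Type*} [NormedAddCommGroup X] [NormedSpace ℂ X] [CompleteSpace X]
    [TopologicalSpace.SeparableSpace X] (hdim : ¬ FiniteDimensional ℂ X)
    (T : X →L[ℂ] X) (hhc : Hypercyclic T)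
    (hspan : Dense
      (Submodule.span ℂ (⋃ c ∈ {c : ℂ | ‖c‖ = 1}, {x : X | T x = c • x}) : Set X))
    (F : Set ℂ) (hFfin : F.Finite)
    (hFsub : F ⊆ {c : ℂ | ‖c‖ = 1 ∧ ∃ v : X, v ≠ 0 ∧ T v = c • v}) :
    Dense
      (Submodule.span ℂ (⋃ c ∈ {c : ℂ | ‖c‖ = 1} \ F, {x : X | T x = c • x}) : Set X) := by
  classical
  set l : List ℂ := hFfin.toFinset.toList with hl
  have hSd : DenseRange ⇑(prodOp T l) := denseRange_prodOp T hhc l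
  set V : Submodule ℂ X :=
    Submodule.span ℂ (⋃ c ∈ {c : ℂ | ‖c‖ = 1} \ F, {x : X | T x = c • x}) with hV
  have hgen : ∀ y ∈ (⋃ c ∈ {c : ℂ | ‖c‖ = 1}, {x : X | T x = c • x}),
      (prodOp T l) y ∈ V := by
    intro y hy
    simp only [Set.mem_iUnion, exists_prop] at hy
    obtain ⟨c, hc, hTy⟩ := hy
    have hSy : (prodOp T l) y = ((l.map (fun lam => c - lam)).prod) • y :=
      prodOp_apply_eigen T l hTy
    by_cases hcF : c ∈ F
    · have hcl : c ∈ l := by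
        rw [hl, Finset.mem_toList, hFfin.mem_toFinset]
        exact hcF
      rw [hSy, list_prod_eq_zero hcl, zero_smul]
      exact V.zero_mem
    · have hyV : y ∈ V :=
        Submodule.subset_span (Set.mem_biUnion ⟨hc, hcF⟩ hTy)
      rw [hSy]
      exact V.smul_mem _ hyV
  have hrange : Set.range ⇑(prodOp T l) ⊆ closure (V : Set X) := by
    rintro _ ⟨z, rfl⟩
    have hz : z ∈ closure (Submodule.span ℂ
        (⋃ c ∈ {c : ℂ | ‖c‖ = 1}, {x : X | T x = c • x}) : Set X) := hspan z
    have h1 : (prodOp T l) z ∈ closure (⇑(prodOp T l) ''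
        (Submodule.span ℂ (⋃ c ∈ {c : ℂ | ‖c‖ = 1}, {x : X | T x = c • x}) : Set X)) :=
      image_closure_subset_closure_image (prodOp T l).continuous ⟨z, hz, rfl⟩
    refine closure_mono ?_ h1
    rintro _ ⟨w, hw, rfl⟩
    have hle : Submodule.span ℂ (⋃ c ∈ {c : ℂ | ‖c‖ = 1}, {x : X | T x = c • x})
        ≤ V.comap ((prodOp T l) : X →ₗ[ℂ] X) :=
      Submodule.span_le.mpr (fun y hy => hgen y hy)
    exact hle hw
  have hdc : Dense (closure (V : Set X)) := hSd.mono hrange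
  exact dense_closure.mp hdc
end

section
/- Let X be a complex separable infinite-dimensional Banach space and let T be a bounded hypercyclic operator on X. Let (x_n)_{n≥1} be a sequence of eigenvectors of T with T x_n = λ_n x_n and |λ_n| = 1, such that the linear span of {x_n : n ≥ 1} is dense in X. Then for every finite subset F of σ_p(T)∩𝕋, the linear span of {x_n : n ∈ A_F} is dense in X, where A_F = {n ≥ 1 : λ_n ∉ F}. -/
open MeasureTheory Filter Topology

lemma denseRange_sub_smul_id {X : Type*} [NormedAddCommGroup X] [NormedSpace ℂ X]
    (T : X →L[ℂ] X) (hhc : ∃ x : X, Dense (Set.range fun n : ℕ => (T ^ n) x)) (c : ℂ) :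
    DenseRange ⇑(T - c • ContinuousLinearMap.id ℂ X) := by
  set S : X →L[ℂ] X := T - c • ContinuousLinearMap.id ℂ X with hS
  by_contra hnd
  obtain ⟨x0, hx0⟩ := hhc
  -- range S as a submodule
  have hrange : Set.range ⇑S = ((LinearMap.range (S : X →ₗ[ℂ] X) : Submodule ℂ X) : Set X) := (LinearMap.coe_range _).symm
  have hconv : Convex ℝ (closure (Set.range ⇑S)) := by
    rw [hrange]
    exact (((LinearMap.range (S : X →ₗ[ℂ] X)).restrictScalars ℝ).convex).closure
  -- a point outside the closure
  rw [DenseRange, dense_iff_closure_eq] at hnd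
  have : ∃ z : X, z ∉ closure (Set.range ⇑S) := by
    by_contra h
    push_neg at h
    exact hnd (Set.eq_univ_of_forall h)
  obtain ⟨z, hz⟩ := this
  obtain ⟨f, u, hfu, huz⟩ :=
    RCLike.geometric_hahn_banach_closed_point (𝕜 := ℂ) hconv isClosed_closure hz
  have h0 : (0 : X) ∈ closure (Set.range ⇑S) := subset_closure ⟨0, map_zero S⟩
  have hu0 : 0 < u := by simpa using hfu 0 h0
  -- f vanishes on range S
  have hker : ∀ y : X, f (S y) = 0 := by
    intro y
    by_contra hne
    have hmem : ((u + 1 : ℂ) / f (S y)) • S y ∈ closure (Set.range ⇑S) := by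
      apply subset_closure
      exact ⟨((u + 1 : ℂ) / f (S y)) • y, by simp [_root_.map_smul]⟩
    have := hfu _ hmem
    rw [_root_.map_smul] at this
    simp only [smul_eq_mul, div_mul_cancel₀ _ hne] at this
    simp at this
    linarith
  have hTf : ∀ y : X, f (T y) = c * f y := by
    intro y
    have := hker y
    simp only [hS, ContinuousLinearMap.sub_apply, ContinuousLinearMap.smul_apply,
      ContinuousLinearMap.id_apply, map_sub, _root_.map_smul, smul_eq_mul, sub_eq_zero] at this
    exact this
  have hiter : ∀ n : ℕ, f ((T ^ n) x0) = c ^ n * f x0 := by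
    intro n
    induction n with
    | zero => simp
    | succ n ih =>
        rw [pow_succ', pow_succ']
        rw [ContinuousLinearMap.mul_apply, hTf]
        rw [ih]; ring
  have hfz : f z ≠ 0 := by
    intro h
    rw [h] at huz
    simp at huz
    linarith
  have hfsurj : Function.Surjective ⇑f := by
    intro w
    exact ⟨(w / f z) • z, by rw [_root_.map_smul, smul_eq_mul]; field_simp⟩
  have hdr : DenseRange fun n : ℕ => c ^ n * f x0 := by
    have : DenseRange (⇑f ∘ fun n : ℕ => (T ^ n) x0) :=
      (hfsurj.denseRange).comp hx0 f.continuous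
    have heq : (⇑f ∘ fun n : ℕ => (T ^ n) x0) = fun n : ℕ => c ^ n * f x0 := by
      funext n; exact hiter n
    rwa [heq] at this
  set t := f x0 with ht
  rcases eq_or_ne t 0 with h | h
  · have h1 : (1 : ℂ) ∈ closure (Set.range fun n : ℕ => c ^ n * t) := hdr 1
    have : Set.range (fun n : ℕ => c ^ n * t) ⊆ {0} := by
      rintro w ⟨n, rfl⟩; simp [h]
    have := closure_mono this h1
    simp at this
  · rcases le_or_gt ‖c‖ 1 with hc | hc
    · obtain ⟨n, hw⟩ := hdr.exists_mem_open Metric.isOpen_ball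
        (⟨(‖t‖ + 2 : ℝ), Metric.mem_ball_self one_pos⟩ :
          (Metric.ball ((‖t‖ + 2 : ℝ) : ℂ) 1).Nonempty)
      have h1 : ‖c ^ n * t‖ ≤ ‖t‖ := by
        rw [norm_mul, norm_pow]
        calc ‖c‖ ^ n * ‖t‖ ≤ 1 * ‖t‖ := by
              gcongr; exact pow_le_one₀ (norm_nonneg c) hc
        _ = ‖t‖ := one_mul _
      have h2 : ‖t‖ + 1 ≤ ‖c ^ n * t‖ := by
        have := Metric.mem_ball.mp hw
        have h3 : ‖((‖t‖ + 2 : ℝ) : ℂ)‖ - ‖c ^ n * t‖ ≤ ‖c ^ n * t - ((‖t‖ + 2 : ℝ) : ℂ)‖ := by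
          rw [norm_sub_rev]
          exact norm_sub_norm_le _ _
        have h4 : ‖((‖t‖ + 2 : ℝ) : ℂ)‖ = ‖t‖ + 2 := by
          rw [Complex.norm_real]
          rw [Real.norm_eq_abs, _root_.abs_of_nonneg (by positivity)]
        rw [dist_eq_norm] at this
        linarith
      linarith
    · obtain ⟨n, hw⟩ := hdr.exists_mem_open Metric.isOpen_ball
        (⟨0, Metric.mem_ball_self (norm_pos_iff.mpr h)⟩ :
          (Metric.ball (0 : ℂ) ‖t‖).Nonempty)
      have h1 : ‖t‖ ≤ ‖c ^ n * t‖ := by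
        rw [norm_mul, norm_pow]
        calc ‖t‖ = 1 * ‖t‖ := (one_mul _).symm
        _ ≤ ‖c‖ ^ n * ‖t‖ := by gcongr; exact one_le_pow₀ hc.le
      have h2 : ‖c ^ n * t‖ < ‖t‖ := by
        have := Metric.mem_ball.mp hw
        rwa [dist_zero_right] at this
      linarith

theorem span_eigenvector_sequence_avoiding_finite_set_dense'
    {X : Type*} [NormedAddCommGroup X] [NormedSpace ℂ X]
    (T : X →L[ℂ] X) (hhc : ∃ x : X, Dense (Set.range fun n : ℕ => (T ^ n) x))
    (x : ℕ → X) (lam : ℕ → ℂ)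
    (heig : ∀ n, T (x n) = lam n • x n)
    (hspan : Dense (Submodule.span ℂ (Set.range x) : Set X))
    (F : Set ℂ) (hFfin : F.Finite) :
    Dense (Submodule.span ℂ (x '' {n : ℕ | lam n ∉ F}) : Set X) := by
  have key : ∀ s : Finset ℂ,
      Dense (Submodule.span ℂ (x '' {n : ℕ | lam n ∉ (s : Set ℂ)}) : Set X) := by
    intro s
    induction s using Finset.induction_on with
    | empty => simpa [Set.image_univ] using hspan
    | @insert a s ha ih =>
        set S : X →L[ℂ] X := T - a • ContinuousLinearMap.id ℂ X with hSdef
        have hdr : DenseRange ⇑S := denseRange_sub_smul_id T hhc a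
        set M := (Submodule.span ℂ
          (x '' {n : ℕ | lam n ∉ ((insert a s : Finset ℂ) : Set ℂ)})).topologicalClosure with hM
        have hMc : IsClosed (M : Set X) := by
          rw [hM]; exact Submodule.isClosed_topologicalClosure _
        -- S maps the old span into M
        have hmap : ⇑S '' (Submodule.span ℂ (x '' {n : ℕ | lam n ∉ (s : Set ℂ)}) : Set X)
            ⊆ (M : Set X) := by
          rintro _ ⟨d, hd, rfl⟩
          have hd' : S d ∈ Submodule.map (S : X →ₗ[ℂ] X)
              (Submodule.span ℂ (x '' {n : ℕ | lam n ∉ (s : Set ℂ)})) :=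
            ⟨d, hd, rfl⟩
          rw [Submodule.map_span] at hd'
          refine Submodule.span_le.mpr ?_ hd'
          rintro _ ⟨_, ⟨n, hn, rfl⟩, rfl⟩
          have hx : S (x n) = (lam n - a) • x n := by
            simp [hSdef, heig n, sub_smul]
          simp only [SetLike.mem_coe, ContinuousLinearMap.coe_coe]
          rcases eq_or_ne (lam n) a with h | h
          · rw [hx, h, sub_self, zero_smul]
            exact M.zero_mem
          · have hn' : lam n ∉ ((insert a s : Finset ℂ) : Set ℂ) := by
              simp only [Finset.coe_insert, Set.mem_insert_iff]
              push_neg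
              exact ⟨h, hn⟩
            have : x n ∈ M :=
              Submodule.le_topologicalClosure _
                (Submodule.subset_span ⟨n, hn', rfl⟩)
            rw [hx]
            exact M.smul_mem _ this
        -- range of S lies in M
        have hrange : Set.range ⇑S ⊆ (M : Set X) := by
          rintro _ ⟨y, rfl⟩
          have hy : y ∈ closure (Submodule.span ℂ
              (x '' {n : ℕ | lam n ∉ (s : Set ℂ)}) : Set X) := ih y
          have := mem_closure_image (S.continuous.continuousAt) hy
          exact closure_minimal hmap hMc this
        have huniv : (M : Set X) = Set.univ := by
          apply Set.eq_univ_of_univ_subset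
          rw [← hdr.closure_range]
          exact closure_minimal hrange hMc
        rw [dense_iff_closure_eq, ← Submodule.topologicalClosure_coe]
        exact huniv
  obtain ⟨s, rfl⟩ : ∃ s : Finset ℂ, (s : Set ℂ) = F := ⟨hFfin.toFinset, hFfin.coe_toFinset⟩
  exact key s

/-- If `T` is a bounded hypercyclic operator and `(x n)` is a sequence of unimodular
eigenvectors of `T` whose span is dense, then for every finite set `F` of unimodular
eigenvalues of `T`, the span of the `x n` whose eigenvalue avoids `F` is still
dense. -/
theorem span_eigenvector_sequence_avoiding_finite_set_dense
    {X : Type*} [NormedAddCommGroup X] [NormedSpace ℂ X] [CompleteSpace X]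
    [TopologicalSpace.SeparableSpace X] (hdim : ¬ FiniteDimensional ℂ X)
    (T : X →L[ℂ] X) (hhc : Hypercyclic T)
    (x : ℕ → X) (lam : ℕ → ℂ)
    (heig : ∀ n, T (x n) = lam n • x n) (hmod : ∀ n, ‖lam n‖ = 1)
    (hspan : Dense (Submodule.span ℂ (Set.range x) : Set X))
    (F : Set ℂ) (hFfin : F.Finite)
    (hFsub : F ⊆ {c : ℂ | ‖c‖ = 1 ∧ ∃ v : X, v ≠ 0 ∧ T v = c • v}) :
    Dense (Submodule.span ℂ (x '' {n : ℕ | lam n ∉ F}) : Set X) :=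
  span_eigenvector_sequence_avoiding_finite_set_dense' T hhc x lam heig hspan F hFfin
end

section
/- Let X be a complex separable infinite-dimensional Banach space and let T be a bounded linear operator on X. Suppose there exists a Borel probability measure m on X which is invariant by T (i.e. m(T⁻¹(A)) = m(A) for every Borel set A) and such that m(HC(T)) = 1, where HC(T) is the set of hypercyclic vectors for T. Then m(FHC(T)) = 1, where FHC(T) is the set of frequently hypercyclic vectors for T; in particular T is frequently hypercyclic. -/
open MeasureTheory Filter Topology

section Aux
variable {α : Type*}

/-- Birkhoff sums. -/
noncomputable def birkS (T : α → α) (φ : α → ℝ) (N : ℕ) (x : α) : ℝ :=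
  ∑ i ∈ Finset.range N, φ (T^[i] x)

lemma birkS_nonneg {T : α → α} {φ : α → ℝ} (hφ0 : ∀ x, 0 ≤ φ x) (N : ℕ) (x : α) :
    0 ≤ birkS T φ N x :=
  Finset.sum_nonneg fun i _ => hφ0 _

lemma birkS_le {T : α → α} {φ : α → ℝ} (hφ1 : ∀ x, φ x ≤ 1) (N : ℕ) (x : α) :
    birkS T φ N x ≤ N := by
  calc birkS T φ N x ≤ ∑ i ∈ Finset.range N, (1:ℝ) :=
        Finset.sum_le_sum fun i _ => hφ1 _
    _ = N := by simp

lemma birkS_add (T : α → α) (φ : α → ℝ) (n k : ℕ) (x : α) :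
    birkS T φ (n + k) x = birkS T φ n x + birkS T φ k (T^[n] x) := by
  induction k with
  | zero => simp [birkS]
  | succ k ih =>
      rw [← Nat.add_assoc, birkS, Finset.sum_range_succ, ← birkS, ih]
      simp only [birkS, Finset.sum_range_succ]
      rw [← Function.iterate_add_apply, Nat.add_comm k n, add_assoc]

lemma birkS_succ_left (T : α → α) (φ : α → ℝ) (N : ℕ) (x : α) :
    birkS T φ (N + 1) x = φ x + birkS T φ N (T x) := by
  have := birkS_add T φ 1 N x
  simpa [birkS, add_comm] using this

/-- The key pointwise "filling scheme" bound. -/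
lemma birkS_filling {T : α → α} {φ : α → ℝ} (hφ0 : ∀ x, 0 ≤ φ x) (hφ1 : ∀ x, φ x ≤ 1)
    {ε : ℝ} (hε : 0 ≤ ε) (M : ℕ) {A : Set α}
    (hA : ∀ x, x ∉ A → ∃ n, 1 ≤ n ∧ n ≤ M ∧ birkS T φ n x ≤ n * ε) :
    ∀ N x, birkS T φ N x ≤ N * ε + birkS T (A.indicator 1) N x + M := by
  have hind0 : ∀ x, (0:ℝ) ≤ A.indicator 1 x := fun x => Set.indicator_nonneg (by simp) x
  intro N
  induction N using Nat.strong_induction_on with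
  | _ N ih =>
    intro x
    by_cases hNM : N ≤ M
    · have h1 : birkS T φ N x ≤ N := birkS_le hφ1 N x
      have h2 : (0:ℝ) ≤ N * ε := by positivity
      have h3 : (0:ℝ) ≤ birkS T (A.indicator 1) N x := birkS_nonneg hind0 N x
      have : (N:ℝ) ≤ M := by exact_mod_cast hNM
      linarith
    · push_neg at hNM
      by_cases hxA : x ∈ A
      · -- step of length 1
        obtain ⟨N', rfl⟩ : ∃ N', N = N' + 1 := ⟨N - 1, by omega⟩
        have hIH := ih N' (by omega) (T x)
        have hsplit := birkS_succ_left T φ N' x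
        have hsplitA := birkS_succ_left T (A.indicator 1) N' x
        have hφx : φ x ≤ 1 := hφ1 x
        have hAx : A.indicator (1 : α → ℝ) x = 1 := Set.indicator_of_mem hxA 1
        have hcast : ((N' : ℝ)) * ε ≤ ((N' + 1 : ℕ) : ℝ) * ε := by
          have : ((N':ℝ)) ≤ ((N' + 1 : ℕ) : ℝ) := by push_cast; linarith
          nlinarith
        rw [hsplit, hsplitA]
        rw [hAx]
        linarith
      · obtain ⟨n, hn1, hnM, hng⟩ := hA x hxA
        obtain ⟨k, rfl⟩ : ∃ k, N = n + k := ⟨N - n, by omega⟩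
        have hIH := ih k (by omega) (T^[n] x)
        have hsplit := birkS_add T φ n k x
        have hsplitA := birkS_add T (A.indicator 1) n k x
        have h3 : (0:ℝ) ≤ birkS T (A.indicator 1) n x := birkS_nonneg hind0 n x
        have hcast : ((n:ℝ)) * ε + (k:ℝ) * ε = ((n + k : ℕ) : ℝ) * ε := by
          push_cast; ring
        rw [hsplit, hsplitA]
        linarith

variable [MeasurableSpace α] {μ : Measure α} {T : α → α} {φ : α → ℝ}

lemma map_iterate (hT : Measurable T) (hμ : Measure.map T μ = μ) (n : ℕ) :
    Measure.map (T^[n]) μ = μ := by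
  induction n with
  | zero => simp
  | succ n ih =>
      rw [Function.iterate_succ', ← Measure.map_map hT (hT.iterate n), ih, hμ]

lemma integrable_of_bounded [IsFiniteMeasure μ] (hφ : Measurable φ)
    (hφ0 : ∀ x, 0 ≤ φ x) (hφ1 : ∀ x, φ x ≤ 1) : Integrable φ μ := by
  refine Integrable.mono' (integrable_const (1:ℝ)) hφ.aestronglyMeasurable ?_
  filter_upwards with x
  rw [Real.norm_eq_abs, abs_le]
  exact ⟨by linarith [hφ0 x], hφ1 x⟩

lemma birkS_measurable (hT : Measurable T) (hφ : Measurable φ) (N : ℕ) :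
    Measurable (birkS T φ N) := by
  unfold birkS
  exact Finset.measurable_sum _ fun i _ => hφ.comp (hT.iterate i)

lemma integrable_comp_iterate [IsFiniteMeasure μ] (hT : Measurable T) (hφ : Measurable φ)
    (hφ0 : ∀ x, 0 ≤ φ x) (hφ1 : ∀ x, φ x ≤ 1) (n : ℕ) :
    Integrable (fun x => φ (T^[n] x)) μ := by
  have : Measurable fun x => φ (T^[n] x) := hφ.comp (hT.iterate n)
  exact integrable_of_bounded this (fun x => hφ0 _) (fun x => hφ1 _)

lemma integrable_birkS [IsFiniteMeasure μ] (hT : Measurable T) (hφ : Measurable φ)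
    (hφ0 : ∀ x, 0 ≤ φ x) (hφ1 : ∀ x, φ x ≤ 1) (N : ℕ) :
    Integrable (birkS T φ N) μ := by
  unfold birkS
  exact integrable_finset_sum _ fun i _ => integrable_comp_iterate hT hφ hφ0 hφ1 i

lemma integral_birkS [IsFiniteMeasure μ] (hT : Measurable T) (hμ : Measure.map T μ = μ)
    (hφ : Measurable φ) (hφ0 : ∀ x, 0 ≤ φ x) (hφ1 : ∀ x, φ x ≤ 1) (N : ℕ) :
    ∫ x, birkS T φ N x ∂μ = N * ∫ x, φ x ∂μ := by
  unfold birkS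
  rw [integral_finset_sum _ fun i _ => integrable_comp_iterate hT hφ hφ0 hφ1 i]
  have : ∀ i : ℕ, ∫ x, φ (T^[i] x) ∂μ = ∫ x, φ x ∂μ := by
    intro i
    conv_rhs => rw [← map_iterate hT hμ i]
    rw [integral_map (hT.iterate i).aemeasurable hφ.aestronglyMeasurable]
  simp only [this, Finset.sum_const, Finset.card_range, nsmul_eq_mul]

/-- The key lemma: if the Birkhoff averages of a `[0,1]`-valued observable tend to `0`
in lower limit almost everywhere (w.r.t. an invariant finite measure), then the
integral of the observable vanishes. -/
lemma integral_le_zero_of_liminf_birkhoff_zero [IsFiniteMeasure μ]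
    (hT : Measurable T) (hμ : Measure.map T μ = μ)
    (hφ : Measurable φ) (hφ0 : ∀ x, 0 ≤ φ x) (hφ1 : ∀ x, φ x ≤ 1)
    (hzero : ∀ᵐ x ∂μ, Filter.liminf (fun N : ℕ => birkS T φ N x / N) atTop ≤ 0) :
    ∫ x, φ x ∂μ ≤ 0 := by
  set c : ℝ := (μ Set.univ).toReal with hc
  have hc0 : 0 ≤ c := ENNReal.toReal_nonneg
  -- reduce to: ∀ ε > 0, ∫ φ ≤ ε * (c+1)
  suffices H : ∀ ε : ℝ, 0 < ε → ∫ x, φ x ∂μ ≤ ε * (c + 1) by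
    by_contra hcon
    push_neg at hcon
    have h1 : 0 < (∫ x, φ x ∂μ) / (2 * (c + 1)) := by positivity
    have h2 := H _ h1
    rw [div_mul_eq_mul_div, mul_comm] at h2
    have : (2:ℝ) * (c+1) > 0 := by positivity
    rw [le_div_iff₀ this] at h2
    nlinarith [hcon]
  intro ε hε
  -- the bad sets
  set A : ℕ → Set α := fun M => {x | ∀ n, 1 ≤ n → n ≤ M → (n:ℝ) * ε < birkS T φ n x} with hA
  have hAmeas : ∀ M, MeasurableSet (A M) := by
    intro M
    have : A M = ⋂ (n : ℕ), ⋂ (_ : 1 ≤ n ∧ n ≤ M), {x | (n:ℝ) * ε < birkS T φ n x} := by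
      ext x
      simp only [hA, Set.mem_setOf_eq, Set.mem_iInter, and_imp]
    rw [this]
    exact MeasurableSet.iInter fun n => MeasurableSet.iInter fun _ =>
      measurableSet_lt measurable_const (birkS_measurable hT hφ n)
  have hAanti : Antitone A := by
    intro M M' hMM' x hx n h1 h2
    exact hx n h1 (h2.trans hMM')
  -- the intersection of the bad sets is null
  have hInull : μ (⋂ M, A M) = 0 := by
    refine measure_mono_null ?_ (ae_iff.mp hzero)
    intro x hx
    simp only [Set.mem_iInter] at hx
    simp only [Set.mem_setOf_eq, not_le]
    by_contra hliminf
    push_neg at hliminf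
    have hcob : IsCoboundedUnder (· ≥ ·) atTop (fun N : ℕ => birkS T φ N x / N) := by
      refine isCoboundedUnder_ge_of_eventually_le atTop (x := 1) ?_
      filter_upwards [eventually_ge_atTop 1] with N hN
      rw [div_le_one (by exact_mod_cast hN : (0:ℝ) < N)]
      exact birkS_le hφ1 N x
    have hfreq := frequently_lt_of_liminf_lt hcob (lt_of_le_of_lt hliminf hε)
    obtain ⟨N, hNlt, hN1⟩ := (hfreq.and_eventually (eventually_ge_atTop 1)).exists
    have hNpos : (0:ℝ) < N := by exact_mod_cast hN1
    have h1 := hx N N hN1 le_rfl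
    rw [div_lt_iff₀ hNpos] at hNlt
    linarith [hNlt, h1]
  -- measures of bad sets tend to zero
  have htend : Tendsto (fun M => (μ (A M)).toReal) atTop (𝓝 0) := by
    have h0 := tendsto_measure_iInter_atTop (μ := μ) (s := A)
      (fun M => (hAmeas M).nullMeasurableSet) hAanti ⟨0, measure_ne_top μ _⟩
    rw [hInull] at h0
    have := (ENNReal.tendsto_toReal ENNReal.zero_ne_top).comp h0
    simpa [Function.comp_def] using this
  -- the main estimate, for fixed M and N
  have hmain : ∀ M : ℕ, ∀ N : ℕ, 1 ≤ N →
      ∫ x, φ x ∂μ ≤ ε * c + (μ (A M)).toReal + M * c / N := by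
    intro M N hN1
    have hNpos : (0:ℝ) < N := by exact_mod_cast hN1
    set ψ : α → ℝ := (A M).indicator 1 with hψ
    have hψmeas : Measurable ψ := measurable_one.indicator (hAmeas M)
    have hψ0 : ∀ x, 0 ≤ ψ x := fun x => Set.indicator_nonneg (by simp) x
    have hψ1 : ∀ x, ψ x ≤ 1 := fun x => Set.indicator_le_self' (by simp) x
    have hfill := birkS_filling (T := T) hφ0 hφ1 hε.le M (A := A M) ?goodn
    case goodn =>
      intro x hxA
      simp only [hA, Set.mem_setOf_eq, not_forall, not_lt] at hxA
      obtain ⟨n, h1, h2, h3⟩ := hxA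
      exact ⟨n, h1, h2, h3⟩
    -- integrate the filling bound
    have hint1 : Integrable (birkS T φ N) μ := integrable_birkS hT hφ hφ0 hφ1 N
    have hint2 : Integrable (fun x => (N:ℝ) * ε + birkS T ψ N x + M) μ := by
      exact ((integrable_const _).add (integrable_birkS hT hψmeas hψ0 hψ1 N)).add
        (integrable_const _)
    have hle : ∫ x, birkS T φ N x ∂μ ≤ ∫ x, ((N:ℝ) * ε + birkS T ψ N x + M) ∂μ :=
      integral_mono hint1 hint2 (fun x => hfill N x)
    rw [integral_birkS hT hμ hφ hφ0 hφ1 N] at hle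
    have hrhs : ∫ x, ((N:ℝ) * ε + birkS T ψ N x + M) ∂μ
        = (N:ℝ) * ε * c + (N:ℝ) * (μ (A M)).toReal + M * c := by
      have hintψ : Integrable (birkS T ψ N) μ := integrable_birkS hT hψmeas hψ0 hψ1 N
      have e1 : ∫ x, ((N:ℝ) * ε + birkS T ψ N x + (M:ℝ)) ∂μ
          = (∫ x, ((N:ℝ) * ε + birkS T ψ N x) ∂μ) + ∫ _x, (M:ℝ) ∂μ :=
        integral_add ((integrable_const _).add hintψ) (integrable_const _)
      have e2 : ∫ x, ((N:ℝ) * ε + birkS T ψ N x) ∂μ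
          = (∫ _x, ((N:ℝ) * ε) ∂μ) + ∫ x, birkS T ψ N x ∂μ :=
        integral_add (integrable_const _) hintψ
      have e3 : ∫ x, ψ x ∂μ = (μ (A M)).toReal := by
        rw [hψ, integral_indicator_one (hAmeas M), measureReal_def]
      rw [e1, e2, integral_birkS hT hμ hψmeas hψ0 hψ1 N, e3, integral_const, integral_const]
      simp only [smul_eq_mul, hc, measureReal_def]
      ring
    rw [hrhs] at hle
    have hkey : (N:ℝ) * (ε * c + (μ (A M)).toReal + (M:ℝ) * c / N)
        = (N:ℝ) * ε * c + (N:ℝ) * (μ (A M)).toReal + (N:ℝ) * ((M:ℝ) * c / N) := by ring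
    have hNc : (N:ℝ) * ((M:ℝ) * c / N) = (M:ℝ) * c := by field_simp
    refine le_of_mul_le_mul_left ?_ hNpos
    rw [hkey, hNc]
    linarith [hle]
  -- let N → ∞
  have hM : ∀ M : ℕ, ∫ x, φ x ∂μ ≤ ε * c + (μ (A M)).toReal := by
    intro M
    have htendN : Tendsto (fun N : ℕ => ε * c + (μ (A M)).toReal + M * c / N) atTop
        (𝓝 (ε * c + (μ (A M)).toReal)) := by
      have h2 : Tendsto (fun N : ℕ => (M:ℝ) * c / N) atTop (𝓝 0) :=
        Tendsto.div_atTop tendsto_const_nhds tendsto_natCast_atTop_atTop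
      simpa using tendsto_const_nhds.add h2
    refine ge_of_tendsto htendN ?_
    filter_upwards [eventually_ge_atTop 1] with N hN
    exact hmain M N hN
  -- let M → ∞
  have hfin : ∫ x, φ x ∂μ ≤ ε * c := by
    have htendM : Tendsto (fun M : ℕ => ε * c + (μ (A M)).toReal) atTop (𝓝 (ε * c)) := by
      simpa using tendsto_const_nhds.add htend
    exact ge_of_tendsto htendM (Eventually.of_forall hM)
  nlinarith [hfin]

lemma real_le_of_forall_pos {a b : ℝ} (h : ∀ ε : ℝ, 0 < ε → a ≤ b + ε) : a ≤ b := by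
  by_contra hc
  push_neg at hc
  have := h ((a - b)/2) (by linarith)
  linarith

lemma liminf_le_of_sub_tendsto {u v : ℕ → ℝ} (hu0 : ∀ n, 0 ≤ u n) (hu1 : ∀ n, u n ≤ 1)
    (hv0 : ∀ n, 0 ≤ v n)
    (h : Tendsto (fun n => v n - u n) atTop (𝓝 0)) :
    liminf v atTop ≤ liminf u atTop := by
  refine real_le_of_forall_pos fun ε hε => ?_
  have hev : ∀ᶠ n in atTop, v n ≤ u n + ε := by
    filter_upwards [h.eventually (eventually_le_nhds hε)] with n hn
    linarith [hn]
  have h1 : liminf v atTop ≤ liminf (fun n => u n + ε) atTop := by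
    refine liminf_le_liminf hev ?_ ?_
    · exact isBoundedUnder_of ⟨0, fun n => hv0 n⟩
    · exact isCoboundedUnder_ge_of_eventually_le atTop (x := 1 + ε)
        (Eventually.of_forall fun n => by linarith [hu1 n])
  have h2 : liminf (fun n => u n + ε) atTop = liminf u atTop + ε := by
    refine liminf_add_const atTop u ε ?_ ?_
    · exact isCoboundedUnder_ge_of_eventually_le atTop (x := 1)
        (Eventually.of_forall fun n => hu1 n)
    · exact isBoundedUnder_of ⟨0, fun n => hu0 n⟩
  exact h1.trans h2.le

lemma liminf_eq_of_sub_tendsto {u v : ℕ → ℝ} (hu0 : ∀ n, 0 ≤ u n) (hu1 : ∀ n, u n ≤ 1)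
    (hv0 : ∀ n, 0 ≤ v n) (hv1 : ∀ n, v n ≤ 1)
    (h : Tendsto (fun n => v n - u n) atTop (𝓝 0)) :
    liminf v atTop = liminf u atTop := by
  refine le_antisymm (liminf_le_of_sub_tendsto hu0 hu1 hv0 h) ?_
  refine liminf_le_of_sub_tendsto hv0 hv1 hu0 ?_
  have heq : (fun n => u n - v n) = fun n => -(v n - u n) := by ext n; ring
  rw [heq]
  simpa using h.neg

/-- The liminf of Birkhoff averages is an invariant function. -/
lemma liminf_birk_comp (T : α → α) (φ : α → ℝ) (hφ0 : ∀ x, 0 ≤ φ x) (hφ1 : ∀ x, φ x ≤ 1)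
    (x : α) :
    liminf (fun N : ℕ => birkS T φ N (T x) / N) atTop
      = liminf (fun N : ℕ => birkS T φ N x / N) atTop := by
  set u : ℕ → ℝ := fun N => birkS T φ N x / N with hu
  set v : ℕ → ℝ := fun N => birkS T φ N (T x) / N with hv
  have hbd : ∀ (y : α) (N : ℕ), 0 ≤ birkS T φ N y / N ∧ birkS T φ N y / N ≤ 1 := by
    intro y N
    rcases Nat.eq_zero_or_pos N with rfl | hN
    · simp [birkS]
    · have hNpos : (0:ℝ) < N := by exact_mod_cast hN
      constructor
      · exact div_nonneg (birkS_nonneg hφ0 N y) hNpos.le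
      · rw [div_le_one hNpos]
        exact birkS_le hφ1 N y
  have key : liminf v atTop = liminf (fun N => u (N + 1)) atTop := by
    refine liminf_eq_of_sub_tendsto (fun n => (hbd x (n+1)).1) (fun n => (hbd x (n+1)).2)
      (fun n => (hbd (T x) n).1) (fun n => (hbd (T x) n).2) ?_
    have hbound : ∀ᶠ N in atTop, ‖v N - u (N + 1)‖ ≤ 2 / N := by
      filter_upwards [eventually_ge_atTop 1] with N hN
      have hNpos : (0:ℝ) < N := by exact_mod_cast hN
      have hN1pos : (0:ℝ) < (N:ℝ) + 1 := by linarith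
      have hS0 : 0 ≤ birkS T φ (N+1) x := birkS_nonneg (T := T) hφ0 _ x
      have hS1 : birkS T φ (N+1) x ≤ (N:ℝ) + 1 := by
        have h' := birkS_le (T := T) hφ1 (N+1) x
        push_cast at h'
        linarith
      have hvN : v N = (birkS T φ (N+1) x - φ x) / N := by
        simp only [hv]
        rw [birkS_succ_left T φ N x]
        ring
      have huN : u (N + 1) = birkS T φ (N+1) x / ((N:ℝ) + 1) := by
        simp only [hu]
        push_cast
        ring_nf
      rw [hvN, huN]
      set S := birkS T φ (N+1) x
      have e : (S - φ x) / N - S / ((N:ℝ)+1) = S / ((N:ℝ) * ((N:ℝ)+1)) - φ x / N := by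
        field_simp
        ring
      rw [e, Real.norm_eq_abs, abs_le]
      have b2 : S / ((N:ℝ) * ((N:ℝ)+1)) ≤ 1 / N := by
        rw [div_le_div_iff₀ (by positivity) hNpos]
        nlinarith
      have b3 : 0 ≤ φ x / N := div_nonneg (hφ0 x) hNpos.le
      have b4 : φ x / N ≤ 1 / N := by
        gcongr
        exact hφ1 x
      have b1 : 0 ≤ S / ((N:ℝ) * ((N:ℝ)+1)) := by positivity
      have b5 : (1:ℝ) / N ≤ 2 / N := by
        gcongr
        norm_num
      constructor <;> linarith
    have h2 : Tendsto (fun N : ℕ => 2 / (N:ℝ)) atTop (𝓝 0) :=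
      tendsto_const_div_atTop_nhds_zero_nat 2
    exact squeeze_zero_norm' hbound h2
  rw [key]
  exact liminf_nat_add u 1

end Aux

/-- If there is a `T`-invariant Borel probability measure `m` on `X` giving full
measure to the set of hypercyclic vectors of `T`, then `m` gives full measure to the
set of frequently hypercyclic vectors of `T`; in particular `T` is frequently
hypercyclic. -/
theorem invariant_measure_full_on_HC_implies_full_on_FHC
    {X : Type*} [NormedAddCommGroup X] [NormedSpace ℂ X] [CompleteSpace X]
    [TopologicalSpace.SeparableSpace X] [MeasurableSpace X] [BorelSpace X]
    (hdim : ¬ FiniteDimensional ℂ X)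
    (T : X →L[ℂ] X) (m : Measure X) [IsProbabilityMeasure m]
    (hinv : ∀ A : Set X, MeasurableSet A → m (T ⁻¹' A) = m A)
    (hHC : m {x : X | Dense (Set.range fun n : ℕ => (T ^ n) x)} = 1) :
    m {x : X | FreqHCVector T x} = 1 ∧ FrequentlyHypercyclic T := by
  classical
  have hsc : SecondCountableTopology X := UniformSpace.secondCountable_of_separable X
  have hT : Measurable (⇑T) := T.continuous.measurable
  have hmap : Measure.map (⇑T) m = m := by
    refine Measure.ext fun A hA => ?_
    rw [Measure.map_apply hT hA, hinv A hA]
  obtain ⟨B, hBc, hBne, hBbasis⟩ := TopologicalSpace.exists_countable_basis X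
  have hpow : ∀ (n : ℕ) (x : X), (T ^ n) x = (⇑T)^[n] x := by
    intro n x
    rw [FunLike.coe_pow_eq_iterate]
  set H := {x : X | Dense (Set.range fun n : ℕ => (T ^ n) x)} with hH
  have hHiff : ∀ x : X, x ∈ H ↔ ∀ V ∈ B, ∃ n : ℕ, (⇑T)^[n] x ∈ V := by
    intro x
    rw [hH, Set.mem_setOf_eq, hBbasis.dense_iff]
    constructor
    · intro h V hV
      obtain ⟨y, hyV, hys⟩ := h V hV (Set.nonempty_iff_ne_empty.2 fun he => hBne (he ▸ hV))
      obtain ⟨n, rfl⟩ := hys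
      exact ⟨n, by rw [← hpow]; exact hyV⟩
    · intro h V hV _
      obtain ⟨n, hn⟩ := h V hV
      exact ⟨(T ^ n) x, by rw [hpow]; exact hn, ⟨n, rfl⟩⟩
  have hHmeas : MeasurableSet H := by
    have hHeq : H = ⋂ V ∈ B, ⋃ n : ℕ, (⇑T)^[n] ⁻¹' V := by
      ext x
      simp only [Set.mem_iInter, Set.mem_iUnion, Set.mem_preimage]
      exact hHiff x
    rw [hHeq]
    exact .biInter hBc fun V hV => .iUnion fun n =>
      (hT.iterate n) (hBbasis.isOpen hV).measurableSet
  have hHcnull : m Hᶜ = 0 := by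
    rw [prob_compl_eq_one_sub hHmeas, hHC]
    simp
  -- the main step : for each basic open set the set where the lower density of visits
  -- vanishes is null
  have hkeyV : ∀ V ∈ B, m {x : X | Filter.liminf
      (fun N : ℕ => birkS (⇑T) (V.indicator 1) N x / N) atTop ≤ 0} = 0 := by
    intro V hV
    have hVopen : IsOpen V := hBbasis.isOpen hV
    have hVne : V.Nonempty := Set.nonempty_iff_ne_empty.2 fun he => hBne (he ▸ hV)
    set φ : X → ℝ := V.indicator 1 with hφ
    have hφmeas : Measurable φ := measurable_one.indicator hVopen.measurableSet
    have hφ0 : ∀ x, 0 ≤ φ x := fun x => Set.indicator_nonneg (by simp) x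
    have hφ1 : ∀ x, φ x ≤ 1 := fun x => Set.indicator_le_self' (by simp) x
    set f : X → ℝ := fun x => Filter.liminf (fun N : ℕ => birkS (⇑T) φ N x / N) atTop with hf
    have hfT : ∀ x, f (T x) = f x := fun x => liminf_birk_comp (⇑T) φ hφ0 hφ1 x
    have hfmeas : Measurable f :=
      Measurable.liminf fun N => (birkS_measurable hT hφmeas N).div_const _
    set E : Set X := {x | f x ≤ 0} with hE
    have hEmeas : MeasurableSet E := measurableSet_le hfmeas measurable_const
    have hTE : (⇑T) ⁻¹' E = E := by
      ext x
      simp only [Set.mem_preimage, hE, Set.mem_setOf_eq, hfT x]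
    have hIterE : ∀ (n : ℕ) (x : X), x ∈ E → (⇑T)^[n] x ∈ E := by
      intro n
      induction n with
      | zero => exact fun x hx => hx
      | succ n ih =>
          intro x hx
          rw [Function.iterate_succ']
          have := ih x hx
          rw [← hTE] at this
          exact this
    set μ : Measure X := m.restrict E with hμdef
    have hμmap : Measure.map (⇑T) μ = μ := by
      refine Measure.ext fun A hA => ?_
      rw [Measure.map_apply hT hA, hμdef, Measure.restrict_apply (hT hA),
        Measure.restrict_apply hA, ← hTE, ← Set.preimage_inter, hinv _ (hA.inter hEmeas)]
      rw [hTE]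
    have hzero : ∀ᵐ x ∂μ, Filter.liminf (fun N : ℕ => birkS (⇑T) φ N x / N) atTop ≤ 0 :=
      (ae_restrict_mem hEmeas).mono fun x hx => hx
    have hVE : m (V ∩ E) = 0 := by
      have hint := integral_le_zero_of_liminf_birkhoff_zero hT hμmap hφmeas hφ0 hφ1 hzero
      have : ∫ x, φ x ∂μ = (μ V).toReal := by
        rw [hφ, integral_indicator_one hVopen.measurableSet, measureReal_def]
      rw [this] at hint
      have h0 : (μ V).toReal = 0 := le_antisymm hint ENNReal.toReal_nonneg
      have hfin : μ V ≠ ⊤ := measure_ne_top μ V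
      rw [ENNReal.toReal_eq_zero_iff] at h0
      rcases h0 with h0 | h0
      · rw [hμdef, Measure.restrict_apply hVopen.measurableSet] at h0
        exact h0
      · exact absurd h0 hfin
    -- hypercyclic points of `E` visit `V ∩ E`, hence `E` is null
    have hsub : H ∩ E ⊆ ⋃ n : ℕ, (⇑T)^[n] ⁻¹' (V ∩ E) := by
      rintro x ⟨hxH, hxE⟩
      have hdense : Dense (Set.range fun n : ℕ => (T ^ n) x) := hxH
      obtain ⟨y, hys, hyV⟩ := hdense.exists_mem_open hVopen hVne
      obtain ⟨n, rfl⟩ := hys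
      refine Set.mem_iUnion.2 ⟨n, ?_⟩
      rw [Set.mem_preimage]
      constructor
      · rw [← hpow]; exact hyV
      · exact hIterE n x hxE
    have hUnull : m (⋃ n : ℕ, (⇑T)^[n] ⁻¹' (V ∩ E)) = 0 := by
      refine measure_iUnion_null fun n => ?_
      have := Measure.map_apply (μ := m) (hT.iterate n) (hVopen.measurableSet.inter hEmeas)
      rw [map_iterate hT hmap n] at this
      rw [← this, hVE]
    have hEnull : m E = 0 := by
      have h1 : E ⊆ (H ∩ E) ∪ Hᶜ := by
        intro x hx
        by_cases hxH : x ∈ H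
        · exact Or.inl ⟨hxH, hx⟩
        · exact Or.inr hxH
      refine le_antisymm ?_ zero_le
      calc m E ≤ m ((H ∩ E) ∪ Hᶜ) := measure_mono h1
        _ ≤ m (H ∩ E) + m Hᶜ := measure_union_le _ _
        _ ≤ m (⋃ n : ℕ, (⇑T)^[n] ⁻¹' (V ∩ E)) + m Hᶜ := by
            exact add_le_add (measure_mono hsub) le_rfl
        _ = 0 := by rw [hUnull, hHcnull, add_zero]
    exact hEnull
  -- assemble : the set of points with positive lower frequencies for all basic sets
  set G : Set X := ⋂ V ∈ B, {x : X | 0 < Filter.liminf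
      (fun N : ℕ => birkS (⇑T) (V.indicator 1) N x / N) atTop} with hG
  have hGc : m Gᶜ = 0 := by
    have : Gᶜ = ⋃ V ∈ B, {x : X | Filter.liminf
        (fun N : ℕ => birkS (⇑T) (V.indicator 1) N x / N) atTop ≤ 0} := by
      rw [hG, Set.compl_iInter₂]
      refine Set.iUnion₂_congr fun V hV => ?_
      ext x
      simp [not_lt]
    rw [this]
    exact (measure_biUnion_null_iff hBc).2 hkeyV
  have hGone : m G = 1 := by
    refine le_antisymm prob_le_one ?_
    have h1 : (1:ENNReal) = m (G ∪ Gᶜ) := by rw [Set.union_compl_self]; exact (measure_univ).symm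
    calc (1:ENNReal) = m (G ∪ Gᶜ) := h1
      _ ≤ m G + m Gᶜ := measure_union_le _ _
      _ = m G := by rw [hGc, add_zero]
  -- points of `G` are frequently hypercyclic
  have hGsub : G ⊆ {x : X | FreqHCVector T x} := by
    intro x hxG
    intro U hUopen hUne
    obtain ⟨u, hu⟩ := hUne
    obtain ⟨V, hV, huV, hVU⟩ := hBbasis.exists_subset_of_mem_open hu hUopen
    have hxV : 0 < Filter.liminf
        (fun N : ℕ => birkS (⇑T) (V.indicator 1) N x / N) atTop := by
      have := Set.mem_iInter₂.1 hxG V hV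
      exact this
    refine lt_of_lt_of_le hxV ?_
    -- compare with the lower density of visits to `U`
    unfold lowerDensity
    have hptwise : ∀ N : ℕ, birkS (⇑T) (V.indicator 1) N x / N ≤
        (((Finset.range N).filter (fun n => n ∈ {n : ℕ | (T ^ n) x ∈ U})).card : ℝ) / N := by
      intro N
      have hnum : birkS (⇑T) (V.indicator 1) N x ≤
          (((Finset.range N).filter (fun n => n ∈ {n : ℕ | (T ^ n) x ∈ U})).card : ℝ) := by
        rw [Finset.card_filter]
        push_cast
        refine Finset.sum_le_sum fun i _ => ?_
        by_cases hiV : (⇑T)^[i] x ∈ V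
        · have hiU : (T ^ i) x ∈ U := by
            rw [hpow]
            exact hVU hiV
          simp [Set.indicator_of_mem hiV, Set.mem_setOf_eq, hiU, hVU hiV]
        · simp only [Set.indicator_of_notMem hiV]
          split <;> norm_num
      rcases Nat.eq_zero_or_pos N with rfl | hN
      · simp
      · have hNpos : (0:ℝ) < N := by exact_mod_cast hN
        exact div_le_div_of_nonneg_right hnum hNpos.le |>.trans_eq rfl
    refine liminf_le_liminf (Filter.Eventually.of_forall hptwise) ?_ ?_
    · refine isBoundedUnder_of ⟨0, fun N => ?_⟩
      rcases Nat.eq_zero_or_pos N with rfl | hN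
      · simp [birkS]
      · have hNpos : (0:ℝ) < N := by exact_mod_cast hN
        exact div_nonneg (birkS_nonneg (fun y => Set.indicator_nonneg (by simp) y) N x) hNpos.le
    · refine isCoboundedUnder_ge_of_eventually_le atTop (x := 1) ?_
      filter_upwards [eventually_ge_atTop 1] with N hN
      have hNpos : (0:ℝ) < N := by exact_mod_cast hN
      rw [div_le_one hNpos]
      calc (((Finset.range N).filter (fun n => n ∈ {n : ℕ | (T ^ n) x ∈ U})).card : ℝ)
          ≤ ((Finset.range N).card : ℝ) := by
            exact_mod_cast Finset.card_filter_le _ _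
        _ = N := by simp
  have hfull : m {x : X | FreqHCVector T x} = 1 := by
    refine le_antisymm prob_le_one ?_
    calc (1:ENNReal) = m G := hGone.symm
      _ ≤ m {x : X | FreqHCVector T x} := measure_mono hGsub
  refine ⟨hfull, ?_⟩
  have hGne : G.Nonempty := by
    rw [Set.nonempty_iff_ne_empty]
    intro he
    rw [he, measure_empty] at hGone
    exact zero_ne_one hGone
  obtain ⟨x, hx⟩ := hGne
  exact ⟨x, hGsub hx⟩
end

section
/- Let X be a complex separable infinite-dimensional Banach space, T a bounded linear operator on X, (Ω,𝓕,ℙ) a probability space, and (χ_n)_{n≥1} a sequence of independent random variables on Ω each uniformly distributed on the unit circle 𝕋 = {λ ∈ ℂ : |λ| = 1} (Steinhaus variables). Let (y_n)_{n≥1} be a sequence in X with T y_n = λ_n y_n and |λ_n| = 1 for every n, and suppose the random series Φ(ω) = Σ_{n≥1} χ_n(ω) y_n converges for almost every ω ∈ Ω. Then the image measure m on X defined by m(A) = ℙ({ω : Σ_{n≥1} χ_n(ω) y_n ∈ A}) for Borel sets A is invariant by T, i.e. m(T⁻¹(A)) = m(A) for every Borel set A. -/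
open MeasureTheory Filter Topology

/-- The law of a Steinhaus variable: the uniform probability distribution on the
unit circle of `ℂ`, i.e. the image of the normalized Lebesgue measure on
`(0, 2π]` under `θ ↦ exp (i θ)`. -/
noncomputable def steinhausLaw : Measure ℂ :=
  Measure.map (fun θ : ℝ => Complex.exp (θ * Complex.I))
    ((ENNReal.ofReal (2 * Real.pi))⁻¹ • volume.restrict (Set.Ioc 0 (2 * Real.pi)))

lemma steinhaus_per : Function.Periodic (fun θ : ℝ => Complex.exp (θ * Complex.I)) (2 * Real.pi) := by
  intro θ
  simp only []
  push_cast
  rw [add_mul, Complex.exp_add, Complex.exp_two_pi_mul_I, mul_one]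

instance : Fact (0 < 2 * Real.pi) := ⟨by positivity⟩

noncomputable def steinhausE : AddCircle (2 * Real.pi) → ℂ := steinhaus_per.lift

lemma steinhausE_coe (θ : ℝ) : steinhausE (θ : AddCircle (2 * Real.pi)) = Complex.exp (θ * Complex.I) :=
  steinhaus_per.lift_coe θ

lemma steinhausE_cont : Continuous steinhausE := by
  rw [(QuotientAddGroup.isQuotientMap_mk _).continuous_iff]
  exact Complex.continuous_exp.comp (Complex.continuous_ofReal.mul continuous_const)

lemma steinhaus_eq : steinhausLaw
    = Measure.map steinhausE ((ENNReal.ofReal (2 * Real.pi))⁻¹ • (volume : Measure (AddCircle (2 * Real.pi)))) := by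
  have h1 : (fun θ : ℝ => Complex.exp (θ * Complex.I))
      = steinhausE ∘ (fun θ : ℝ => (θ : AddCircle (2 * Real.pi))) := by
    funext θ; simp [steinhausE_coe]
  have h2 := (AddCircle.measurePreserving_mk (2 * Real.pi) 0).map_eq
  rw [steinhausLaw, h1, ← Measure.map_map steinhausE_cont.measurable (by measurability),
    Measure.map_smul, zero_add] at *
  rw [h2]

lemma steinhaus_rot {c : ℂ} (hc : ‖c‖ = 1) :
    Measure.map (fun z => c * z) steinhausLaw = steinhausLaw := by
  have hc' : c = Complex.exp ((c.arg : ℂ) * Complex.I) := by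
    conv_lhs => rw [← Complex.norm_mul_exp_arg_mul_I c]
    rw [show ‖c‖ = 1 from hc]
    simp
  have hkey : (fun z => c * z) ∘ steinhausE = steinhausE ∘ (fun x => x + ((c.arg : ℝ) : AddCircle (2 * Real.pi))) := by
    funext x
    induction x using QuotientAddGroup.induction_on with
    | H θ =>
      show c * steinhausE θ = steinhausE (((θ + c.arg : ℝ) : AddCircle (2 * Real.pi)))
      rw [steinhausE_coe, steinhausE_coe, Complex.ofReal_add, add_mul, Complex.exp_add, ← hc', mul_comm]
  rw [steinhaus_eq, Measure.map_map (by fun_prop) steinhausE_cont.measurable, hkey,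
    ← Measure.map_map steinhausE_cont.measurable (by fun_prop), Measure.map_smul,
    map_add_right_eq_self]

open scoped Classical in
lemma steinhaus_joint_law {Ω : Type*} [MeasurableSpace Ω] (ℙ : Measure Ω) [IsProbabilityMeasure ℙ]
    (χ : ℕ → Ω → ℂ) (hmeas : ∀ n, Measurable (χ n))
    (hindep : ProbabilityTheory.iIndepFun χ ℙ) (N : ℕ) :
    Measure.map (fun ω (i : Fin N) => χ i ω) ℙ
      = Measure.pi (fun i : Fin N => Measure.map (χ (i : ℕ)) ℙ) := by
  symm
  apply Measure.pi_eq
  intro s hs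
  rw [Measure.map_apply (measurable_pi_lambda (fun ω (i : Fin N) => χ i ω) fun i => hmeas i) (MeasurableSet.univ_pi hs)]
  set sets : ℕ → Set ℂ := fun n => if h : n < N then s ⟨n, h⟩ else Set.univ with hsets
  have hpre : (fun ω (i : Fin N) => χ i ω) ⁻¹' (Set.univ.pi s)
      = ⋂ n ∈ Finset.range N, χ n ⁻¹' sets n := by
    ext ω
    simp only [Set.mem_preimage, Set.mem_pi, Set.mem_univ, forall_true_left, Set.mem_iInter,
      Finset.mem_range, hsets]
    constructor
    · intro h n hn
      simp only [dif_pos hn]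
      exact h ⟨n, hn⟩
    · intro h i
      have := h i i.2
      simpa only [dif_pos i.2] using this
  rw [hpre, hindep.measure_inter_preimage_eq_mul (Finset.range N)
    (fun n hn => by
      simp only [hsets]
      split
      · exact hs _
      · exact MeasurableSet.univ)]
  rw [Finset.prod_range fun n => ℙ (χ n ⁻¹' sets n)]
  refine Finset.prod_congr rfl fun i _ => ?_
  rw [Measure.map_apply (hmeas i) (hs i)]
  congr 1
  simp [hsets, i.2]


/-- If `(χ n)` is a sequence of independent Steinhaus variables, `(y n)` a sequence
of eigenvectors of `T` with unimodular eigenvalues such that the random series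
`Φ ω = ∑ χ n ω • y n` converges almost surely, then the distribution `m` of `Φ` is
`T`-invariant: `m (T ⁻¹' A) = m A` for every Borel set `A`. -/
theorem steinhaus_series_distribution_invariant
    {X : Type*} [NormedAddCommGroup X] [NormedSpace ℂ X] [CompleteSpace X]
    [TopologicalSpace.SeparableSpace X] [MeasurableSpace X] [BorelSpace X]
    (hdim : ¬ FiniteDimensional ℂ X) (T : X →L[ℂ] X)
    {Ω : Type*} [MeasurableSpace Ω] (ℙ : Measure Ω) [IsProbabilityMeasure ℙ]
    (χ : ℕ → Ω → ℂ) (hmeas : ∀ n, Measurable (χ n))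
    (hindep : ProbabilityTheory.iIndepFun χ ℙ)
    (hlaw : ∀ n, Measure.map (χ n) ℙ = steinhausLaw)
    (y : ℕ → X) (lam : ℕ → ℂ)
    (heig : ∀ n, T (y n) = lam n • y n) (hmod : ∀ n, ‖lam n‖ = 1)
    (Φ : Ω → X) (hΦmeas : Measurable Φ)
    (hΦ : ∀ᵐ ω ∂ℙ, Tendsto (fun N : ℕ => ∑ n ∈ Finset.range N, χ n ω • y n)
      atTop (𝓝 (Φ ω))) :
    ∀ A : Set X, MeasurableSet A →
      Measure.map Φ ℙ (T ⁻¹' A) = Measure.map Φ ℙ A := by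
  have hT : Measurable T := T.continuous.measurable
  have hTΦ : Measurable (fun ω => T (Φ ω)) := hT.comp hΦmeas
  suffices h : Measure.map (fun ω => T (Φ ω)) ℙ = Measure.map Φ ℙ by
    intro A hA
    rw [Measure.map_apply hΦmeas (hT hA), ← h, Measure.map_apply hTΦ hA]
    rfl
  set F : ℕ → Ω → X := fun N ω => ∑ n ∈ Finset.range N, χ n ω • y n with hF
  have hFmeas : ∀ N, Measurable (F N) := fun N =>
    Finset.measurable_sum _ (fun n _ => (hmeas n).smul_const (y n))
  have hTF : ∀ N ω, T (F N ω) = ∑ n ∈ Finset.range N, (lam n * χ n ω) • y n := by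
    intro N ω
    rw [hF, map_sum]
    refine Finset.sum_congr rfl fun n _ => ?_
    rw [T.map_smul, heig n, smul_smul, mul_comm]
  have hχ'meas : ∀ n, Measurable (fun ω => lam n * χ n ω) := fun n => (hmeas n).const_mul _
  have hindep' : ProbabilityTheory.iIndepFun
      (fun n ω => lam n * χ n ω) ℙ :=
    hindep.comp (fun n z => lam n * z) (fun n => measurable_const_mul _)
  have hlaw' : ∀ n, Measure.map (fun ω => lam n * χ n ω) ℙ = steinhausLaw := by
    intro n
    have heq : (fun ω => lam n * χ n ω) = (fun z => lam n * z) ∘ χ n := rfl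
    rw [heq, ← Measure.map_map (measurable_const_mul _) (hmeas n), hlaw n,
      steinhaus_rot (hmod n)]
  have hmap1 : IsFiniteMeasure (Measure.map (fun ω => T (Φ ω)) ℙ) :=
    Measure.isFiniteMeasure_map ℙ _
  refine ext_of_forall_lintegral_eq_of_IsFiniteMeasure ?_
  intro f
  rw [lintegral_map f.measurable_coe_ennreal_comp hTΦ,
    lintegral_map f.measurable_coe_ennreal_comp hΦmeas]
  have hfm : Measurable fun x : X => (f x : ENNReal) := f.measurable_coe_ennreal_comp
  have hbdd : ∀ x : X, (f x : ENNReal) ≤ ((nndist f 0 : NNReal) : ENNReal) := fun x =>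
    ENNReal.coe_le_coe.mpr (BoundedContinuousFunction.NNReal.upper_bound f x)
  have hbound_int : ∫⁻ _, ((nndist f 0 : NNReal) : ENNReal) ∂ℙ ≠ ⊤ := by
    rw [lintegral_const, measure_univ, mul_one]
    exact ENNReal.coe_ne_top
  have h1 : Tendsto (fun N => ∫⁻ ω, f (F N ω) ∂ℙ) atTop (𝓝 (∫⁻ ω, f (Φ ω) ∂ℙ)) := by
    refine tendsto_lintegral_of_dominated_convergence _
      (fun N => hfm.comp (hFmeas N)) (fun N => Eventually.of_forall fun ω => hbdd _)
      hbound_int ?_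
    filter_upwards [hΦ] with ω hω
    exact (ENNReal.continuous_coe.comp f.continuous).continuousAt.tendsto.comp hω
  have h2 : Tendsto (fun N => ∫⁻ ω, f (T (F N ω)) ∂ℙ) atTop (𝓝 (∫⁻ ω, f (T (Φ ω)) ∂ℙ)) := by
    refine tendsto_lintegral_of_dominated_convergence _
      (fun N => hfm.comp (hT.comp (hFmeas N))) (fun N => Eventually.of_forall fun ω => hbdd _)
      hbound_int ?_
    filter_upwards [hΦ] with ω hω
    exact ((ENNReal.continuous_coe.comp f.continuous).comp T.continuous).continuousAt.tendsto.comp hω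
  have h3 : ∀ N, ∫⁻ ω, f (T (F N ω)) ∂ℙ = ∫⁻ ω, f (F N ω) ∂ℙ := by
    intro N
    have gcont : Continuous fun z : Fin N → ℂ => ∑ i : Fin N, z i • y i :=
      continuous_finset_sum _ fun i _ => (continuous_apply i).smul continuous_const
    have gmeas : Measurable fun z : Fin N → ℂ => (f (∑ i : Fin N, z i • y i) : ENNReal) :=
      hfm.comp gcont.measurable
    have hJ : Measurable fun ω (i : Fin N) => χ i ω :=
      measurable_pi_lambda _ fun i => hmeas i
    have hJ' : Measurable fun ω (i : Fin N) => lam i * χ i ω :=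
      measurable_pi_lambda _ fun i => hχ'meas i
    have key : Measure.map (fun ω (i : Fin N) => χ i ω) ℙ
        = Measure.map (fun ω (i : Fin N) => lam i * χ i ω) ℙ := by
      rw [steinhaus_joint_law ℙ χ hmeas hindep N, steinhaus_joint_law ℙ _ hχ'meas hindep' N]
      simp only [hlaw, hlaw']
    have e1 : ∫⁻ ω, f (F N ω) ∂ℙ
        = ∫⁻ z : Fin N → ℂ, f (∑ i : Fin N, z i • y i)
            ∂(Measure.map (fun ω (i : Fin N) => χ i ω) ℙ) := by
      rw [lintegral_map gmeas hJ]
      congr 1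
      funext ω
      congr 1
      rw [hF]
      simp only []
      rw [Fin.sum_univ_eq_sum_range (fun n => χ n ω • y n) N]
    have e2 : ∫⁻ ω, f (T (F N ω)) ∂ℙ
        = ∫⁻ z : Fin N → ℂ, f (∑ i : Fin N, z i • y i)
            ∂(Measure.map (fun ω (i : Fin N) => lam i * χ i ω) ℙ) := by
      rw [lintegral_map gmeas hJ']
      congr 1
      funext ω
      congr 1
      rw [hTF]
      rw [Fin.sum_univ_eq_sum_range (fun n => (lam n * χ n ω) • y n) N]
    rw [e1, e2, key]
  have h1' : Tendsto (fun N => ∫⁻ ω, f (T (F N ω)) ∂ℙ) atTop (𝓝 (∫⁻ ω, f (Φ ω) ∂ℙ)) := by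
    simpa only [h3] using h1
  exact tendsto_nhds_unique h2 h1'
end

section
/- Let X be a complex separable infinite-dimensional Banach space and let T be a bounded linear operator on X. The following assertions are equivalent: (1) for every countable subset D of the unit circle 𝕋, the linear span of ⋃_{λ ∈ 𝕋∖D} ker(T − λ) is dense in X; (2) T has a perfectly spanning set of eigenvectors associated to unimodular eigenvalues; (3) there exists a sequence (K_i)_{i≥1} of subsets of 𝕋, each homeomorphic to the Cantor set 2^ω, and a sequence (E_i)_{i≥1} of continuous functions E_i : K_i → S_X into the unit sphere S_X = {x ∈ X : ‖x‖ = 1}, such that T E_i(λ) = λ E_i(λ) for every i ≥ 1 and λ ∈ K_i, and the linear span of {E_i(λ) : i ≥ 1, λ ∈ K_i} is dense in X. -/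
open MeasureTheory Filter Topology

open scoped ENNReal

local instance : AddCommGroup Bool where
  add := xor
  zero := false
  neg := id
  add_assoc := by decide
  zero_add := by decide
  add_zero := by decide
  neg_add_cancel := by decide
  add_comm := by decide
  nsmul := nsmulRec
  zsmul := zsmulRec

local instance : IsTopologicalAddGroup Bool where
  continuous_add := continuous_of_discreteTopology
  continuous_neg := continuous_of_discreteTopology

local instance : MeasurableAdd (ℕ → Bool) where
  measurable_const_add g := by
    rw [measurable_pi_iff]
    intro n
    exact (Measurable.of_discrete (f := fun b => g n + b)).comp (measurable_pi_apply n)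
  measurable_add_const g := by
    rw [measurable_pi_iff]
    intro n
    exact (Measurable.of_discrete (f := fun b => b + g n)).comp (measurable_pi_apply n)

lemma exists_cantor_measure :
    ∃ ν : Measure (ℕ → Bool), IsProbabilityMeasure ν ∧ (∀ x, ν {x} = 0) ∧
      ∀ U : Set (ℕ → Bool), IsOpen U → U.Nonempty → 0 < ν U := by
  set ν : Measure (ℕ → Bool) := Measure.addHaarMeasure ⊤ with hν
  have huniv : ν Set.univ = 1 := by
    simpa using Measure.addHaarMeasure_self (K₀ := (⊤ : TopologicalSpace.PositiveCompacts (ℕ → Bool)))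
  have hprob : IsProbabilityMeasure ν := ⟨huniv⟩
  have hinv : ν.IsAddLeftInvariant := by rw [hν]; infer_instance
  have hpos : ν.IsOpenPosMeasure := by rw [hν]; infer_instance
  have hconst : ∀ x y : ℕ → Bool, ν {x} = ν {y} := by
    intro x y
    have h := measure_preimage_add ν (y - x) {y}
    have hpre : (fun h => (y - x) + h) ⁻¹' {y} = {x} := by
      ext z
      simp only [Set.mem_preimage, Set.mem_singleton_iff]
      constructor
      · intro h
        have : z = y - (y - x) := by rw [eq_sub_iff_add_eq, add_comm]; exact h
        simpa [sub_sub_cancel] using this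
      · rintro rfl; abel
    rw [hpre] at h
    exact h
  have hatom : ∀ x : ℕ → Bool, ν {x} = 0 := by
    intro x
    by_contra h0
    set e : ℕ → (ℕ → Bool) := fun n => fun i => decide (i = n) with he
    have hinj : Function.Injective e := by
      intro a b hab
      by_contra hne
      have := congrFun hab a
      simp [he, hne] at this
    have hdisj : Pairwise (Function.onFun Disjoint fun n => ({e n} : Set (ℕ → Bool))) := by
      intro a b hab
      simp only [Function.onFun, Set.disjoint_singleton_left, Set.mem_singleton_iff]
      exact fun h => hab (hinj h)
    have hmeas : ∀ n : ℕ, MeasurableSet ({e n} : Set (ℕ → Bool)) :=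
      fun n => measurableSet_singleton _
    have hsum : ν (⋃ n, {e n}) = ∑' n : ℕ, ν {e n} := measure_iUnion hdisj hmeas
    have hle : ν (⋃ n, {e n}) ≤ 1 := le_trans (measure_mono (Set.subset_univ _)) huniv.le
    rw [hsum] at hle
    have heq : ∀ n : ℕ, ν {e n} = ν {x} := fun n => hconst _ _
    rw [tsum_congr heq, ENNReal.tsum_const_eq_top_of_ne_zero h0] at hle
    exact (lt_irrefl _ (lt_of_le_of_lt hle (by norm_num))).elim
  exact ⟨ν, hprob, hatom, fun U hU hUne => pos_iff_ne_zero.mpr (hpos.open_pos U hU hUne)⟩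

/-- Tree node data for the Cantor set construction. -/
noncomputable def cantorNode {X : Type*} [NormedAddCommGroup X] [NormedSpace ℂ X]
    (pick : (ℂ × X) → ℝ → (ℂ × X)) (p₀ : ℂ × X) (ε : ℝ) :
    List Bool → (ℂ × X) × ℝ
  | [] => (p₀, 1)
  | b :: s =>
    let pr := cantorNode pick p₀ ε s
    let q := pick pr.1 (min (pr.2 / 2) (ε * (1 / 2 : ℝ) ^ (s.length + 3)))
    ((if b then q else pr.1), min (pr.2 / 4) (dist q.1 pr.1.1 / 4))

/-- Initial segments of a branch, most recent digit first. -/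
def branchList (σ : ℕ → Bool) : ℕ → List Bool
  | 0 => []
  | n + 1 => σ n :: branchList σ n

lemma branchList_length (σ : ℕ → Bool) (n : ℕ) : (branchList σ n).length = n := by
  induction n with
  | zero => rfl
  | succ n ih => simp [branchList, ih]

lemma branchList_congr {σ τ : ℕ → Bool} {n : ℕ} (h : ∀ i < n, σ i = τ i) :
    branchList σ n = branchList τ n := by
  induction n with
  | zero => rfl
  | succ n ih =>
      simp only [branchList]
      exact congrArg₂ _ (h n (Nat.lt_succ_self n)) (ih fun i hi => h i (hi.trans (Nat.lt_succ_self n)))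

lemma dense_span_trans {X : Type*} [NormedAddCommGroup X] [NormedSpace ℂ X] {A B : Set X}
    (hAB : A ⊆ closure (Submodule.span ℂ B : Set X))
    (hA : Dense (Submodule.span ℂ A : Set X)) : Dense (Submodule.span ℂ B : Set X) := by
  have h1 : Submodule.span ℂ A ≤ (Submodule.span ℂ B).topologicalClosure :=
    Submodule.span_le.mpr (by rw [Submodule.topologicalClosure_coe]; exact hAB)
  have h2 : closure (Submodule.span ℂ A : Set X) ⊆ closure (Submodule.span ℂ B : Set X) := by
    refine (closure_minimal (h1 : (Submodule.span ℂ A : Set X) ⊆ _)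
      (Submodule.span ℂ B).isClosed_topologicalClosure).trans ?_
    rw [Submodule.topologicalClosure_coe]
  rw [dense_iff_closure_eq] at hA ⊢
  exact le_antisymm (Set.subset_univ _) (hA ▸ h2)

lemma cantor_construction {X : Type*} [NormedAddCommGroup X] [NormedSpace ℂ X] [CompleteSpace X]
    (T : X →L[ℂ] X) (Z : Set (ℂ × X))
    (hZ : ∀ p ∈ Z, ‖p.1‖ = 1 ∧ ‖p.2‖ = 1 ∧ T p.2 = p.1 • p.2)
    (hsplit : ∀ p ∈ Z, ∀ δ > 0, ∃ q ∈ Z, q.1 ≠ p.1 ∧ dist q p < δ)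
    {p₀ : ℂ × X} (hp₀ : p₀ ∈ Z) {ε : ℝ} (hε : 0 < ε) :
    ∃ (K : Set ℂ) (E : ℂ → X), K.Nonempty ∧
      K ⊆ {c : ℂ | ‖c‖ = 1} ∧ Nonempty (↥K ≃ₜ (ℕ → Bool)) ∧
      ContinuousOn E K ∧ (∀ c ∈ K, ‖E c‖ = 1) ∧ (∀ c ∈ K, T (E c) = c • E c) ∧
      ∀ c ∈ K, ‖E c - p₀.2‖ < ε := by
  classical
  -- selection function
  have hpick0 : ∀ (p : ℂ × X) (δ : ℝ), ∃ q : ℂ × X,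
      p ∈ Z → 0 < δ → q ∈ Z ∧ q.1 ≠ p.1 ∧ dist q p < δ := by
    intro p δ
    by_cases h : p ∈ Z ∧ 0 < δ
    · obtain ⟨q, hq1, hq2, hq3⟩ := hsplit p h.1 δ h.2
      exact ⟨q, fun _ _ => ⟨hq1, hq2, hq3⟩⟩
    · exact ⟨p₀, fun h1 h2 => absurd ⟨h1, h2⟩ h⟩
  choose pick hpick using hpick0
  set node : List Bool → (ℂ × X) × ℝ := cantorNode pick p₀ ε with hnodedef
  set del : List Bool → ℝ := fun s => min ((node s).2 / 2) (ε * (1/2 : ℝ) ^ (s.length + 3))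
    with hdeldef
  set q : List Bool → ℂ × X := fun s => pick (node s).1 (del s) with hqdef
  have hnode_nil : node [] = (p₀, 1) := rfl
  have hnode_cons : ∀ (b : Bool) (s : List Bool),
      node (b :: s) = ((if b then q s else (node s).1),
        min ((node s).2 / 4) (dist (q s).1 (node s).1.1 / 4)) := by
    intro b s
    rfl
  -- main invariant
  have hinv : ∀ s : List Bool, (node s).1 ∈ Z ∧ 0 < (node s).2 := by
    intro s
    induction s with
    | nil => exact ⟨hp₀, one_pos⟩
    | cons b s ih =>
        have hδ : 0 < del s := by
          have h2 := ih.2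
          apply lt_min
          · linarith
          · positivity
        have hq' := hpick (node s).1 (del s) ih.1 hδ
        rw [hnode_cons]
        refine ⟨?_, ?_⟩
        · cases b
          · simpa using ih.1
          · simpa using hq'.1
        · have hd : (0:ℝ) < dist (q s).1 (node s).1.1 := dist_pos.mpr hq'.2.1
          have h2 := ih.2
          apply lt_min <;> linarith
  have hδpos : ∀ s : List Bool, 0 < del s := by
    intro s
    have h2 := (hinv s).2
    apply lt_min
    · linarith
    · positivity
  have hchild : ∀ s : List Bool, q s ∈ Z ∧ (q s).1 ≠ (node s).1.1 ∧ dist (q s) (node s).1 < del s :=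
    fun s => hpick (node s).1 (del s) (hinv s).1 (hδpos s)
  have hd1 : ∀ s : List Bool, dist (q s).1 (node s).1.1 ≤ dist (q s) (node s).1 := by
    intro s
    rw [Prod.dist_eq]
    exact le_max_left _ _
  have hd2 : ∀ s : List Bool, dist (q s).2 (node s).1.2 ≤ dist (q s) (node s).1 := by
    intro s
    rw [Prod.dist_eq]
    exact le_max_right _ _
  -- component lemmas
  have hfst_false : ∀ s : List Bool, (node (false :: s)).1 = (node s).1 := fun s => rfl
  have hfst_true : ∀ s : List Bool, (node (true :: s)).1 = q s := fun s => rfl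
  have hsnd_cons : ∀ (b : Bool) (s : List Bool),
      (node (b :: s)).2 = min ((node s).2 / 4) (dist (q s).1 (node s).1.1 / 4) := by
    intro b s
    cases b <;> rfl
  -- ball nesting
  have hsubset : ∀ (b : Bool) (s : List Bool),
      Metric.closedBall (node (b :: s)).1.1 (node (b :: s)).2 ⊆
        Metric.closedBall (node s).1.1 (node s).2 := by
    intro b s
    have hc := hchild s
    have hr := (hinv s).2
    have hδle : del s ≤ (node s).2 / 2 := min_le_left _ _
    have hdd : dist (q s).1 (node s).1.1 ≤ (node s).2 / 2 :=
      le_trans (hd1 s) (le_of_lt (lt_of_lt_of_le hc.2.2 hδle))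
    have hmin : (node (b :: s)).2 ≤ (node s).2 / 4 := by
      rw [hsnd_cons]; exact min_le_left _ _
    cases b
    · rw [hfst_false]
      exact Metric.closedBall_subset_closedBall (by linarith)
    · rw [hfst_true]
      exact Metric.closedBall_subset_closedBall' (by linarith)
  -- disjointness of sibling balls
  have hdisj : ∀ s : List Bool,
      Disjoint (Metric.closedBall (node (false :: s)).1.1 (node (false :: s)).2)
        (Metric.closedBall (node (true :: s)).1.1 (node (true :: s)).2) := by
    intro s
    have hc := hchild s
    have hd : 0 < dist (q s).1 (node s).1.1 := dist_pos.mpr hc.2.1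
    have h1 : (node (false :: s)).2 ≤ dist (q s).1 (node s).1.1 / 4 := by
      rw [hsnd_cons]; exact min_le_right _ _
    have h2 : (node (true :: s)).2 ≤ dist (q s).1 (node s).1.1 / 4 := by
      rw [hsnd_cons]; exact min_le_right _ _
    rw [hfst_false, hfst_true]
    apply Metric.closedBall_disjoint_closedBall
    have hcomm : dist (node s).1.1 (q s).1 = dist (q s).1 (node s).1.1 := dist_comm _ _
    linarith
  -- radius decay
  have hrquarter : ∀ (b : Bool) (s : List Bool), (node (b :: s)).2 ≤ (node s).2 / 4 := by
    intro b s
    rw [hsnd_cons]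
    exact min_le_left _ _
  -- branch sequences
  have hR : ∀ (σ : ℕ → Bool) (n : ℕ), (node (branchList σ n)).2 ≤ (1/4 : ℝ) ^ n := by
    intro σ n
    induction n with
    | zero => rw [show branchList σ 0 = [] from rfl, hnode_nil]; norm_num
    | succ n ih =>
        have h := hrquarter (σ n) (branchList σ n)
        have hbl : branchList σ (n+1) = σ n :: branchList σ n := rfl
        rw [hbl]
        calc (node (σ n :: branchList σ n)).2 ≤ (node (branchList σ n)).2 / 4 := h
          _ ≤ (1/4 : ℝ)^n / 4 := by linarith
          _ = (1/4 : ℝ)^(n+1) := by ring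
  have hstepc : ∀ (σ : ℕ → Bool) (n : ℕ),
      dist ((node (branchList σ n)).1.1) ((node (branchList σ (n+1))).1.1)
        ≤ (1/2 : ℝ) * (1/4 : ℝ)^n := by
    intro σ n
    have hbl : branchList σ (n+1) = σ n :: branchList σ n := rfl
    rw [hbl]
    cases σ n
    · rw [hfst_false]
      simp only [dist_self]
      positivity
    · rw [hfst_true]
      have hc := hchild (branchList σ n)
      have hδle : del (branchList σ n) ≤ (node (branchList σ n)).2 / 2 := min_le_left _ _
      have hRn := hR σ n
      have h1 := hd1 (branchList σ n)
      rw [dist_comm]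
      have : dist (q (branchList σ n)).1 (node (branchList σ n)).1.1
          ≤ (node (branchList σ n)).2 / 2 := le_trans h1 (le_of_lt (lt_of_lt_of_le hc.2.2 hδle))
      linarith
  have hstepv : ∀ (σ : ℕ → Bool) (n : ℕ),
      dist ((node (branchList σ n)).1.2) ((node (branchList σ (n+1))).1.2)
        ≤ (ε/8) * (1/2 : ℝ)^n := by
    intro σ n
    have hbl : branchList σ (n+1) = σ n :: branchList σ n := rfl
    rw [hbl]
    cases σ n
    · rw [hfst_false]
      simp only [dist_self]
      positivity
    · rw [hfst_true]
      have hc := hchild (branchList σ n)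
      have hδle : del (branchList σ n) ≤ ε * (1/2 : ℝ) ^ ((branchList σ n).length + 3) :=
        min_le_right _ _
      rw [branchList_length] at hδle
      have h2 := hd2 (branchList σ n)
      rw [dist_comm]
      have heq : ε * (1/2 : ℝ) ^ (n + 3) = (ε/8) * (1/2 : ℝ)^n := by ring
      have : dist (q (branchList σ n)).2 (node (branchList σ n)).1.2
          ≤ ε * (1/2 : ℝ) ^ (n + 3) := le_trans h2 (le_of_lt (lt_of_lt_of_le hc.2.2 hδle))
      linarith
  have hcauchyc : ∀ σ : ℕ → Bool, CauchySeq (fun n => (node (branchList σ n)).1.1) :=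
    fun σ => cauchySeq_of_le_geometric (1/4) (1/2) (by norm_num) (hstepc σ)
  have hcauchyv : ∀ σ : ℕ → Bool, CauchySeq (fun n => (node (branchList σ n)).1.2) :=
    fun σ => cauchySeq_of_le_geometric (1/2) (ε/8) (by norm_num) (hstepv σ)
  choose Φ hΦ using fun σ => cauchySeq_tendsto_of_complete (hcauchyc σ)
  choose Ψ hΨ using fun σ => cauchySeq_tendsto_of_complete (hcauchyv σ)
  -- nesting of balls along a branch
  have hnest : ∀ (σ : ℕ → Bool) (n m : ℕ), n ≤ m →
      Metric.closedBall ((node (branchList σ m)).1.1) ((node (branchList σ m)).2) ⊆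
        Metric.closedBall ((node (branchList σ n)).1.1) ((node (branchList σ n)).2) := by
    intro σ n m hnm
    induction m, hnm using Nat.le_induction with
    | base => exact subset_rfl
    | succ m hnm ih => exact (hsubset (σ m) (branchList σ m)).trans ih
  have hmem_ball : ∀ (σ : ℕ → Bool) (n : ℕ),
      Φ σ ∈ Metric.closedBall ((node (branchList σ n)).1.1) ((node (branchList σ n)).2) := by
    intro σ n
    apply Metric.isClosed_closedBall.mem_of_tendsto (hΦ σ)
    rw [eventually_atTop]
    exact ⟨n, fun m hm => hnest σ n m hm (Metric.mem_closedBall_self (le_of_lt (hinv _).2))⟩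
  -- limit properties
  have hΦnorm : ∀ σ : ℕ → Bool, ‖Φ σ‖ = 1 := by
    intro σ
    have h1 : Tendsto (fun n => ‖(node (branchList σ n)).1.1‖) atTop (𝓝 ‖Φ σ‖) := (hΦ σ).norm
    have h2 : (fun n => ‖(node (branchList σ n)).1.1‖) = fun _ => (1:ℝ) := by
      funext n
      exact (hZ _ (hinv (branchList σ n)).1).1
    rw [h2] at h1
    exact tendsto_nhds_unique h1 tendsto_const_nhds
  have hΨnorm : ∀ σ : ℕ → Bool, ‖Ψ σ‖ = 1 := by
    intro σ
    have h1 : Tendsto (fun n => ‖(node (branchList σ n)).1.2‖) atTop (𝓝 ‖Ψ σ‖) := (hΨ σ).norm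
    have h2 : (fun n => ‖(node (branchList σ n)).1.2‖) = fun _ => (1:ℝ) := by
      funext n
      exact (hZ _ (hinv (branchList σ n)).1).2.1
    rw [h2] at h1
    exact tendsto_nhds_unique h1 tendsto_const_nhds
  have hΨeig : ∀ σ : ℕ → Bool, T (Ψ σ) = Φ σ • Ψ σ := by
    intro σ
    have h1 : Tendsto (fun n => T ((node (branchList σ n)).1.2)) atTop (𝓝 (T (Ψ σ))) :=
      (T.continuous.tendsto _).comp (hΨ σ)
    have h2 : (fun n => T ((node (branchList σ n)).1.2))
        = fun n => (node (branchList σ n)).1.1 • (node (branchList σ n)).1.2 := by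
      funext n
      exact (hZ _ (hinv (branchList σ n)).1).2.2
    rw [h2] at h1
    exact tendsto_nhds_unique h1 ((hΦ σ).smul (hΨ σ))
  have hΨclose : ∀ σ : ℕ → Bool, ‖Ψ σ - p₀.2‖ < ε := by
    intro σ
    have h0 := dist_le_of_le_geometric_of_tendsto₀ (1/2) (ε/8) (by norm_num) (hstepv σ) (hΨ σ)
    have h1 : (node (branchList σ 0)).1.2 = p₀.2 := rfl
    rw [h1] at h0
    rw [← dist_eq_norm, dist_comm]
    calc dist p₀.2 (Ψ σ) ≤ (ε/8) / (1 - 1/2) := h0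
      _ = ε / 4 := by ring
      _ < ε := by linarith
  have htailv : ∀ (σ : ℕ → Bool) (n : ℕ),
      dist ((node (branchList σ n)).1.2) (Ψ σ) ≤ (ε/8) * (1/2:ℝ)^n / (1 - 1/2) :=
    fun σ n => dist_le_of_le_geometric_of_tendsto (1/2) (ε/8) (by norm_num) (hstepv σ) (hΨ σ) n
  -- injectivity of Φ
  have hΦinj : Function.Injective Φ := by
    intro σ τ hστ
    by_contra hne
    have hex : ∃ n, σ n ≠ τ n := by
      by_contra h
      push_neg at h
      exact hne (funext h)
    set n := Nat.find hex with hn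
    have hdiff : σ n ≠ τ n := Nat.find_spec hex
    have hagree : ∀ i < n, σ i = τ i := fun i hi => not_not.mp (Nat.find_min hex hi)
    have hbl : branchList σ n = branchList τ n := branchList_congr hagree
    have h1 := hmem_ball σ (n+1)
    have h2 := hmem_ball τ (n+1)
    have hblσ : branchList σ (n+1) = σ n :: branchList σ n := rfl
    have hblτ : branchList τ (n+1) = τ n :: branchList τ n := rfl
    rw [hblσ] at h1
    rw [hblτ, ← hbl] at h2
    rw [hστ] at h1
    have hdisj' := hdisj (branchList σ n)
    cases hσb : σ n with
    | false =>
        cases hτb : τ n with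
        | false => exact hdiff (hσb.trans hτb.symm)
        | true =>
            rw [hσb] at h1
            rw [hτb] at h2
            exact Set.disjoint_left.mp hdisj' h1 h2
    | true =>
        cases hτb : τ n with
        | true => exact hdiff (hσb.trans hτb.symm)
        | false =>
            rw [hσb] at h1
            rw [hτb] at h2
            exact Set.disjoint_left.mp hdisj' h2 h1
  -- continuity of Φ and Ψ
  have hcyl : ∀ (σ : ℕ → Bool) (n : ℕ), {τ : ℕ → Bool | ∀ i < n, τ i = σ i} ∈ 𝓝 σ := by
    intro σ n
    have hopen : IsOpen {τ : ℕ → Bool | ∀ i < n, τ i = σ i} := by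
      have heq : {τ : ℕ → Bool | ∀ i < n, τ i = σ i}
          = ⋂ i ∈ Finset.range n, (fun τ : ℕ → Bool => τ i) ⁻¹' {σ i} := by
        ext τ
        simp [Finset.mem_range]
      rw [heq]
      exact isOpen_biInter_finset fun i _ =>
        (isOpen_discrete _).preimage (continuous_apply i)
    exact hopen.mem_nhds (fun i _ => rfl)
  have hΦcont : Continuous Φ := by
    rw [continuous_iff_continuousAt]
    intro σ
    rw [ContinuousAt, Metric.tendsto_nhds]
    intro ε' hε'
    obtain ⟨n, hn⟩ := exists_pow_lt_of_lt_one (show (0:ℝ) < ε'/2 by linarith)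
      (by norm_num : (1/4 : ℝ) < 1)
    filter_upwards [hcyl σ n] with τ hτ
    have hbl : branchList τ n = branchList σ n := branchList_congr hτ
    have h1 := hmem_ball τ n
    have h2 := hmem_ball σ n
    rw [hbl] at h1
    rw [Metric.mem_closedBall] at h1 h2
    have hRn := hR σ n
    calc dist (Φ τ) (Φ σ)
        ≤ dist (Φ τ) ((node (branchList σ n)).1.1) + dist ((node (branchList σ n)).1.1) (Φ σ) :=
          dist_triangle _ _ _
      _ ≤ (1/4:ℝ)^n + (1/4:ℝ)^n := by
          rw [dist_comm ((node (branchList σ n)).1.1)]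
          exact add_le_add (h1.trans hRn) (h2.trans hRn)
      _ < ε' := by linarith
  have hΨcont : Continuous Ψ := by
    rw [continuous_iff_continuousAt]
    intro σ
    rw [ContinuousAt, Metric.tendsto_nhds]
    intro ε' hε'
    obtain ⟨n, hn⟩ := exists_pow_lt_of_lt_one
      (show (0:ℝ) < ε' / (2 * ((ε/8) / (1 - 1/2)) + 1) by positivity)
      (by norm_num : (1/2 : ℝ) < 1)
    filter_upwards [hcyl σ n] with τ hτ
    have hbl : branchList τ n = branchList σ n := branchList_congr hτ
    have h1 := htailv τ n
    have h2 := htailv σ n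
    rw [hbl] at h1
    have hC : (0:ℝ) < (ε/8) / (1 - 1/2) := by norm_num; positivity
    have hpow : (0:ℝ) < (1/2:ℝ)^n := by positivity
    calc dist (Ψ τ) (Ψ σ)
        ≤ dist (Ψ τ) ((node (branchList σ n)).1.2) + dist ((node (branchList σ n)).1.2) (Ψ σ) :=
          dist_triangle _ _ _
      _ ≤ (ε/8) * (1/2:ℝ)^n / (1 - 1/2) + (ε/8) * (1/2:ℝ)^n / (1 - 1/2) := by
          rw [dist_comm (Ψ τ)]
          exact add_le_add h1 h2
      _ = 2 * ((ε/8) / (1 - 1/2)) * (1/2:ℝ)^n := by ring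
      _ < ε' := by
          set a : ℝ := 2 * ((ε/8) / (1 - 1/2)) with ha
          have hapos : 0 < a := by rw [ha]; norm_num; positivity
          have h3 : a * (1/2:ℝ)^n < a * (ε' / (a + 1)) := mul_lt_mul_of_pos_left hn hapos
          have h4 : a * (ε' / (a + 1)) ≤ ε' := by
            rw [mul_div_assoc']
            rw [div_le_iff₀ (by linarith : (0:ℝ) < a + 1)]
            nlinarith
          linarith
  -- assemble K and E
  refine ⟨Set.range Φ, Function.extend Φ Ψ (fun _ => 0), ⟨Φ (fun _ => false), Set.mem_range_self _⟩,
    ?_, ?_, ?_, ?_, ?_, ?_⟩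
  · rintro c ⟨σ, rfl⟩
    exact hΦnorm σ
  · -- homeomorphism with Cantor space
    have hcont' : Continuous (Equiv.ofInjective Φ hΦinj) := by
      have : ⇑(Equiv.ofInjective Φ hΦinj) = fun σ => (⟨Φ σ, Set.mem_range_self σ⟩ : Set.range Φ) := by
        funext σ
        rfl
      rw [this]
      exact hΦcont.subtype_mk _
    exact ⟨(Continuous.homeoOfEquivCompactToT2 hcont').symm⟩
  · -- continuity on K
    rw [continuousOn_iff_continuous_restrict]
    have hres : (Set.range Φ).restrict (Function.extend Φ Ψ (fun _ => 0))
        = Ψ ∘ (fun z : Set.range Φ => (Equiv.ofInjective Φ hΦinj).symm z) := by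
      funext z
      have h1 : Φ ((Equiv.ofInjective Φ hΦinj).symm z) = (z : ℂ) :=
        Equiv.apply_ofInjective_symm hΦinj z
      calc (Set.range Φ).restrict (Function.extend Φ Ψ (fun _ => 0)) z
          = Function.extend Φ Ψ (fun _ => 0) (z : ℂ) := rfl
        _ = Function.extend Φ Ψ (fun _ => 0) (Φ ((Equiv.ofInjective Φ hΦinj).symm z)) := by
            rw [h1]
        _ = Ψ ((Equiv.ofInjective Φ hΦinj).symm z) := hΦinj.extend_apply _ _ _
    refine (congrArg Continuous hres).mpr ?_
    have hcont' : Continuous (Equiv.ofInjective Φ hΦinj) := by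
      have : ⇑(Equiv.ofInjective Φ hΦinj) = fun σ => (⟨Φ σ, Set.mem_range_self σ⟩ : Set.range Φ) := by
        funext σ
        rfl
      rw [this]
      exact hΦcont.subtype_mk _
    exact hΨcont.comp (Continuous.homeoOfEquivCompactToT2 hcont').symm.continuous
  · rintro c ⟨σ, rfl⟩
    rw [hΦinj.extend_apply]
    exact hΨnorm σ
  · rintro c ⟨σ, rfl⟩
    rw [hΦinj.extend_apply]
    exact hΨeig σ
  · rintro c ⟨σ, rfl⟩
    rw [hΦinj.extend_apply]
    exact hΨclose σ

lemma one_to_three {X : Type*} [NormedAddCommGroup X] [NormedSpace ℂ X] [CompleteSpace X]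
    [TopologicalSpace.SeparableSpace X] (hdim : ¬ FiniteDimensional ℂ X) (T : X →L[ℂ] X)
    (h1 : ∀ D : Set ℂ, D.Countable →
        Dense (Submodule.span ℂ
          (⋃ c ∈ {c : ℂ | ‖c‖ = 1} \ D, {x : X | T x = c • x}) : Set X)) :
    ∃ (K : ℕ → Set ℂ) (E : ℕ → ℂ → X),
        (∀ i, K i ⊆ {c : ℂ | ‖c‖ = 1}) ∧
        (∀ i, Nonempty (↥(K i) ≃ₜ (ℕ → Bool))) ∧
        (∀ i, ContinuousOn (E i) (K i)) ∧
        (∀ i, ∀ c ∈ K i, ‖E i c‖ = 1) ∧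
        (∀ i, ∀ c ∈ K i, T (E i c) = c • E i c) ∧
        Dense (Submodule.span ℂ (⋃ i, E i '' K i) : Set X) := by
  classical
  haveI : SecondCountableTopology X :=
    UniformSpace.secondCountable_of_separable X
  set Z0 : Set (ℂ × X) := {p | ‖p.1‖ = 1 ∧ ‖p.2‖ = 1 ∧ T p.2 = p.1 • p.2} with hZ0def
  obtain ⟨ℬ, hBc, -, hbasis⟩ := TopologicalSpace.exists_countable_basis (ℂ × X)
  set D : Set ℂ := ⋃ W ∈ {W ∈ ℬ | (Prod.fst '' (W ∩ Z0)).Countable}, Prod.fst '' (W ∩ Z0)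
    with hDdef
  have hDc : D.Countable :=
    Set.Countable.biUnion (hBc.mono (Set.sep_subset _ _)) (fun W hW => hW.2)
  set Z : Set (ℂ × X) := {p ∈ Z0 | p.1 ∉ D} with hZdef
  have hZ : ∀ p ∈ Z, ‖p.1‖ = 1 ∧ ‖p.2‖ = 1 ∧ T p.2 = p.1 • p.2 := fun p hp => hp.1
  have hsplit : ∀ p ∈ Z, ∀ δ > 0, ∃ q ∈ Z, q.1 ≠ p.1 ∧ dist q p < δ := by
    intro p hp δ hδ
    obtain ⟨W, hWB, hpW, hWsub⟩ := hbasis.exists_subset_of_mem_open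
      (Metric.mem_ball_self hδ) Metric.isOpen_ball
    by_cases hc : (Prod.fst '' (W ∩ Z0)).Countable
    · exfalso
      apply hp.2
      have hWmem : W ∈ {W ∈ ℬ | (Prod.fst '' (W ∩ Z0)).Countable} := ⟨hWB, hc⟩
      have hp1 : p.1 ∈ Prod.fst '' (W ∩ Z0) := ⟨p, ⟨hpW, hp.1⟩, rfl⟩
      exact Set.mem_biUnion hWmem hp1
    · have hne : ((Prod.fst '' (W ∩ Z0)) \ (D ∪ {p.1})).Nonempty := by
        by_contra hemp
        rw [Set.not_nonempty_iff_eq_empty, Set.diff_eq_empty] at hemp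
        exact hc ((hDc.union (Set.countable_singleton _)).mono hemp)
      obtain ⟨c', hc'mem, hc'not⟩ := hne
      obtain ⟨q, hqW, rfl⟩ := hc'mem
      rw [Set.mem_union] at hc'not
      push_neg at hc'not
      refine ⟨q, ⟨hqW.2, hc'not.1⟩, hc'not.2, Metric.mem_ball.mp (hWsub hqW.1)⟩
  have hG : Dense (Submodule.span ℂ (Prod.snd '' Z) : Set X) := by
    refine Dense.mono ?_ (h1 D hDc)
    have hle : Submodule.span ℂ (⋃ c ∈ {c : ℂ | ‖c‖ = 1} \ D, {x : X | T x = c • x})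
        ≤ Submodule.span ℂ (Prod.snd '' Z) := by
      rw [Submodule.span_le]
      intro x hx
      rw [Set.mem_iUnion₂] at hx
      obtain ⟨c, hc, hx⟩ := hx
      have hTx : T x = c • x := hx
      by_cases hx0 : x = 0
      · rw [hx0]
        exact Submodule.zero_mem _
      · have hnx : ‖x‖ ≠ 0 := norm_ne_zero_iff.mpr hx0
        set u : X := ((‖x‖ : ℂ))⁻¹ • x with hu_def
        have hu : ‖u‖ = 1 := by
          rw [hu_def, norm_smul, norm_inv]
          rw [Complex.norm_real]
          rw [Real.norm_eq_abs, abs_of_nonneg (norm_nonneg x)]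
          field_simp
        have hTu : T u = c • u := by
          rw [hu_def, T.map_smul, hTx, smul_comm]
        have humem : ((c, u) : ℂ × X) ∈ Z := ⟨⟨hc.1, hu, hTu⟩, hc.2⟩
        have hxu : x = (‖x‖ : ℂ) • u := by
          rw [hu_def, smul_smul, mul_inv_cancel₀ (by exact_mod_cast hnx), one_smul]
        rw [hxu]
        exact Submodule.smul_mem _ _ (Submodule.subset_span ⟨(c, u), humem, rfl⟩)
    exact hle
  have hZne : Z.Nonempty := by
    by_contra hne
    rw [Set.not_nonempty_iff_eq_empty] at hne
    rw [hne] at hG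
    have hbot : (Submodule.span ℂ (Prod.snd '' (∅ : Set (ℂ × X))) : Set X) = {0} := by
      rw [Set.image_empty, Submodule.span_empty, Submodule.bot_coe]
    rw [hbot] at hG
    have huniv : (Set.univ : Set X) = {0} := by
      rw [← hG.closure_eq, closure_singleton]
    haveI hsub : Subsingleton X := by
      constructor
      intro a b
      have ha : a ∈ ({0} : Set X) := huniv ▸ Set.mem_univ a
      have hb : b ∈ ({0} : Set X) := huniv ▸ Set.mem_univ b
      rw [Set.mem_singleton_iff] at ha hb
      rw [ha, hb]
    exact hdim inferInstance
  haveI : Nonempty (↥Z) := Set.Nonempty.to_subtype hZne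
  obtain ⟨s, hsc, hsd⟩ := TopologicalSpace.exists_countable_dense (↥Z)
  set S : Set (ℂ × X) := Subtype.val '' s with hSdef
  have hSc : S.Countable := hsc.image _
  have hSsub : S ⊆ Z := by
    rintro _ ⟨⟨p, hp⟩, -, rfl⟩
    exact hp
  have hSclos : ∀ p ∈ Z, p ∈ closure S := by
    intro p hp
    have h0 : (⟨p, hp⟩ : ↥Z) ∈ closure s := hsd _
    exact map_mem_closure continuous_subtype_val h0 (fun x hx => Set.mem_image_of_mem _ hx)
  have hSne : S.Nonempty := by
    obtain ⟨p, hp⟩ := hZne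
    obtain ⟨x, hx⟩ := hsd.nonempty
    exact ⟨x, Set.mem_image_of_mem _ hx⟩
  obtain ⟨f, hfS⟩ := Set.Countable.exists_eq_range hSc hSne
  have hfZ : ∀ n, f n ∈ Z := fun n => hSsub (hfS ▸ Set.mem_range_self n)
  have hKE : ∀ m : ℕ × ℕ, ∃ (K : Set ℂ) (E : ℂ → X), K.Nonempty ∧
      K ⊆ {c : ℂ | ‖c‖ = 1} ∧ Nonempty (↥K ≃ₜ (ℕ → Bool)) ∧
      ContinuousOn E K ∧ (∀ c ∈ K, ‖E c‖ = 1) ∧ (∀ c ∈ K, T (E c) = c • E c) ∧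
      ∀ c ∈ K, ‖E c - (f m.1).2‖ < (1/2 : ℝ) ^ m.2 := by
    intro m
    exact cantor_construction T Z hZ hsplit (hfZ m.1) (by positivity)
  choose K0 E0 hne0 hcirc0 hhomeo0 hconton0 hnorm0 heig0 hclose0 using hKE
  set e : ℕ ≃ ℕ × ℕ := Nat.pairEquiv.symm with hedef
  refine ⟨fun i => K0 (e i), fun i => E0 (e i), fun i => hcirc0 (e i), fun i => hhomeo0 (e i),
    fun i => hconton0 (e i), fun i => hnorm0 (e i), fun i => heig0 (e i), ?_⟩
  apply dense_span_trans (A := Prod.snd '' Z) ?_ hG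
  set B : Set X := ⋃ i, E0 (e i) '' K0 (e i) with hBdef
  have hSB : ∀ p ∈ S, p.2 ∈ closure B := by
    intro p hpS
    rw [hfS] at hpS
    obtain ⟨n, rfl⟩ := hpS
    rw [Metric.mem_closure_iff]
    intro ε' hε'
    obtain ⟨j, hj⟩ := exists_pow_lt_of_lt_one hε' (by norm_num : (1/2 : ℝ) < 1)
    obtain ⟨c, hcK⟩ := hne0 (n, j)
    refine ⟨E0 (n, j) c, ?_, ?_⟩
    · refine Set.mem_iUnion.mpr ⟨e.symm (n, j), ?_⟩
      rw [e.apply_symm_apply]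
      exact Set.mem_image_of_mem _ hcK
    · rw [dist_eq_norm]
      rw [norm_sub_rev]
      exact lt_trans (hclose0 (n, j) c hcK) hj
  rintro x ⟨p, hpZ, rfl⟩
  have h1' : p ∈ closure S := hSclos p hpZ
  have h2' : p.2 ∈ closure (Prod.snd '' S) :=
    map_mem_closure continuous_snd h1' (Set.mapsTo_image _ _)
  have h3' : Prod.snd '' S ⊆ closure (Submodule.span ℂ B : Set X) := by
    rintro _ ⟨q, hqS, rfl⟩
    exact closure_mono (Submodule.subset_span) (hSB q hqS)
  exact closure_minimal h3' isClosed_closure h2'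

lemma three_to_two {X : Type*} [NormedAddCommGroup X] [NormedSpace ℂ X]
    (T : X →L[ℂ] X)
    (h3 : ∃ (K : ℕ → Set ℂ) (E : ℕ → ℂ → X),
        (∀ i, K i ⊆ {c : ℂ | ‖c‖ = 1}) ∧
        (∀ i, Nonempty (↥(K i) ≃ₜ (ℕ → Bool))) ∧
        (∀ i, ContinuousOn (E i) (K i)) ∧
        (∀ i, ∀ c ∈ K i, ‖E i c‖ = 1) ∧
        (∀ i, ∀ c ∈ K i, T (E i c) = c • E i c) ∧
        Dense (Submodule.span ℂ (⋃ i, E i '' K i) : Set X)) :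
    PerfectlySpanning T := by
  classical
  obtain ⟨K, E, hcirc, hhom, hcont, hnorm, heig, hdense⟩ := h3
  obtain ⟨ν, hν1, hν2, hν3⟩ := exists_cantor_measure
  haveI := hν1
  set h : ∀ i : ℕ, ↥(K i) ≃ₜ (ℕ → Bool) := fun i => (hhom i).some with hh
  set g : ℕ → (ℕ → Bool) → ℂ := fun i σ => ((h i).symm σ : ℂ) with hg
  have hgcont : ∀ i, Continuous (g i) := fun i => continuous_subtype_val.comp (h i).symm.continuous
  have hgmeas : ∀ i, Measurable (g i) := fun i => (hgcont i).measurable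
  have hginj : ∀ i, Function.Injective (g i) := fun i =>
    Subtype.val_injective.comp (h i).symm.injective
  have hgrange : ∀ i, Set.range (g i) = K i := by
    intro i
    have h0 : Set.range (g i) = Subtype.val '' Set.range (h i).symm := by
      rw [← Set.range_comp]
      rfl
    rw [h0, (h i).symm.surjective.range_eq, Set.image_univ, Subtype.range_coe]
  have hgmem : ∀ i σ, g i σ ∈ K i := by
    intro i σ
    rw [← hgrange i]
    exact Set.mem_range_self σ
  set μ : ℕ → Measure ℂ := fun i => Measure.map (g i) ν with hμ
  set σm : Measure ℂ := Measure.sum (fun i => ((2 : ℝ≥0∞))⁻¹ ^ (i + 1) • μ i) with hσm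
  have hμapp : ∀ i (s : Set ℂ), MeasurableSet s → μ i s = ν ((g i) ⁻¹' s) :=
    fun i s hs => Measure.map_apply (hgmeas i) hs
  have hσapp : ∀ s : Set ℂ, MeasurableSet s →
      σm s = ∑' i : ℕ, ((2 : ℝ≥0∞))⁻¹ ^ (i + 1) * ν ((g i) ⁻¹' s) := by
    intro s hs
    rw [hσm, Measure.sum_apply _ hs]
    congr 1
    funext i
    rw [Measure.smul_apply, smul_eq_mul, hμapp i s hs]
  have hcoeff : ∑' i : ℕ, ((2 : ℝ≥0∞))⁻¹ ^ (i + 1) = 1 := by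
    have h1 : ∀ i : ℕ, ((2 : ℝ≥0∞))⁻¹ ^ (i + 1) = 2⁻¹ * 2⁻¹ ^ i := fun i => pow_succ' _ _
    rw [tsum_congr h1, ENNReal.tsum_mul_left, ENNReal.tsum_geometric]
    rw [ENNReal.one_sub_inv_two, inv_inv]
    exact ENNReal.inv_mul_cancel two_ne_zero ENNReal.ofNat_ne_top
  have hcircmeas : MeasurableSet {c : ℂ | ‖c‖ = 1} :=
    (IsClosed.preimage continuous_norm isClosed_singleton).measurableSet
  have huniv : σm Set.univ = 1 := by
    rw [hσapp Set.univ MeasurableSet.univ]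
    have : ∀ i : ℕ, (g i) ⁻¹' Set.univ = Set.univ := fun i => Set.preimage_univ
    calc ∑' i : ℕ, ((2 : ℝ≥0∞))⁻¹ ^ (i + 1) * ν ((g i) ⁻¹' Set.univ)
        = ∑' i : ℕ, ((2 : ℝ≥0∞))⁻¹ ^ (i + 1) := by
          apply tsum_congr
          intro i
          rw [this i, measure_univ, mul_one]
      _ = 1 := hcoeff
  refine ⟨σm, ⟨huniv⟩, ?_, ?_, ?_⟩
  · -- atomless
    intro c
    rw [hσapp {c} (measurableSet_singleton c)]
    rw [ENNReal.tsum_eq_zero]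
    intro i
    have hpre : ν ((g i) ⁻¹' {c}) = 0 := by
      rcases Set.eq_empty_or_nonempty ((g i) ⁻¹' {c}) with hemp | ⟨a, ha⟩
      · rw [hemp]
        exact measure_empty
      · have hsing : (g i) ⁻¹' {c} = {a} := by
          apply Set.eq_singleton_iff_unique_mem.mpr
          refine ⟨ha, fun b hb => hginj i ?_⟩
          rw [Set.mem_preimage, Set.mem_singleton_iff] at hb
          rw [Set.mem_preimage, Set.mem_singleton_iff] at ha
          rw [hb, ha]
        rw [hsing]
        exact hν2 a
    rw [hpre, mul_zero]
  · -- circle has full measure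
    rw [hσapp _ hcircmeas]
    have hpre : ∀ i : ℕ, (g i) ⁻¹' {c : ℂ | ‖c‖ = 1} = Set.univ := by
      intro i
      apply Set.eq_univ_of_forall
      intro σ
      exact hcirc i (hgmem i σ)
    calc ∑' i : ℕ, ((2 : ℝ≥0∞))⁻¹ ^ (i + 1) * ν ((g i) ⁻¹' {c : ℂ | ‖c‖ = 1})
        = ∑' i : ℕ, ((2 : ℝ≥0∞))⁻¹ ^ (i + 1) := by
          apply tsum_congr
          intro i
          rw [hpre i, measure_univ, mul_one]
      _ = 1 := hcoeff
  · -- main density statement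
    intro A hAsub hAme hA1
    have hAc : σm Aᶜ = 0 := by
      have hfin : σm A ≠ ⊤ := by
        rw [hA1]
        exact ENNReal.one_ne_top
      rw [measure_compl hAme hfin, huniv, hA1, tsub_self]
    have hi0 : ∀ i : ℕ, ν ((g i) ⁻¹' Aᶜ) = 0 := by
      intro i
      have h0 := hσapp Aᶜ hAme.compl
      rw [hAc] at h0
      have h1 := (ENNReal.tsum_eq_zero.mp h0.symm) i
      rcases mul_eq_zero.mp h1 with h2 | h2
      · exact absurd h2 (pow_ne_zero _ (ENNReal.inv_ne_zero.mpr ENNReal.ofNat_ne_top))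
      · exact h2
    have hdenseA : ∀ i, Dense ((g i) ⁻¹' A) := by
      intro i
      rw [dense_iff_inter_open]
      intro U hU hUne
      by_contra hempty
      rw [Set.not_nonempty_iff_eq_empty] at hempty
      have hUsub : U ⊆ (g i) ⁻¹' Aᶜ := by
        intro τ hτ
        rw [Set.mem_preimage, Set.mem_compl_iff]
        intro hmem
        have : τ ∈ U ∩ (g i) ⁻¹' A := ⟨hτ, hmem⟩
        rw [hempty] at this
        exact this
      have hle : ν U ≤ 0 := (hi0 i) ▸ measure_mono hUsub
      exact (ne_of_gt (hν3 U hU hUne)) (le_antisymm hle zero_le)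
    have hclosKA : ∀ i, ∀ c ∈ K i, c ∈ closure (A ∩ K i) := by
      intro i c hc
      set σ0 : ℕ → Bool := h i ⟨c, hc⟩ with hσ0
      have hgc : g i σ0 = c := by
        rw [hg]
        simp only [hσ0]
        rw [Homeomorph.symm_apply_apply]
      have hmemcl : σ0 ∈ closure ((g i) ⁻¹' A) := (hdenseA i) σ0
      have hmaps : Set.MapsTo (g i) ((g i) ⁻¹' A) (A ∩ K i) := by
        intro τ hτ
        exact ⟨hτ, hgmem i τ⟩
      have h2 := map_mem_closure (hgcont i) hmemcl hmaps
      rw [hgc] at h2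
      exact h2
    apply dense_span_trans (A := ⋃ i, E i '' K i) ?_ hdense
    rintro x hx
    rw [Set.mem_iUnion] at hx
    obtain ⟨i, q, hqK, rfl⟩ := hx
    have hcw : ContinuousWithinAt (E i) (A ∩ K i) q :=
      ((hcont i) q hqK).mono Set.inter_subset_right
    have hmem := hcw.mem_closure_image (hclosKA i q hqK)
    refine closure_mono ?_ hmem
    rintro _ ⟨c, ⟨hcA, hcK⟩, rfl⟩
    apply Submodule.subset_span
    exact Set.mem_iUnion₂.mpr ⟨c, hcA, heig i c hcK⟩

lemma two_to_one {X : Type*} [NormedAddCommGroup X] [NormedSpace ℂ X]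
    (T : X →L[ℂ] X) (h2 : PerfectlySpanning T) :
    ∀ D : Set ℂ, D.Countable →
      Dense (Submodule.span ℂ
        (⋃ c ∈ {c : ℂ | ‖c‖ = 1} \ D, {x : X | T x = c • x}) : Set X) := by
  obtain ⟨σ, hprob, hatom, hcircle, hmain⟩ := h2
  intro D hD
  haveI : NullSingletonClass σ := ⟨hatom⟩
  have hcircmeas : MeasurableSet {c : ℂ | ‖c‖ = 1} :=
    (IsClosed.preimage continuous_norm isClosed_singleton).measurableSet
  have hDzero : σ D = 0 := hD.measure_zero σ
  have hA1 : σ ({c : ℂ | ‖c‖ = 1} \ D) = 1 := by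
    rw [measure_diff_null hDzero, hcircle]
  exact hmain _ Set.diff_subset (hcircmeas.diff hD.measurableSet) hA1

/-- Characterizations of operators with perfectly spanning unimodular eigenvectors:
(1) removing any countable set of unimodular eigenvalues leaves a spanning set of
eigenvectors; (2) perfect spanning; (3) the unimodular eigenvectors can be
parametrized by countably many continuous eigenvector fields defined on Cantor
subsets of the circle. -/
theorem perfectlySpanning_characterizations
    {X : Type*} [NormedAddCommGroup X] [NormedSpace ℂ X] [CompleteSpace X]
    [TopologicalSpace.SeparableSpace X] (hdim : ¬ FiniteDimensional ℂ X)
    (T : X →L[ℂ] X) :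
    ((∀ D : Set ℂ, D.Countable →
        Dense (Submodule.span ℂ
          (⋃ c ∈ {c : ℂ | ‖c‖ = 1} \ D, {x : X | T x = c • x}) : Set X)) ↔
      PerfectlySpanning T) ∧
    (PerfectlySpanning T ↔
      ∃ (K : ℕ → Set ℂ) (E : ℕ → ℂ → X),
        (∀ i, K i ⊆ {c : ℂ | ‖c‖ = 1}) ∧
        (∀ i, Nonempty (K i ≃ₜ (ℕ → Bool))) ∧
        (∀ i, ContinuousOn (E i) (K i)) ∧
        (∀ i, ∀ c ∈ K i, ‖E i c‖ = 1) ∧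
        (∀ i, ∀ c ∈ K i, T (E i c) = c • E i c) ∧
        Dense (Submodule.span ℂ (⋃ i, E i '' K i) : Set X)) := by
  constructor
  · constructor
    · intro h1
      exact three_to_two T (one_to_three hdim T h1)
    · intro h2
      exact two_to_one T h2
  · constructor
    · intro h2
      exact one_to_three hdim T (two_to_one T h2)
    · intro h3
      exact three_to_two T h3
end

section
/- Let X be a complex separable infinite-dimensional Banach space and let T be a bounded linear operator on X. Suppose that for every countable subset D of the unit circle 𝕋, the linear span of ⋃_{λ ∈ 𝕋∖D} ker(T − λ) is dense in X. Then there exists a sequence (K_i)_{i≥1} of subsets of 𝕋, each homeomorphic to the Cantor set 2^ω, and a sequence (E_i)_{i≥1} of continuous functions E_i : K_i → S_X into the unit sphere S_X = {x ∈ X : ‖x‖ = 1}, such that T E_i(λ) = λ E_i(λ) for every i ≥ 1 and λ ∈ K_i, and the linear span of {E_i(λ) : i ≥ 1, λ ∈ K_i} is dense in X. -/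
open MeasureTheory Filter Topology

namespace CREF
variable {X : Type*} [NormedAddCommGroup X] [NormedSpace ℂ X] [CompleteSpace X]
  [TopologicalSpace.SeparableSpace X] (T : X →L[ℂ] X)

def Z : Set (ℂ × X) := {p | ‖p.1‖ = 1 ∧ ‖p.2‖ = 1 ∧ T p.2 = p.1 • p.2}

lemma isClosed_Z : IsClosed (Z T) := by
  have h1 : IsClosed {p : ℂ × X | ‖p.1‖ = 1} :=
    isClosed_eq (continuous_fst.norm) continuous_const
  have h2 : IsClosed {p : ℂ × X | ‖p.2‖ = 1} :=
    isClosed_eq (continuous_snd.norm) continuous_const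
  have h3 : IsClosed {p : ℂ × X | T p.2 = p.1 • p.2} :=
    isClosed_eq (T.continuous.comp continuous_snd) (continuous_fst.smul continuous_snd)
  have : Z T = ({p : ℂ × X | ‖p.1‖ = 1} ∩ {p : ℂ × X | ‖p.2‖ = 1}) ∩ {p : ℂ × X | T p.2 = p.1 • p.2} := by
    ext p; simp [Z, and_assoc]
  rw [this]; exact (h1.inter h2).inter h3

def small : Set (ℂ × X) :=
  ⋃₀ {U | U ∈ TopologicalSpace.countableBasis (ℂ × X) ∧ (Prod.fst '' (U ∩ Z T)).Countable}

lemma isOpen_small : IsOpen (small T) := by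
  refine isOpen_sUnion fun U hU => TopologicalSpace.isOpen_of_mem_countableBasis hU.1

def S : Set ℂ := Prod.fst '' (small T ∩ Z T)

lemma countable_S : (S T).Countable := by
  have hsub : S T ⊆ ⋃ U ∈ {U | U ∈ TopologicalSpace.countableBasis (ℂ × X) ∧
      (Prod.fst '' (U ∩ Z T)).Countable}, Prod.fst '' (U ∩ Z T) := by
    rintro c ⟨p, ⟨hps, hpz⟩, rfl⟩
    obtain ⟨U, hU, hpU⟩ := hps
    exact Set.mem_biUnion hU ⟨p, ⟨hpU, hpz⟩, rfl⟩
  refine Set.Countable.mono hsub ?_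
  exact Set.Countable.biUnion
    ((TopologicalSpace.countable_countableBasis _).mono (Set.sep_subset _ _))
    (fun U hU => hU.2)

def Zs : Set (ℂ × X) := Z T \ small T

lemma isClosed_Zs : IsClosed (Zs T) :=
  (isClosed_Z T).sdiff (isOpen_small T)

lemma Zs_subset : Zs T ⊆ Z T := Set.diff_subset

lemma mem_Zs {c : ℂ} {x : X} (hc : ‖c‖ = 1) (hx : ‖x‖ = 1) (hT : T x = c • x)
    (hS : c ∉ S T) : (c, x) ∈ Zs T := by
  refine ⟨⟨hc, hx, hT⟩, fun hsm => hS ⟨(c, x), ⟨hsm, hc, hx, hT⟩, rfl⟩⟩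

lemma uncountable_proj {p : ℂ × X} (hp : p ∈ Zs T) {U : Set (ℂ × X)} (hU : IsOpen U)
    (hpU : p ∈ U) : ¬ (Prod.fst '' (U ∩ Zs T)).Countable := by
  obtain ⟨V, hVb, hpV, hVU⟩ :=
    (TopologicalSpace.isBasis_countableBasis (ℂ × X)).exists_subset_of_mem_open hpU hU
  have hVnc : ¬ (Prod.fst '' (V ∩ Z T)).Countable := by
    intro hc
    exact hp.2 ⟨V, ⟨hVb, hc⟩, hpV⟩
  intro hc
  apply hVnc
  have hsub : Prod.fst '' (V ∩ Z T) ⊆ Prod.fst '' (U ∩ Zs T) ∪ S T := by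
    rintro c ⟨q, ⟨hqV, hqZ⟩, rfl⟩
    by_cases hq : q ∈ small T
    · exact Or.inr ⟨q, ⟨hq, hqZ⟩, rfl⟩
    · exact Or.inl ⟨q, ⟨hVU hqV, hqZ, hq⟩, rfl⟩
  exact Set.Countable.mono hsub (hc.union (countable_S T))

lemma exists_pair {p : ℂ × X} (hp : p ∈ Zs T) {r δ : ℝ} (hr : 0 < r) (hδ : 0 < δ) :
    ∃ q0 q1 : ℂ × X, q0 ∈ Zs T ∧ q1 ∈ Zs T ∧ q0.1 ≠ q1.1 ∧
      dist q0.1 p.1 < r ∧ dist q1.1 p.1 < r ∧ dist q0.2 p.2 < δ ∧ dist q1.2 p.2 < δ := by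
  set U : Set (ℂ × X) := Metric.ball p.1 r ×ˢ Metric.ball p.2 δ with hUdef
  have hU : IsOpen U := (Metric.isOpen_ball).prod (Metric.isOpen_ball)
  have hpU : p ∈ U := ⟨Metric.mem_ball_self hr, Metric.mem_ball_self hδ⟩
  have hnc := uncountable_proj T hp hU hpU
  have hnsub : ¬ (Prod.fst '' (U ∩ Zs T)).Subsingleton := fun hs => hnc hs.countable
  rw [Set.not_subsingleton_iff] at hnsub
  obtain ⟨c0, hc0, c1, hc1, hne⟩ := hnsub
  obtain ⟨q0, ⟨hq0U, hq0Z⟩, rfl⟩ := hc0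
  obtain ⟨q1, ⟨hq1U, hq1Z⟩, rfl⟩ := hc1
  exact ⟨q0, q1, hq0Z, hq1Z, hne, hq0U.1, hq1U.1, hq0U.2, hq1U.2⟩

structure CNode (X : Type*) where
  c : ℂ
  v : X
  r : ℝ

variable {X : Type*} [NormedAddCommGroup X] [NormedSpace ℂ X] [CompleteSpace X]
  [TopologicalSpace.SeparableSpace X] (T : X →L[ℂ] X)

def NodeT (T : X →L[ℂ] X) : Type _ := {p : CNode X // (p.c, p.v) ∈ Zs T ∧ 0 < p.r}

/-- The conditions `children` must satisfy relative to the parent node. -/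
def ChildSpec (ε : ℝ) (p : CNode X) (n : ℕ) (q : NodeT T × NodeT T) : Prop :=
  dist q.1.val.c p.c + q.1.val.r < p.r ∧
  dist q.2.val.c p.c + q.2.val.r < p.r ∧
  q.1.val.r + q.2.val.r < dist q.1.val.c q.2.val.c ∧
  q.1.val.r ≤ (2⁻¹ : ℝ) ^ (n + 1) ∧ q.2.val.r ≤ (2⁻¹ : ℝ) ^ (n + 1) ∧
  dist q.1.val.v p.v ≤ ε * (2⁻¹ : ℝ) ^ (n + 1) ∧
  dist q.2.val.v p.v ≤ ε * (2⁻¹ : ℝ) ^ (n + 1)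

lemma exists_children {ε : ℝ} (hε : 0 < ε) (p : NodeT T) (n : ℕ) :
    ∃ q : NodeT T × NodeT T, ChildSpec T ε p.val n q := by
  obtain ⟨pz, hr⟩ := p.property
  have hδ : (0:ℝ) < ε * (2⁻¹ : ℝ) ^ (n + 1) := by positivity
  obtain ⟨q0, q1, hq0, hq1, hne, hd0, hd1, hv0, hv1⟩ :=
    exists_pair T pz (half_pos hr) hδ
  have hdpos : 0 < dist q0.1 q1.1 := dist_pos.2 hne
  set r' : ℝ := min (min (p.val.r / 4) (dist q0.1 q1.1 / 3)) ((2⁻¹ : ℝ) ^ (n + 1)) with hr'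
  have hr'pos : 0 < r' := by
    apply lt_min (lt_min (by linarith) (by linarith))
    positivity
  refine ⟨⟨⟨⟨q0.1, q0.2, r'⟩, hq0, hr'pos⟩, ⟨⟨q1.1, q1.2, r'⟩, hq1, hr'pos⟩⟩, ?_, ?_, ?_, ?_, ?_, ?_, ?_⟩
  · have h1 : r' ≤ p.val.r / 4 := le_trans (min_le_left _ _) (min_le_left _ _)
    simp only; linarith
  · have h1 : r' ≤ p.val.r / 4 := le_trans (min_le_left _ _) (min_le_left _ _)
    simp only; linarith
  · have h1 : r' ≤ dist q0.1 q1.1 / 3 := le_trans (min_le_left _ _) (min_le_right _ _)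
    simp only; linarith
  · exact min_le_right _ _
  · exact min_le_right _ _
  · exact le_of_lt hv0
  · exact le_of_lt hv1

noncomputable def children {ε : ℝ} (hε : 0 < ε) (p : NodeT T) (n : ℕ) : NodeT T × NodeT T :=
  (exists_children T hε p n).choose

lemma children_spec {ε : ℝ} (hε : 0 < ε) (p : NodeT T) (n : ℕ) :
    ChildSpec T ε p.val n (children T hε p n) :=
  (exists_children T hε p n).choose_spec

noncomputable def node {ε : ℝ} (hε : 0 < ε) (p0 : NodeT T) : List Bool → NodeT T
  | [] => p0
  | b :: t => (if b then Prod.snd else Prod.fst) (children T hε (node hε p0 t) t.length)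

section Branch
variable {ε : ℝ} (hε : 0 < ε) (p0 : NodeT T)

noncomputable def bseq (α : ℕ → Bool) (n : ℕ) : NodeT T :=
  node T hε p0 ((List.ofFn fun i : Fin n => α i).reverse)

lemma pre_succ (α : ℕ → Bool) (n : ℕ) :
    (List.ofFn fun i : Fin (n + 1) => α i).reverse
      = α n :: (List.ofFn fun i : Fin n => α i).reverse := by
  rw [List.ofFn_succ']
  simp [List.concat_eq_append]

lemma bseq_zero (α : ℕ → Bool) : bseq T hε p0 α 0 = p0 := rfl

lemma bseq_succ (α : ℕ → Bool) (n : ℕ) :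
    bseq T hε p0 α (n + 1)
      = (if α n then Prod.snd else Prod.fst) (children T hε (bseq T hε p0 α n) n) := by
  unfold bseq
  rw [pre_succ]
  show (if α n then Prod.snd else Prod.fst)
    (children T hε (node T hε p0 _) ((List.ofFn fun i : Fin n => α i).reverse.length)) = _
  rw [List.length_reverse, List.length_ofFn]

lemma bseq_step (α : ℕ → Bool) (n : ℕ) :
    dist (bseq T hε p0 α (n+1)).val.c (bseq T hε p0 α n).val.c
        + (bseq T hε p0 α (n+1)).val.r < (bseq T hε p0 α n).val.r ∧
    (bseq T hε p0 α (n+1)).val.r ≤ (2⁻¹ : ℝ) ^ (n+1) ∧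
    dist (bseq T hε p0 α (n+1)).val.v (bseq T hε p0 α n).val.v ≤ ε * (2⁻¹ : ℝ) ^ (n+1) := by
  obtain ⟨h1, h2, h3, h4, h5, h6, h7⟩ := children_spec T hε (bseq T hε p0 α n) n
  rw [bseq_succ]
  cases α n
  · simp only [Bool.false_eq_true, if_false]
    exact ⟨h1, h4, h6⟩
  · simp only [if_true]
    exact ⟨h2, h5, h7⟩

lemma bseq_r_le (hr0 : p0.val.r ≤ 1) (α : ℕ → Bool) (n : ℕ) :
    (bseq T hε p0 α n).val.r ≤ (2⁻¹ : ℝ) ^ n := by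
  cases n with
  | zero => simpa [bseq_zero] using hr0
  | succ n => exact (bseq_step T hε p0 α n).2.1

lemma bseq_c_nested (α : ℕ → Bool) {n m : ℕ} (hnm : n ≤ m) :
    dist (bseq T hε p0 α m).val.c (bseq T hε p0 α n).val.c
      + (bseq T hε p0 α m).val.r ≤ (bseq T hε p0 α n).val.r := by
  induction m, hnm using Nat.le_induction with
  | base => simp
  | succ m hnm ih =>
    have h1 := (bseq_step T hε p0 α m).1
    have h2 := dist_triangle (bseq T hε p0 α (m+1)).val.c (bseq T hε p0 α m).val.c
      (bseq T hε p0 α n).val.c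
    linarith

lemma bseq_v_est (α : ℕ → Bool) {n m : ℕ} (hnm : n ≤ m) :
    dist (bseq T hε p0 α m).val.v (bseq T hε p0 α n).val.v
      ≤ ε * ((2⁻¹ : ℝ) ^ n - (2⁻¹ : ℝ) ^ m) := by
  induction m, hnm using Nat.le_induction with
  | base => simp
  | succ m hnm ih =>
    have h1 := (bseq_step T hε p0 α m).2.2
    have h2 := dist_triangle (bseq T hε p0 α (m+1)).val.v (bseq T hε p0 α m).val.v
      (bseq T hε p0 α n).val.v
    have h3 : ε * (2⁻¹:ℝ)^(m+1) + ε * ((2⁻¹:ℝ)^n - (2⁻¹:ℝ)^m)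
        = ε * ((2⁻¹:ℝ)^n - (2⁻¹:ℝ)^(m+1)) := by
      rw [pow_succ]; ring
    linarith

lemma bseq_cauchy (hr0 : p0.val.r ≤ 1) (α : ℕ → Bool) :
    CauchySeq (fun n => ((bseq T hε p0 α n).val.c, (bseq T hε p0 α n).val.v)) := by
  apply CauchySeq.prodMk
  · apply cauchySeq_of_le_geometric (2⁻¹ : ℝ) 1 (by norm_num)
    intro n
    have h1 := (bseq_step T hε p0 α n).1
    have h2 := bseq_r_le T hε p0 hr0 α n
    have h3 := (bseq T hε p0 α (n+1)).property.2
    rw [dist_comm]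
    simp only [one_mul]
    linarith
  · apply cauchySeq_of_le_geometric (2⁻¹ : ℝ) ε (by norm_num)
    intro n
    have h1 := (bseq_step T hε p0 α n).2.2
    rw [dist_comm]
    have h4 : ε * (2⁻¹:ℝ)^(n+1) ≤ ε * (2⁻¹:ℝ)^n := by
      apply mul_le_mul_of_nonneg_left _ hε.le
      apply pow_le_pow_of_le_one (by norm_num) (by norm_num) (Nat.le_succ n)
    linarith

noncomputable def glim (hr0 : p0.val.r ≤ 1) (α : ℕ → Bool) : ℂ × X :=
  (cauchySeq_tendsto_of_complete (bseq_cauchy T hε p0 hr0 α)).choose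

variable (hr0 : p0.val.r ≤ 1)

lemma glim_tendsto (α : ℕ → Bool) :
    Filter.Tendsto (fun n => ((bseq T hε p0 α n).val.c, (bseq T hε p0 α n).val.v))
      Filter.atTop (nhds (glim T hε p0 hr0 α)) :=
  (cauchySeq_tendsto_of_complete (bseq_cauchy T hε p0 hr0 α)).choose_spec

lemma glim_tendsto_c (α : ℕ → Bool) :
    Filter.Tendsto (fun n => (bseq T hε p0 α n).val.c)
      Filter.atTop (nhds (glim T hε p0 hr0 α).1) :=
  (continuous_fst.tendsto _).comp (glim_tendsto T hε p0 hr0 α)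

lemma glim_tendsto_v (α : ℕ → Bool) :
    Filter.Tendsto (fun n => (bseq T hε p0 α n).val.v)
      Filter.atTop (nhds (glim T hε p0 hr0 α).2) :=
  (continuous_snd.tendsto _).comp (glim_tendsto T hε p0 hr0 α)

lemma glim_mem_Zs (α : ℕ → Bool) : glim T hε p0 hr0 α ∈ Zs T := by
  apply (isClosed_Zs T).mem_of_tendsto (glim_tendsto T hε p0 hr0 α)
  exact Filter.Eventually.of_forall fun n => (bseq T hε p0 α n).property.1

lemma glim_c_dist (α : ℕ → Bool) (n : ℕ) :
    dist (glim T hε p0 hr0 α).1 (bseq T hε p0 α n).val.c ≤ (bseq T hε p0 α n).val.r := by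
  apply le_of_tendsto ((glim_tendsto_c T hε p0 hr0 α).dist
    (tendsto_const_nhds (x := (bseq T hε p0 α n).val.c)))
  filter_upwards [Filter.eventually_ge_atTop n] with m hm
  have h := bseq_c_nested T hε p0 α hm
  have h2 := (bseq T hε p0 α m).property.2
  linarith

lemma glim_v_dist (α : ℕ → Bool) (n : ℕ) :
    dist (glim T hε p0 hr0 α).2 (bseq T hε p0 α n).val.v ≤ ε * (2⁻¹ : ℝ) ^ n := by
  apply le_of_tendsto ((glim_tendsto_v T hε p0 hr0 α).dist
    (tendsto_const_nhds (x := (bseq T hε p0 α n).val.v)))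
  filter_upwards [Filter.eventually_ge_atTop n] with m hm
  have h := bseq_v_est T hε p0 α hm
  have h2 : (0:ℝ) ≤ (2⁻¹:ℝ) ^ m := by positivity
  nlinarith

end Branch

section Branch2
variable {ε : ℝ} (hε : 0 < ε) (p0 : NodeT T) (hr0 : p0.val.r ≤ 1)

lemma bseq_congr {α β : ℕ → Bool} (n : ℕ) (hagree : ∀ i < n, α i = β i) :
    bseq T hε p0 α n = bseq T hε p0 β n := by
  unfold bseq
  rw [show (List.ofFn fun i : Fin n => α i) = (List.ofFn fun i : Fin n => β i) from
    congrArg List.ofFn (funext fun i => hagree i i.2)]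

lemma glim_c_inj : Function.Injective (fun α => (glim T hε p0 hr0 α).1) := by
  intro α β hEq
  simp only at hEq
  by_contra hne
  have hex : ∃ n, α n ≠ β n := by
    by_contra hall; push_neg at hall; exact hne (funext hall)
  set n := Nat.find hex with hndef
  have hagree : ∀ i < n, α i = β i := fun i hi => by
    have := Nat.find_min hex hi
    simpa using this
  have hn : α n ≠ β n := Nat.find_spec hex
  have hsame : bseq T hε p0 β n = bseq T hε p0 α n :=
    bseq_congr T hε p0 n (fun i hi => (hagree i hi).symm)
  obtain ⟨h1, h2, h3, h4, h5, h6, h7⟩ := children_spec T hε (bseq T hε p0 α n) n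
  have hA := glim_c_dist T hε p0 hr0 α (n+1)
  have hB := glim_c_dist T hε p0 hr0 β (n+1)
  rw [bseq_succ] at hA hB
  rw [hsame] at hB
  set q := children T hε (bseq T hε p0 α n) n
  cases hα : α n <;> cases hβ : β n
  · exact hn (by rw [hα, hβ])
  · rw [hα] at hA; rw [hβ] at hB
    simp only [Bool.false_eq_true, if_false, if_true] at hA hB
    rw [hEq] at hA
    have ht := dist_triangle q.1.val.c (glim T hε p0 hr0 β).1 q.2.val.c
    rw [dist_comm q.1.val.c (glim T hε p0 hr0 β).1] at ht
    linarith
  · rw [hα] at hA; rw [hβ] at hB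
    simp only [Bool.false_eq_true, if_false, if_true] at hA hB
    rw [hEq] at hA
    have ht := dist_triangle q.1.val.c (glim T hε p0 hr0 β).1 q.2.val.c
    rw [dist_comm q.1.val.c (glim T hε p0 hr0 β).1] at ht
    linarith
  · exact hn (by rw [hα, hβ])

lemma glim_continuous : Continuous (glim T hε p0 hr0) := by
  rw [continuous_iff_continuousAt]
  intro α
  rw [ContinuousAt, Metric.tendsto_nhds]
  intro δ hδ
  obtain ⟨n, hn⟩ : ∃ n : ℕ, (2 + 2*ε) * (2⁻¹:ℝ)^n < δ := by
    obtain ⟨n, hn⟩ := exists_pow_lt_of_lt_one (x := δ / (2 + 2*ε)) (by positivity)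
      (by norm_num : (2⁻¹:ℝ) < 1)
    refine ⟨n, ?_⟩
    rw [lt_div_iff₀ (by positivity)] at hn
    linarith
  have hUopen : IsOpen (⋂ i ∈ Finset.range n, {β : ℕ → Bool | β i = α i}) := by
    apply isOpen_biInter_finset
    intro i _
    have hpre : {β : ℕ → Bool | β i = α i} = (fun β : ℕ → Bool => β i) ⁻¹' {α i} := rfl
    rw [hpre]
    exact IsOpen.preimage (continuous_apply i) (isOpen_discrete _)
  have hUmem : α ∈ ⋂ i ∈ Finset.range n, {β : ℕ → Bool | β i = α i} := by
    simp
  filter_upwards [hUopen.mem_nhds hUmem] with β hβ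
  have hagree : ∀ i < n, β i = α i := by
    intro i hi
    have := Set.mem_iInter₂.1 hβ i (Finset.mem_range.2 hi)
    exact this
  have hsame : bseq T hε p0 β n = bseq T hε p0 α n := bseq_congr T hε p0 n hagree
  have hc1 := glim_c_dist T hε p0 hr0 α n
  have hc2 := glim_c_dist T hε p0 hr0 β n
  have hv1 := glim_v_dist T hε p0 hr0 α n
  have hv2 := glim_v_dist T hε p0 hr0 β n
  rw [hsame] at hc2 hv2
  have hrle := bseq_r_le T hε p0 hr0 α n
  have hpow : (0:ℝ) < (2⁻¹:ℝ)^n := by positivity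
  rw [Prod.dist_eq]
  apply max_lt
  · have ht := dist_triangle (glim T hε p0 hr0 β).1 (bseq T hε p0 α n).val.c
      (glim T hε p0 hr0 α).1
    rw [dist_comm (bseq T hε p0 α n).val.c] at ht
    nlinarith
  · have ht := dist_triangle (glim T hε p0 hr0 β).2 (bseq T hε p0 α n).val.v
      (glim T hε p0 hr0 α).2
    rw [dist_comm (bseq T hε p0 α n).val.v] at ht
    nlinarith

end Branch2

def GoodPair (T : X →L[ℂ] X) (KE : Set ℂ × (ℂ → X)) : Prop :=
  KE.1 ⊆ {c : ℂ | ‖c‖ = 1} ∧ Nonempty (↥KE.1 ≃ₜ (ℕ → Bool)) ∧ ContinuousOn KE.2 KE.1 ∧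
  (∀ c ∈ KE.1, ‖KE.2 c‖ = 1) ∧ (∀ c ∈ KE.1, T (KE.2 c) = c • KE.2 c)

lemma exists_field {p : ℂ × X} (hp : p ∈ Zs T) {ε : ℝ} (hε : 0 < ε) :
    ∃ KE : Set ℂ × (ℂ → X), GoodPair T KE ∧ ∃ z ∈ KE.1, dist (KE.2 z) p.2 ≤ ε := by
  set p0 : NodeT T := ⟨⟨p.1, p.2, 1⟩, by simpa using hp, one_pos⟩ with hp0
  have hr0 : p0.val.r ≤ 1 := le_refl 1
  set g := glim T hε p0 hr0 with hg
  set cm : (ℕ → Bool) → ℂ := fun α => (g α).1 with hcm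
  set vm : (ℕ → Bool) → X := fun α => (g α).2 with hvm
  have hgc : Continuous g := glim_continuous T hε p0 hr0
  have hcmc : Continuous cm := continuous_fst.comp hgc
  have hinj : Function.Injective cm := glim_c_inj T hε p0 hr0
  set K : Set ℂ := Set.range cm with hK
  set E : ℂ → X := fun z => vm (Function.invFun cm z) with hEdef
  have hE : ∀ α, E (cm α) = vm α := fun α => by
    simp only [hEdef]
    rw [Function.leftInverse_invFun hinj α]
  have hmemZ : ∀ α, (cm α, vm α) ∈ Z T := fun α => Zs_subset T (glim_mem_Zs T hε p0 hr0 α)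
  have heqvc : Continuous ⇑(Equiv.ofInjective cm hinj) := hcmc.subtype_mk _
  set hhomeo : (ℕ → Bool) ≃ₜ ↥K := heqvc.homeoOfEquivCompactToT2 with hhdef
  have happly : ∀ α, (hhomeo α : ℂ) = cm α := fun α => by
    rw [hhdef, show heqvc.homeoOfEquivCompactToT2 α = (Equiv.ofInjective cm hinj) α from rfl,
      Equiv.ofInjective_apply]
  have hrest : ContinuousOn E K := by
    rw [continuousOn_iff_continuous_restrict]
    have heq : K.domRestrict E = vm ∘ hhomeo.symm := by
      funext z
      have h1 : cm (hhomeo.symm z) = (z : ℂ) := by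
        rw [← happly]
        exact congrArg Subtype.val (hhomeo.apply_symm_apply z)
      have h2 : Function.invFun cm (z : ℂ) = hhomeo.symm z := by
        apply hinj
        rw [h1, Function.invFun_eq ⟨hhomeo.symm z, h1⟩]
      simp only [Set.domRestrict, hEdef, Function.comp_apply, h2]
    rw [heq]
    exact (continuous_snd.comp hgc).comp hhomeo.symm.continuous
  refine ⟨(K, E), ⟨?_, ⟨hhomeo.symm⟩, hrest, ?_, ?_⟩, ?_⟩
  · rintro z ⟨α, rfl⟩
    exact (hmemZ α).1
  · rintro z ⟨α, rfl⟩
    show ‖E (cm α)‖ = 1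
    rw [hE]
    exact (hmemZ α).2.1
  · rintro z ⟨α, rfl⟩
    show T (E (cm α)) = cm α • E (cm α)
    rw [hE]
    exact (hmemZ α).2.2
  · refine ⟨cm (fun _ => false), ⟨_, rfl⟩, ?_⟩
    show dist (E (cm fun _ => false)) p.2 ≤ ε
    rw [hE]
    have := glim_v_dist T hε p0 hr0 (fun _ => false) 0
    rw [bseq_zero] at this
    simpa using this

lemma mem_Zs_normalized {c : ℂ} (hc : ‖c‖ = 1) (hS : c ∉ S T) {x : X} (hx : x ≠ 0)
    (hT : T x = c • x) : (c, ((‖x‖ : ℂ))⁻¹ • x) ∈ Zs T := by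
  have hnx : (‖x‖ : ℂ) ≠ 0 := by
    simpa using norm_ne_zero_iff.2 hx
  refine mem_Zs T hc ?_ ?_ hS
  · rw [norm_smul, norm_inv]
    have : ‖(‖x‖ : ℂ)‖ = ‖x‖ := by
      simp [Complex.norm_real]
    rw [this, inv_mul_cancel₀ (norm_ne_zero_iff.2 hx)]
  · rw [_root_.map_smul, hT, smul_comm]

lemma key_closure {c : ℂ} (hc : ‖c‖ = 1) (hS : c ∉ S T) {x : X} (hT : T x = c • x) :
    x ∈ (Submodule.span ℂ {y : X | ∃ KE : Set ℂ × (ℂ → X),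
      GoodPair T KE ∧ y ∈ KE.2 '' KE.1}).topologicalClosure := by
  set A : Set X := {y : X | ∃ KE : Set ℂ × (ℂ → X), GoodPair T KE ∧ y ∈ KE.2 '' KE.1} with hA
  rcases eq_or_ne x 0 with rfl | hx0
  · exact Submodule.zero_mem _
  have hnx : (‖x‖ : ℂ) ≠ 0 := by simpa using norm_ne_zero_iff.2 hx0
  have hZ : (c, ((‖x‖ : ℂ))⁻¹ • x) ∈ Zs T := mem_Zs_normalized T hc hS hx0 hT
  have hu : ((‖x‖ : ℂ))⁻¹ • x ∈ closure (↑(Submodule.span ℂ A) : Set X) := by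
    rw [Metric.mem_closure_iff]
    intro δ hδ
    obtain ⟨KE, hgood, z, hz, hdist⟩ := exists_field T hZ (half_pos hδ)
    refine ⟨KE.2 z, Submodule.subset_span ⟨KE, hgood, z, hz, rfl⟩, ?_⟩
    rw [dist_comm]
    calc dist (KE.2 z) ((c, ((‖x‖ : ℂ))⁻¹ • x).2) ≤ δ/2 := hdist
    _ < δ := by linarith
  have hu' : ((‖x‖ : ℂ))⁻¹ • x ∈ (Submodule.span ℂ A).topologicalClosure := by
    rw [← SetLike.mem_coe, Submodule.topologicalClosure_coe]
    exact hu
  have hx : x = (‖x‖ : ℂ) • (((‖x‖ : ℂ))⁻¹ • x) := by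
    rw [smul_smul, mul_inv_cancel₀ hnx, one_smul]
  rw [hx]
  exact Submodule.smul_mem _ _ hu'

end CREF

open CREF

/-- If removing any countable set of unimodular eigenvalues leaves a spanning set of
eigenvectors, then the unimodular eigenvectors of `T` can be parametrized by
countably many continuous eigenvector fields defined on Cantor subsets of the unit
circle. -/
theorem countable_removal_implies_cantor_eigenvector_fields
    {X : Type*} [NormedAddCommGroup X] [NormedSpace ℂ X] [CompleteSpace X]
    [TopologicalSpace.SeparableSpace X] (hdim : ¬ FiniteDimensional ℂ X)
    (T : X →L[ℂ] X)
    (h : ∀ D : Set ℂ, D.Countable →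
      Dense (Submodule.span ℂ
        (⋃ c ∈ {c : ℂ | ‖c‖ = 1} \ D, {x : X | T x = c • x}) : Set X)) :
    ∃ (K : ℕ → Set ℂ) (E : ℕ → ℂ → X),
      (∀ i, K i ⊆ {c : ℂ | ‖c‖ = 1}) ∧
      (∀ i, Nonempty (K i ≃ₜ (ℕ → Bool))) ∧
      (∀ i, ContinuousOn (E i) (K i)) ∧
      (∀ i, ∀ c ∈ K i, ‖E i c‖ = 1) ∧
      (∀ i, ∀ c ∈ K i, T (E i c) = c • E i c) ∧
      Dense (Submodule.span ℂ (⋃ i, E i '' K i) : Set X) := by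
  classical
  haveI : SecondCountableTopology X := UniformSpace.secondCountable_of_separable X
  have hnt : Nontrivial X := by
    by_contra hn
    rw [not_nontrivial_iff_subsingleton] at hn
    exact hdim inferInstance
  have hScnt := countable_S T
  set A : Set X := {y : X | ∃ KE : Set ℂ × (ℂ → X), GoodPair T KE ∧ y ∈ KE.2 '' KE.1}
    with hAdef
  -- a default good pair
  have hEig : ∃ c ∈ {c : ℂ | ‖c‖ = 1} \ S T, ∃ x : X, x ≠ 0 ∧ T x = c • x := by
    by_contra hcon
    push_neg at hcon
    have hsub : (↑(Submodule.span ℂ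
        (⋃ c ∈ {c : ℂ | ‖c‖ = 1} \ S T, {x : X | T x = c • x})) : Set X) ⊆ {0} := by
      intro x hx
      rw [SetLike.mem_coe] at hx
      have hle : Submodule.span ℂ
          (⋃ c ∈ {c : ℂ | ‖c‖ = 1} \ S T, {x : X | T x = c • x}) ≤ ⊥ := by
        rw [Submodule.span_le]
        rintro y hy
        simp only [Set.mem_iUnion] at hy
        obtain ⟨c, hc, hy⟩ := hy
        rcases eq_or_ne y 0 with rfl | hy0
        · exact Submodule.zero_mem _
        · exact absurd hy (hcon c hc y hy0)
      have := hle hx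
      simpa using this
    have hdense := (h (S T) hScnt).mono hsub
    obtain ⟨a, b, hab⟩ := exists_pair_ne X
    have hcl : closure ({0} : Set X) = Set.univ := hdense.closure_eq
    have ha : a ∈ closure ({0} : Set X) := by rw [hcl]; trivial
    have hb : b ∈ closure ({0} : Set X) := by rw [hcl]; trivial
    rw [closure_singleton, Set.mem_singleton_iff] at ha hb
    exact hab (ha.trans hb.symm)
  obtain ⟨c0, hc0, x0, hx00, hTx0⟩ := hEig
  have hZ0 : (c0, ((‖x0‖ : ℂ))⁻¹ • x0) ∈ Zs T :=
    mem_Zs_normalized T hc0.1 hc0.2 hx00 hTx0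
  obtain ⟨KE0, hKE0good, -⟩ := exists_field T hZ0 one_pos
  -- density of the span of all good fields
  have hdenseA : Dense (↑(Submodule.span ℂ A) : Set X) := by
    have h1 : (↑(Submodule.span ℂ
        (⋃ c ∈ {c : ℂ | ‖c‖ = 1} \ S T, {x : X | T x = c • x})) : Set X)
        ⊆ ↑((Submodule.span ℂ A).topologicalClosure) := by
      intro x hx
      rw [SetLike.mem_coe] at hx ⊢
      refine Submodule.span_le.2 ?_ hx
      rintro y hy
      simp only [Set.mem_iUnion] at hy
      obtain ⟨c, hc, hy⟩ := hy
      exact key_closure T hc.1 hc.2 hy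
    have h2 : Dense (↑((Submodule.span ℂ A).topologicalClosure) : Set X) :=
      (h (S T) hScnt).mono h1
    rw [dense_iff_closure_eq, ← Submodule.topologicalClosure_coe]
    rw [dense_iff_closure_eq,
      (Submodule.isClosed_topologicalClosure _).closure_eq] at h2
    exact h2
  -- countable dense subset of the span
  obtain ⟨D0s, hD0cnt, hD0dense⟩ :=
    TopologicalSpace.exists_countable_dense ↥(↑(Submodule.span ℂ A) : Set X)
  set D0 : Set X := Subtype.val '' D0s with hD0def
  have hD0sub : D0 ⊆ ↑(Submodule.span ℂ A) := by
    rintro d ⟨ds, _, rfl⟩; exact ds.2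
  have hD0cnt' : D0.Countable := hD0cnt.image _
  have hD0dense' : Dense D0 := by
    rw [dense_iff_closure_eq]
    apply Set.eq_univ_of_univ_subset
    have hsub2 : (↑(Submodule.span ℂ A) : Set X) ⊆ closure D0 := by
      intro y hy
      have : (⟨y, hy⟩ : ↥(↑(Submodule.span ℂ A) : Set X)) ∈ closure D0s :=
        hD0dense _
      rw [closure_subtype] at this
      exact this
    calc Set.univ = closure (↑(Submodule.span ℂ A) : Set X) := hdenseA.closure_eq.symm
    _ ⊆ closure (closure D0) := closure_mono hsub2
    _ = closure D0 := closure_closure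
  -- replace by a countable generating subset of A
  have hrep : ∀ d ∈ D0, ∃ t : Set X, t.Countable ∧ t ⊆ A ∧ d ∈ Submodule.span ℂ t := by
    intro d hd
    have hdmem : d ∈ Submodule.span ℂ A := hD0sub hd
    obtain ⟨cf, hsupp, hsum⟩ := Submodule.mem_span_set.1 hdmem
    exact ⟨↑cf.support, cf.support.countable_toSet, hsupp,
      Submodule.mem_span_set.2 ⟨cf, subset_rfl, hsum⟩⟩
  choose! trep htcnt htsub htspan using hrep
  set A' : Set X := ⋃ d ∈ D0, trep d with hA'def
  have hA'cnt : A'.Countable := hD0cnt'.biUnion htcnt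
  have hA'A : A' ⊆ A := Set.iUnion₂_subset htsub
  have hD0span : D0 ⊆ ↑(Submodule.span ℂ A') := by
    intro d hd
    rw [SetLike.mem_coe]
    exact Submodule.span_mono (Set.subset_biUnion_of_mem hd) (htspan d hd)
  have hdenseA' : Dense (↑(Submodule.span ℂ A') : Set X) := hD0dense'.mono hD0span
  -- choose good pairs
  have hchoice : ∀ a : X, ∃ KE : Set ℂ × (ℂ → X),
      GoodPair T KE ∧ (a ∈ A → a ∈ KE.2 '' KE.1) := by
    intro a
    by_cases ha : a ∈ A
    · obtain ⟨KE, hg, hmem⟩ := ha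
      exact ⟨KE, hg, fun _ => hmem⟩
    · exact ⟨KE0, hKE0good, fun h' => absurd h' ha⟩
  choose κ hκg hκm using hchoice
  set P : Set (Set ℂ × (ℂ → X)) := insert KE0 (κ '' A') with hPdef
  have hPcnt : P.Countable := (hA'cnt.image κ).insert KE0
  have hPne : P.Nonempty := ⟨KE0, Set.mem_insert _ _⟩
  obtain ⟨f, hf⟩ := hPcnt.exists_eq_range hPne
  have hfP : ∀ i, GoodPair T (f i) := by
    intro i
    have hmem : f i ∈ P := by rw [hf]; exact Set.mem_range_self i
    rcases Set.mem_insert_iff.1 hmem with heq | ⟨a, _, heq⟩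
    · rw [heq]; exact hKE0good
    · rw [← heq]; exact hκg a
  refine ⟨fun i => (f i).1, fun i => (f i).2,
    fun i => (hfP i).1, fun i => (hfP i).2.1, fun i => (hfP i).2.2.1,
    fun i => (hfP i).2.2.2.1, fun i => (hfP i).2.2.2.2, ?_⟩
  have hsub3 : A' ⊆ ⋃ i, (f i).2 '' (f i).1 := by
    intro a ha
    have hκa : κ a ∈ P := Set.mem_insert_of_mem _ ⟨a, ha, rfl⟩
    rw [hf] at hκa
    obtain ⟨i, hi⟩ := hκa
    have hamem : a ∈ (κ a).2 '' (κ a).1 := hκm a (hA'A ha)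
    rw [← hi] at hamem
    exact Set.mem_iUnion.2 ⟨i, hamem⟩
  exact hdenseA'.mono (SetLike.coe_subset_coe.2 (Submodule.span_mono hsub3))
end

section
/- Let X be a complex separable infinite-dimensional Banach space and let T be a bounded linear operator on X. Suppose there exists a sequence (K_i)_{i≥1} of subsets of the unit circle 𝕋, each homeomorphic to the Cantor set 2^ω, and a sequence (E_i)_{i≥1} of continuous functions E_i : K_i → S_X into the unit sphere S_X = {x ∈ X : ‖x‖ = 1}, such that T E_i(λ) = λ E_i(λ) for every i ≥ 1 and λ ∈ K_i, and the linear span of {E_i(λ) : i ≥ 1, λ ∈ K_i} is dense in X. Then T has a perfectly spanning set of eigenvectors associated to unimodular eigenvalues. -/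
open MeasureTheory Filter Topology
open scoped ENNReal

section Aux

/-- The compact abelian group on which we put the Haar (coin-tossing) measure. -/
abbrev CantorGroup := ℕ → ZMod 2

/-- The normalized Haar measure on the Cantor group. -/
noncomputable def cantorHaar : Measure CantorGroup := Measure.addHaarMeasure ⊤

instance : IsProbabilityMeasure cantorHaar := by
  constructor
  have := Measure.addHaarMeasure_self (K₀ := (⊤ : TopologicalSpace.PositiveCompacts CantorGroup))
  simpa [cantorHaar] using this

instance : (𝓝[≠] (0 : CantorGroup)).NeBot := by
  rw [← mem_closure_iff_nhdsWithin_neBot, mem_closure_iff]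
  intro U hU h0U
  obtain ⟨I, s, hs, hsub⟩ := (isOpen_pi_iff.1 hU) 0 h0U
  obtain ⟨n, hn⟩ := I.exists_notMem
  refine ⟨Pi.single n 1, hsub ?_, ?_⟩
  · intro i hi
    have : (Pi.single n 1 : CantorGroup) i = 0 :=
      Pi.single_eq_of_ne (by rintro rfl; exact hn hi) 1
    rw [this]; exact (hs i hi).2
  · simp only [Set.mem_compl_iff, Set.mem_singleton_iff]
    intro h
    have := congrFun h n
    simp at this

instance : cantorHaar.IsAddHaarMeasure := Measure.isAddHaarMeasure_addHaarMeasure ⊤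
instance : NullSingletonClass cantorHaar := Measure.IsAddHaarMeasure.nullSingletonClass cantorHaar
instance : cantorHaar.IsOpenPosMeasure :=
  (inferInstance : cantorHaar.IsAddHaarMeasure).toIsOpenPosMeasure

/-- The Cantor group is homeomorphic to the Cantor space `ℕ → Bool`. -/
noncomputable def cantorGroupHomeo : CantorGroup ≃ₜ (ℕ → Bool) :=
  Homeomorph.piCongrRight fun _ =>
    { toEquiv := finTwoEquiv
      continuous_toFun := continuous_of_discreteTopology
      continuous_invFun := continuous_of_discreteTopology }

lemma aux_geom_sum : ∑' i : ℕ, ((2 : ℝ≥0∞)⁻¹) ^ (i + 1) = 1 := by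
  have h : ∀ i : ℕ, ((2 : ℝ≥0∞)⁻¹) ^ (i + 1) = 2⁻¹ * (2⁻¹) ^ i := fun i => by
    rw [pow_succ, mul_comm]
  rw [tsum_congr h, ENNReal.tsum_mul_left, ENNReal.tsum_geometric, ENNReal.one_sub_inv_two]
  exact ENNReal.mul_inv_cancel (by norm_num) (by norm_num)

end Aux

/-- If the unimodular eigenvectors of `T` can be parametrized by countably many
continuous eigenvector fields defined on Cantor subsets of the unit circle, then `T`
has a perfectly spanning set of unimodular eigenvectors. -/
theorem cantor_eigenvector_fields_implies_perfectlySpanning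
    {X : Type*} [NormedAddCommGroup X] [NormedSpace ℂ X] [CompleteSpace X]
    [TopologicalSpace.SeparableSpace X] (hdim : ¬ FiniteDimensional ℂ X)
    (T : X →L[ℂ] X) (K : ℕ → Set ℂ) (E : ℕ → ℂ → X)
    (hK : ∀ i, K i ⊆ {c : ℂ | ‖c‖ = 1})
    (hcantor : ∀ i, Nonempty (K i ≃ₜ (ℕ → Bool)))
    (hcont : ∀ i, ContinuousOn (E i) (K i))
    (hnorm : ∀ i, ∀ c ∈ K i, ‖E i c‖ = 1)
    (heig : ∀ i, ∀ c ∈ K i, T (E i c) = c • E i c)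
    (hdense : Dense (Submodule.span ℂ (⋃ i, E i '' K i) : Set X)) :
    PerfectlySpanning T := by
  -- the parametrizing maps from the Cantor group onto the sets `K i`
  have h : ∀ i, (K i ≃ₜ (ℕ → Bool)) := fun i => (hcantor i).some
  set g : ℕ → CantorGroup → ℂ :=
    fun i x => ((h i).symm (cantorGroupHomeo x) : ℂ) with hg_def
  have hg_cont : ∀ i, Continuous (g i) :=
    fun i => continuous_subtype_val.comp ((h i).symm.continuous.comp cantorGroupHomeo.continuous)
  have hg_mem : ∀ i x, g i x ∈ K i := fun i x => ((h i).symm (cantorGroupHomeo x)).2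
  have hg_inj : ∀ i, Function.Injective (g i) := fun i x y hxy => by
    have : (h i).symm (cantorGroupHomeo x) = (h i).symm (cantorGroupHomeo y) :=
      Subtype.ext hxy
    have := (h i).symm.injective this
    exact cantorGroupHomeo.injective this
  have hg_meas : ∀ i, Measurable (g i) := fun i => (hg_cont i).measurable
  -- the measure
  set σi : ℕ → Measure ℂ := fun i => cantorHaar.map (g i) with hσi_def
  set w : ℕ → ℝ≥0∞ := fun i => ((2 : ℝ≥0∞)⁻¹) ^ (i + 1) with hw_def
  have hw_ne : ∀ i, w i ≠ 0 := fun i => by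
    simp [hw_def]
  set σ : Measure ℂ := Measure.sum (fun i => w i • σi i) with hσ_def
  have hσ_apply : ∀ s : Set ℂ, MeasurableSet s → σ s = ∑' i, w i * σi i s := by
    intro s hs
    rw [hσ_def, Measure.sum_apply _ hs]
    simp [Measure.smul_apply, smul_eq_mul]
  have hσi_apply : ∀ i (s : Set ℂ), MeasurableSet s → σi i s = cantorHaar (g i ⁻¹' s) := by
    intro i s hs
    rw [hσi_def]
    exact Measure.map_apply (hg_meas i) hs
  have hcircle_meas : MeasurableSet {c : ℂ | ‖c‖ = 1} :=
    (isClosed_eq continuous_norm continuous_const).measurableSet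
  have hσi_circle : ∀ i, σi i {c : ℂ | ‖c‖ = 1} = 1 := by
    intro i
    rw [hσi_apply i _ hcircle_meas]
    have : g i ⁻¹' {c : ℂ | ‖c‖ = 1} = Set.univ :=
      Set.eq_univ_of_forall fun x => hK i (hg_mem i x)
    rw [this]
    exact measure_univ
  have hσ_prob : IsProbabilityMeasure σ := by
    constructor
    rw [hσ_apply _ MeasurableSet.univ]
    have : ∀ i, σi i Set.univ = 1 := fun i => by
      rw [hσi_apply i _ MeasurableSet.univ]; simp
    simp only [this, mul_one]
    exact aux_geom_sum
  refine ⟨σ, hσ_prob, ?_, ?_, ?_⟩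
  · -- atomless
    intro c
    rw [hσ_apply _ (measurableSet_singleton c)]
    have : ∀ i, σi i {c} = 0 := by
      intro i
      rw [hσi_apply i _ (measurableSet_singleton c)]
      have hss : (g i ⁻¹' {c}).Subsingleton := fun x hx y hy =>
        hg_inj i (hx.trans hy.symm)
      exact hss.measure_zero cantorHaar
    simp [this]
  · -- supported on the circle
    rw [hσ_apply _ hcircle_meas]
    simp only [hσi_circle, mul_one]
    exact aux_geom_sum
  · -- spanning
    intro A hAcirc hAmeas hA1
    haveI := hσ_prob
    have hAc : σ Aᶜ = 0 := (prob_compl_eq_zero_iff hAmeas).2 hA1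
    have hσiAc : ∀ i, σi i Aᶜ = 0 := by
      intro i
      rw [hσ_apply _ hAmeas.compl] at hAc
      have := (ENNReal.tsum_eq_zero.1 hAc) i
      rcases mul_eq_zero.1 this with h0 | h0
      · exact absurd h0 (hw_ne i)
      · exact h0
    -- every full-measure set meets every relatively open subset of `K i`
    have hclo : ∀ i, K i ⊆ closure (A ∩ K i) := by
      intro i c hc
      rw [mem_closure_iff]
      intro U hU hcU
      by_contra hne
      rw [Set.not_nonempty_iff_eq_empty] at hne
      have hsub : g i ⁻¹' U ⊆ g i ⁻¹' Aᶜ := by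
        intro x hx
        simp only [Set.mem_preimage, Set.mem_compl_iff]
        intro hmem
        have : g i x ∈ U ∩ (A ∩ K i) := ⟨hx, hmem, hg_mem i x⟩
        rw [hne] at this
        exact this
      have hpos : 0 < cantorHaar (g i ⁻¹' U) := by
        refine (hU.preimage (hg_cont i)).measure_pos cantorHaar ?_
        refine ⟨cantorGroupHomeo.symm ((h i) ⟨c, hc⟩), ?_⟩
        simp only [Set.mem_preimage, hg_def, Homeomorph.apply_symm_apply,
          Homeomorph.symm_apply_apply]
        exact hcU
      have hle : cantorHaar (g i ⁻¹' U) ≤ cantorHaar (g i ⁻¹' Aᶜ) := measure_mono hsub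
      rw [← hσi_apply i _ hAmeas.compl, hσiAc i] at hle
      exact absurd (le_antisymm hle bot_le) (ne_of_gt hpos)
    -- the closed span of eigenvectors over `A` contains all `E i '' K i`
    set M := (Submodule.span ℂ (⋃ c ∈ A, {x : X | T x = c • x})).topologicalClosure with hM_def
    have hEM : ∀ i, ∀ c ∈ K i, E i c ∈ M := by
      intro i c hc
      have h1 : E i '' (A ∩ K i) ⊆ (M : Set X) := by
        rintro _ ⟨d, ⟨hdA, hdK⟩, rfl⟩
        apply Submodule.le_topologicalClosure
        apply Submodule.subset_span
        exact Set.mem_biUnion hdA (heig i d hdK)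
      have h2 : E i c ∈ closure (E i '' (A ∩ K i)) :=
        ((hcont i c hc).mono Set.inter_subset_right).mem_closure_image (hclo i hc)
      exact closure_minimal h1 (Submodule.isClosed_topologicalClosure _) h2
    have hsub : (Submodule.span ℂ (⋃ i, E i '' K i) : Set X) ⊆ (M : Set X) := by
      refine Submodule.span_le.2 ?_
      rintro _ ⟨s, ⟨i, rfl⟩, ⟨c, hc, rfl⟩⟩
      exact hEM i c hc
    have hMall : ∀ x : X, x ∈ M := by
      intro x
      have hx : x ∈ closure (Submodule.span ℂ (⋃ i, E i '' K i) : Set X) := by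
        rw [hdense.closure_eq]; trivial
      exact closure_minimal hsub (Submodule.isClosed_topologicalClosure _) hx
    rw [dense_iff_closure_eq, ← Submodule.topologicalClosure_coe]
    exact Set.eq_univ_of_forall hMall
end

section
/- Let X be a complex separable infinite-dimensional Banach space and let T be a bounded linear operator on X which has a perfectly spanning set of eigenvectors associated to unimodular eigenvalues. Then T satisfies assumption (H): there exists a sequence (x_n)_{n≥1} of eigenvectors of T with T x_n = λ_n x_n, |λ_n| = 1, λ_n = e^{2iπθ_n} with θ_n ∈ (0,1], ‖x_n‖ = 1, such that: (1) whenever (λ_{n_1},…,λ_{n_k}) is a finite family of distinct elements of {λ_n : n ≥ 1}, the family (θ_{n_1},…,θ_{n_k}) consists of ℚ-linearly independent irrational numbers; (2) the linear span of {x_n : n ≥ 1} is dense in X; (3) for any finite subset F of σ_p(T)∩𝕋, the closure of {x_n : n ≥ 1} equals the closure of {x_n : n ∈ A_F}, where A_F = {k ≥ 1 : λ_k ∉ F}. -/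
open MeasureTheory Filter Topology

noncomputable def evH (θ : ℝ) : ℂ := Complex.exp ((2 * Real.pi * θ : ℝ) * Complex.I)

lemma evH_norm (θ : ℝ) : ‖evH θ‖ = 1 := by
  simp [evH, Complex.norm_exp]

lemma evH_inj {θ₁ θ₂ : ℝ} (h1 : θ₁ ∈ Set.Ioc (0:ℝ) 1) (h2 : θ₂ ∈ Set.Ioc (0:ℝ) 1)
    (h : evH θ₁ = evH θ₂) : θ₁ = θ₂ := by
  rw [evH, evH, Complex.exp_eq_exp_iff_exists_int] at h
  obtain ⟨n, hn⟩ := h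
  have hn' : ((2*Real.pi*θ₁ : ℝ) : ℂ) = ((2*Real.pi*θ₂ : ℝ) : ℂ) + (n:ℂ) * (2*(Real.pi:ℂ)) := by
    apply mul_right_cancel₀ Complex.I_ne_zero
    rw [add_mul]
    convert hn using 2
    ring
  have hr : (2*Real.pi*θ₁ : ℝ) = 2*Real.pi*θ₂ + (n:ℝ) * (2*Real.pi) := by
    exact_mod_cast hn'
  have hpi := Real.pi_pos
  have hθ : θ₁ = θ₂ + (n:ℝ) := by
    have h2 : (2*Real.pi) * θ₁ = (2*Real.pi) * (θ₂ + n) := by ring_nf; ring_nf at hr; linarith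
    exact mul_left_cancel₀ (by positivity) h2
  have hn0 : n = 0 := by
    have hlt : |(n:ℝ)| < 1 := by
      rw [abs_lt]
      constructor <;> nlinarith [h1.1, h1.2, h2.1, h2.2]
    have h3 : |n| < 1 := by exact_mod_cast (by rwa [← Int.cast_abs, ← Int.cast_one, Int.cast_lt] at hlt)
    rw [abs_lt] at h3; omega
  simp [hn0] at hθ
  exact hθ

lemma evH_surj {c : ℂ} (hc : ‖c‖ = 1) : ∃ θ ∈ Set.Ioc (0:ℝ) 1, c = evH θ := by
  have habs : ‖c‖ = 1 := hc
  have hc' : c = Complex.exp (c.arg * Complex.I) := by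
    conv_lhs => rw [← Complex.norm_mul_exp_arg_mul_I c]
    rw [habs]
    simp
  have hpi := Real.pi_pos
  have harg1 : -Real.pi < c.arg := Complex.neg_pi_lt_arg c
  have harg2 : c.arg ≤ Real.pi := Complex.arg_le_pi c
  rcases le_or_gt c.arg 0 with h0 | h0
  · refine ⟨c.arg / (2*Real.pi) + 1, ⟨?_, ?_⟩, ?_⟩
    · have : (-1 : ℝ) < c.arg / (2*Real.pi) := by
        rw [lt_div_iff₀ (by positivity)]
        nlinarith
      linarith
    · have : c.arg / (2*Real.pi) ≤ 0 := by
        rw [div_le_iff₀ (by positivity)]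
        nlinarith
      linarith
    · rw [evH]
      have he : (2 * Real.pi * (c.arg / (2*Real.pi) + 1) : ℝ) = c.arg + 2*Real.pi := by
        field_simp
      rw [he]
      push_cast
      rw [add_mul, Complex.exp_add]
      rw [show ((2:ℂ) * (Real.pi:ℂ) * Complex.I) = 2*Real.pi*Complex.I from rfl, Complex.exp_two_pi_mul_I, mul_one]
      exact hc'
  · refine ⟨c.arg / (2*Real.pi), ⟨by positivity, ?_⟩, ?_⟩
    · rw [div_le_one (by positivity)]; nlinarith
    · rw [evH]
      have he : (2 * Real.pi * (c.arg / (2*Real.pi)) : ℝ) = c.arg := by field_simp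
      rw [he]
      exact hc'


/-- `S` is a `ℚ`-linearly independent set of reals. -/
def IndepSet (S : Set ℝ) : Prop := LinearIndependent ℚ (fun r : S => (r : ℝ))

lemma IndepSet.congr {S S' : Set ℝ} (h : S = S') (hi : IndepSet S) : IndepSet S' := h ▸ hi

lemma IndepSet.subset {S S' : Set ℝ} (h : S' ⊆ S) (hi : IndepSet S) : IndepSet S' :=
  LinearIndepOn.mono (v := id) hi h

/-- Sequential freshness of a list of reals over a base set. -/
def FreshL (Θ : Set ℝ) : List ℝ → Prop
  | [] => True
  | θ :: t => θ ∉ Submodule.span ℚ ({1} ∪ Θ) ∧ FreshL (insert θ Θ) t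

lemma freshL_append {l₁ l₂ : List ℝ} {Θ : Set ℝ} :
    FreshL Θ (l₁ ++ l₂) ↔ FreshL Θ l₁ ∧ FreshL (Θ ∪ {r | r ∈ l₁}) l₂ := by
  induction l₁ generalizing Θ with
  | nil => simp [FreshL]
  | cons a t ih =>
    have hset : (insert a Θ) ∪ {r | r ∈ t} = Θ ∪ {r | r ∈ a :: t} := by
      ext r; simp; tauto
    constructor
    · rintro ⟨h1, h2⟩
      replace h2 : FreshL (insert a Θ) (t ++ l₂) := h2
      rw [ih] at h2
      rw [← hset]
      exact ⟨⟨h1, h2.1⟩, h2.2⟩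
    · rintro ⟨⟨h1, h2⟩, h3⟩
      rw [← hset] at h3
      exact ⟨h1, ih.mpr ⟨h2, h3⟩⟩

lemma freshL_notMem {l : List ℝ} {Θ : Set ℝ} (h : FreshL Θ l) : ∀ θ ∈ l, θ ∉ Θ := by
  induction l generalizing Θ with
  | nil => simp
  | cons a t ih =>
    obtain ⟨h1, h2⟩ := h
    intro θ hθ hΘ
    rcases List.mem_cons.mp hθ with rfl | hm
    · exact h1 (Submodule.subset_span (Set.mem_union_right _ hΘ))
    · exact ih h2 θ hm (Set.mem_insert_iff.mpr (Or.inr hΘ))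

lemma freshL_nodup {l : List ℝ} {Θ : Set ℝ} (h : FreshL Θ l) : l.Nodup := by
  induction l generalizing Θ with
  | nil => simp
  | cons a t ih =>
    obtain ⟨h1, h2⟩ := h
    refine List.nodup_cons.mpr ⟨fun hm => ?_, ih h2⟩
    exact freshL_notMem h2 a hm (Set.mem_insert _ _)

lemma freshL_irrational {l : List ℝ} {Θ : Set ℝ} (h : FreshL Θ l) : ∀ θ ∈ l, Irrational θ := by
  induction l generalizing Θ with
  | nil => simp
  | cons a t ih =>
    obtain ⟨h1, h2⟩ := h
    intro θ hθ
    rcases List.mem_cons.mp hθ with rfl | hm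
    · rintro ⟨q, rfl⟩
      apply h1
      have : ((q:ℝ)) = q • (1:ℝ) := by simp
      rw [this]
      exact Submodule.smul_mem _ _ (Submodule.subset_span (Set.mem_union_left _ rfl))
    · exact ih h2 θ hm

lemma freshL_indep {l : List ℝ} {Θ : Set ℝ} (hΘ : IndepSet ({1} ∪ Θ)) (h : FreshL Θ l) :
    IndepSet ({1} ∪ (Θ ∪ {r | r ∈ l})) := by
  induction l generalizing Θ with
  | nil => exact hΘ.congr (by ext r; simp)
  | cons a t ih =>
    obtain ⟨h1, h2⟩ := h
    have ha : a ∉ ({1} ∪ Θ : Set ℝ) := fun hm => h1 (Submodule.subset_span hm)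
    have hins : IndepSet ({1} ∪ insert a Θ) := by
      have : IndepSet (insert a ({1} ∪ Θ)) := by
        unfold IndepSet
        exact (linearIndepOn_insert (f := id) ha).mpr ⟨hΘ, by simpa using h1⟩
      exact this.congr (by ext r; simp only [Set.mem_union, Set.mem_insert_iff, Set.mem_singleton_iff]; tauto)
    exact (ih hins h2).congr (by ext r; simp only [Set.mem_union, Set.mem_insert_iff, Set.mem_singleton_iff, Set.mem_setOf_eq, List.mem_cons]; tauto)


section Construction

variable {X : Type*} [NormedAddCommGroup X] [NormedSpace ℂ X]

/-- Abstract construction of the assumption (H) sequence. -/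
lemma assumptionH_construction (T : X →L[ℂ] X) (Q : X → ℝ → Prop)
    (hQ : ∀ u θ, Q u θ → ‖u‖ = 1 ∧ θ ∈ Set.Ioc (0:ℝ) 1 ∧ T u = evH θ • u)
    (hfresh : ∀ u θ, Q u θ → ∀ ε : ℝ, 0 < ε → ∀ Θ : Set ℝ, Θ.Countable →
      ∃ u' θ', Q u' θ' ∧ θ' ∉ Submodule.span ℚ ({1} ∪ Θ) ∧ ‖u' - u‖ ≤ ε)
    (hcombo : ∀ (y : X) (δ : ℝ), 0 < δ →
      ∃ l : List (ℂ × X × ℝ), (∀ e ∈ l, Q e.2.1 e.2.2) ∧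
        ‖y - (l.map fun e => e.1 • e.2.1).sum‖ < δ)
    (hnt : ∃ y : X, ‖y‖ = 1)
    (ySeq : ℕ → X) (hySeq : DenseRange ySeq) :
    ∃ (x : ℕ → X) (lam : ℕ → ℂ) (θ : ℕ → ℝ),
      (∀ n, T (x n) = lam n • x n) ∧
      (∀ n, ‖lam n‖ = 1) ∧
      (∀ n, θ n ∈ Set.Ioc (0 : ℝ) 1) ∧
      (∀ n, lam n = Complex.exp ((2 * Real.pi * θ n : ℝ) * Complex.I)) ∧
      (∀ n, ‖x n‖ = 1) ∧
      (∀ s : Finset ℕ, Set.InjOn lam ↑s →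
        (∀ n ∈ s, Irrational (θ n)) ∧ LinearIndependent ℚ (fun n : s => θ (n : ℕ))) ∧
      Dense (Submodule.span ℂ (Set.range x) : Set X) ∧
      (∀ F : Set ℂ, F.Finite →
        F ⊆ {c : ℂ | ‖c‖ = 1 ∧ ∃ v : X, v ≠ 0 ∧ T v = c • v} →
        closure (Set.range x) = closure (x '' {k : ℕ | lam k ∉ F})) := by
  classical
  -- replacement lemma: freshen a combination
  have hrepl : ∀ l : List (ℂ × X × ℝ), (∀ e ∈ l, Q e.2.1 e.2.2) →
      ∀ Θ : Set ℝ, Θ.Countable → ∀ η : ℝ, 0 < η →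
      ∃ l' : List (ℂ × X × ℝ), (∀ e ∈ l', Q e.2.1 e.2.2) ∧
        FreshL Θ (l'.map fun e => e.2.2) ∧
        ‖(l'.map fun e => e.1 • e.2.1).sum - (l.map fun e => e.1 • e.2.1).sum‖ ≤ η := by
    intro l
    induction l with
    | nil =>
      intro _ Θ _ η hη
      exact ⟨[], by simp, trivial, by simp [le_of_lt hη]⟩
    | cons e t ih =>
      intro hl Θ hΘ η hη
      obtain ⟨a, u, θ⟩ := e
      have hQu : Q u θ := hl _ List.mem_cons_self
      have hε : (0:ℝ) < η / (2 * (‖a‖ + 1)) := by positivity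
      obtain ⟨u', θ', hQ', hfr', hdist'⟩ := hfresh u θ hQu _ hε Θ hΘ
      obtain ⟨t', ht'Q, ht'F, ht'S⟩ := ih (fun e he => hl e (List.mem_cons_of_mem _ he))
        (insert θ' Θ) (hΘ.insert _) (η/2) (by positivity)
      refine ⟨(a, u', θ') :: t', ?_, ⟨hfr', ht'F⟩, ?_⟩
      · intro e he
        rcases List.mem_cons.mp he with rfl | he'
        · exact hQ'
        · exact ht'Q e he'
      · simp only [List.map_cons, List.sum_cons]
        have : a • u' + (t'.map fun e => e.1 • e.2.1).sum -
            (a • u + (t.map fun e => e.1 • e.2.1).sum) =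
            a • (u' - u) + ((t'.map fun e => e.1 • e.2.1).sum -
              (t.map fun e => e.1 • e.2.1).sum) := by
          rw [smul_sub]; abel
        rw [this]
        have h1 : ‖a • (u' - u)‖ ≤ η / 2 := by
          rw [norm_smul]
          have hna : ‖a‖ ≤ ‖a‖ + 1 := by linarith
          calc ‖a‖ * ‖u' - u‖ ≤ (‖a‖ + 1) * (η / (2 * (‖a‖ + 1))) := by
                apply mul_le_mul hna hdist' (norm_nonneg _) (by positivity)
            _ = η / 2 := by field_simp
        calc ‖_ + _‖ ≤ _ + _ := norm_add_le _ _
          _ ≤ η / 2 + η / 2 := add_le_add h1 ht'S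
          _ = η := by ring
  -- fresh combination lemma
  have hcombo' : ∀ Θ : Set ℝ, Θ.Countable → ∀ (y : X) (δ : ℝ), 0 < δ →
      ∃ l : List (ℂ × X × ℝ), (∀ e ∈ l, Q e.2.1 e.2.2) ∧
        FreshL Θ (l.map fun e => e.2.2) ∧
        ‖y - (l.map fun e => e.1 • e.2.1).sum‖ < δ := by
    intro Θ hΘ y δ hδ
    obtain ⟨l, hlQ, hlS⟩ := hcombo y (δ/2) (by positivity)
    obtain ⟨l', hl'Q, hl'F, hl'S⟩ := hrepl l hlQ Θ hΘ (δ/2) (by positivity)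
    refine ⟨l', hl'Q, hl'F, ?_⟩
    calc ‖y - (l'.map fun e => e.1 • e.2.1).sum‖
        ≤ ‖y - (l.map fun e => e.1 • e.2.1).sum‖ +
          ‖(l'.map fun e => e.1 • e.2.1).sum - (l.map fun e => e.1 • e.2.1).sum‖ := by
          rw [← norm_neg ((l'.map fun e => e.1 • e.2.1).sum - _)]
          convert norm_add_le _ _ using 2
          · rfl
          abel
      _ < δ/2 + δ/2 := by apply add_lt_add_of_lt_of_le hlS hl'S
      _ = δ := by ring
  -- seed
  obtain ⟨y0, hy0⟩ := hnt
  obtain ⟨l0, hl0Q, hl0S⟩ := hcombo y0 (1/2) (by norm_num)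
  have hl0ne : l0 ≠ [] := by
    rintro rfl
    simp only [List.map_nil, List.sum_nil, sub_zero] at hl0S
    rw [hy0] at hl0S
    norm_num at hl0S
  obtain ⟨e0, he0⟩ := List.exists_mem_of_ne_nil l0 hl0ne
  obtain ⟨u0, θ0, hQu0, hfr0, _⟩ := hfresh _ _ (hl0Q e0 he0) 1 one_pos ∅ Set.countable_empty
  set Inv : List (X × ℝ) → Prop :=
    fun L => (∀ e ∈ L, Q e.1 e.2) ∧ FreshL ∅ (L.map Prod.snd) with hInvDef
  have hInv0 : Inv [(u0, θ0)] := by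
    constructor
    · intro e he
      rw [List.mem_singleton] at he
      subst he
      exact hQu0
    · exact ⟨hfr0, trivial⟩
  set Post : ((ℕ × ℕ) ⊕ (ℕ × ℕ)) → List (X × ℝ) → List (X × ℝ) → Prop := fun tk L b =>
    (∀ j p : ℕ, tk = Sum.inl (j,p) →
      ∃ z ∈ Submodule.span ℂ {v : X | ∃ θ', (v,θ') ∈ b}, ‖ySeq j - z‖ < 1/((p:ℝ)+1)) ∧
    (∀ k q : ℕ, tk = Sum.inr (k,q) → ∀ h : k < L.length,
      ∃ e ∈ b, ‖e.1 - (L[k]'h).1‖ ≤ 1/((q:ℝ)+1)) with hPostDef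
  have hstep : ∀ (L : List (X × ℝ)) (tk : (ℕ × ℕ) ⊕ (ℕ × ℕ)), Inv L → L ≠ [] →
      ∃ b : List (X × ℝ), b ≠ [] ∧ Inv (L ++ b) ∧ Post tk L b := by
    intro L tk hInv hne
    have hΘc : ({r | r ∈ L.map Prod.snd} : Set ℝ).Countable :=
      (L.map Prod.snd).finite_toSet.countable
    have happend : ∀ b : List (X × ℝ), (∀ e ∈ b, Q e.1 e.2) →
        FreshL {r | r ∈ L.map Prod.snd} (b.map Prod.snd) → Inv (L ++ b) := by
      intro b hbQ hbF
      refine ⟨fun e he => ?_, ?_⟩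
      · rcases List.mem_append.mp he with h | h
        · exact hInv.1 e h
        · exact hbQ e h
      · rw [List.map_append, freshL_append]
        refine ⟨hInv.2, ?_⟩
        rwa [Set.empty_union]
    rcases tk with ⟨j, p⟩ | ⟨k, q⟩
    · -- approximation task
      obtain ⟨lc, hlcQ, hlcF, hlcS⟩ := hcombo' _ hΘc (ySeq j) (1/((p:ℝ)+1)) (by positivity)
      obtain ⟨eL, heL⟩ := List.exists_mem_of_ne_nil L hne
      have hΘ2 : ({r | r ∈ L.map Prod.snd} ∪ {r | r ∈ lc.map fun e => e.2.2} : Set ℝ).Countable :=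
        hΘc.union (lc.map fun e => e.2.2).finite_toSet.countable
      obtain ⟨u', θ', hQ', hfr', _⟩ := hfresh eL.1 eL.2 (hInv.1 eL heL) 1 one_pos _ hΘ2
      refine ⟨(lc.map fun e => (e.2.1, e.2.2)) ++ [(u', θ')], by simp, happend _ ?_ ?_, ?_, ?_⟩
      · intro e he
        rcases List.mem_append.mp he with h | h
        · obtain ⟨e', he', rfl⟩ := List.mem_map.mp h
          exact hlcQ e' he'
        · rw [List.mem_singleton] at h
          subst h
          exact hQ'
      · rw [List.map_append, freshL_append]
        constructor
        · rw [List.map_map]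
          exact hlcF
        · refine ⟨?_, trivial⟩
          convert hfr' using 4
          ext r
          simp
      · -- Post 1
        intro j' p' heq
        injection heq with h'
        injection h' with h1 h2
        subst h1; subst h2
        refine ⟨(lc.map fun e => e.1 • e.2.1).sum, ?_, hlcS⟩
        apply list_sum_mem
        intro z hz
        obtain ⟨e, he, rfl⟩ := List.mem_map.mp hz
        apply Submodule.smul_mem
        apply Submodule.subset_span
        exact ⟨e.2.2, List.mem_append_left _ (List.mem_map.mpr ⟨e, he, rfl⟩)⟩
      · intro k' q' heq
        exact absurd heq (by simp)
    · -- closure task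
      by_cases hk : k < L.length
      · obtain ⟨u', θ', hQ', hfr', hd'⟩ := hfresh (L[k]'hk).1 (L[k]'hk).2
          (hInv.1 _ (List.getElem_mem hk)) (1/((q:ℝ)+1)) (by positivity) _ hΘc
        refine ⟨[(u', θ')], by simp, happend _ ?_ ⟨hfr', trivial⟩, ?_, ?_⟩
        · intro e he; rw [List.mem_singleton] at he; subst he; exact hQ'
        · intro j' p' heq; exact absurd heq (by simp)
        · intro k' q' heq h
          injection heq with h'
          injection h' with h1 h2
          subst h1; subst h2
          exact ⟨(u', θ'), List.mem_singleton_self _, hd'⟩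
      · obtain ⟨eL, heL⟩ := List.exists_mem_of_ne_nil L hne
        obtain ⟨u', θ', hQ', hfr', _⟩ := hfresh eL.1 eL.2 (hInv.1 eL heL) 1 one_pos _ hΘc
        refine ⟨[(u', θ')], by simp, happend _ ?_ ⟨hfr', trivial⟩, ?_, ?_⟩
        · intro e he; rw [List.mem_singleton] at he; subst he; exact hQ'
        · intro j' p' heq; exact absurd heq (by simp)
        · intro k' q' heq h
          injection heq with h'
          injection h' with h1 h2
          subst h1
          exact absurd h hk
  -- the recursive construction
  choose bF hbne hbInv hbPost using hstep
  set tsk : ℕ → (ℕ × ℕ) ⊕ (ℕ × ℕ) := fun n => Denumerable.ofNat _ n.unpair.1 with htskDef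
  have htsk : ∀ (t : (ℕ × ℕ) ⊕ (ℕ × ℕ)) (n₀ : ℕ), ∃ n, n₀ ≤ n ∧ tsk n = t := by
    intro t n₀
    refine ⟨Nat.pair (Encodable.encode t) n₀, Nat.right_le_pair _ _, ?_⟩
    rw [htskDef]
    simp only [Nat.unpair_pair]
    exact Denumerable.ofNat_encode t
  let aux : ℕ → {L : List (X × ℝ) // Inv L ∧ L ≠ []} := fun n =>
    Nat.rec ⟨[(u0, θ0)], hInv0, by simp⟩
      (fun n p => ⟨p.1 ++ bF p.1 (tsk n) p.2.1 p.2.2,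
        hbInv p.1 (tsk n) p.2.1 p.2.2,
        fun hc => p.2.2 (List.append_eq_nil_iff.mp hc).1⟩) n
  have aux_succ : ∀ n, (aux (n+1)).1 =
      (aux n).1 ++ bF (aux n).1 (tsk n) (aux n).2.1 (aux n).2.2 := fun n => rfl
  have hlen : ∀ n, n < (aux n).1.length := by
    intro n
    induction n with
    | zero => simp [aux]
    | succ n ih =>
      rw [aux_succ, List.length_append]
      have h1 : 1 ≤ (bF (aux n).1 (tsk n) (aux n).2.1 (aux n).2.2).length :=
        List.length_pos_iff.mpr (hbne (aux n).1 (tsk n) (aux n).2.1 (aux n).2.2)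
      omega
  have hpref : ∀ m n, m ≤ n → (aux m).1 <+: (aux n).1 := by
    intro m n h
    induction n with
    | zero =>
      cases Nat.le_zero.mp h
      exact List.prefix_refl _
    | succ n ih =>
      rcases Nat.lt_or_ge m (n+1) with h' | h'
      · exact (ih (Nat.lt_succ_iff.mp h')).trans ⟨_, (aux_succ n).symm⟩
      · have hm : m = n+1 := le_antisymm h h'
        subst hm
        exact List.prefix_refl _
  have hlenmono : ∀ m n, m ≤ n → (aux m).1.length ≤ (aux n).1.length :=
    fun m n h => (hpref m n h).length_le
  have hlen' : ∀ n m, n < m → n < (aux m).1.length :=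
    fun n m h => lt_of_lt_of_le (hlen m) (le_refl _) |> fun _ => lt_trans h (hlen m)
  let entry : ℕ → X × ℝ := fun n => (aux (n+1)).1[n]'(hlen' n (n+1) (Nat.lt_succ_self n))
  have hentry : ∀ n m (h : n < (aux m).1.length), (aux m).1[n]'h = entry n := by
    intro n m h
    rcases le_total m (n+1) with hm | hm
    · exact (hpref m (n+1) hm).getElem h
    · exact ((hpref (n+1) m hm).getElem (hlen' n (n+1) (Nat.lt_succ_self n))).symm
  set x : ℕ → X := fun n => (entry n).1 with hxDef
  set θf : ℕ → ℝ := fun n => (entry n).2 with hθDef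
  set lam : ℕ → ℂ := fun n => evH (θf n) with hlamDef
  have hQx : ∀ n, Q (x n) (θf n) := by
    intro n
    have hmem : entry n ∈ (aux (n+1)).1 := List.getElem_mem _
    exact (aux (n+1)).2.1.1 _ hmem
  have hIoc : ∀ n, θf n ∈ Set.Ioc (0:ℝ) 1 := fun n => (hQ _ _ (hQx n)).2.1
  have hnorm1 : ∀ n, ‖x n‖ = 1 := fun n => (hQ _ _ (hQx n)).1
  have hEig : ∀ n, T (x n) = lam n • x n := fun n => (hQ _ _ (hQx n)).2.2
  -- injectivity of θf
  have hθne : ∀ n m, n < m → θf n ≠ θf m := by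
    intro n m hnm
    have hn : n < (aux (m+1)).1.length := hlen' n (m+1) (lt_trans hnm (Nat.lt_succ_self m))
    have hm : m < (aux (m+1)).1.length := hlen' m (m+1) (Nat.lt_succ_self m)
    have hnd : ((aux (m+1)).1.map Prod.snd).Nodup := freshL_nodup (aux (m+1)).2.1.2
    have hne2 : ((aux (m+1)).1.map Prod.snd)[n]'(by simpa using hn) ≠
        ((aux (m+1)).1.map Prod.snd)[m]'(by simpa using hm) := by
      intro hcon
      have := (hnd.getElem_inj_iff).mp hcon
      omega
    have e1 : ((aux (m+1)).1.map Prod.snd)[n]'(by simpa using hn) = θf n := by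
      rw [List.getElem_map, hentry n (m+1) hn]
    have e2 : ((aux (m+1)).1.map Prod.snd)[m]'(by simpa using hm) = θf m := by
      rw [List.getElem_map, hentry m (m+1) hm]
    rw [e1, e2] at hne2
    exact hne2
  have hθinj : Function.Injective θf := by
    intro n m hnm
    rcases lt_trichotomy n m with h | h | h
    · exact absurd hnm (hθne n m h)
    · exact h
    · exact absurd hnm.symm (hθne m n h)
  have hlaminj : Function.Injective lam := by
    intro n m hnm
    exact hθinj (evH_inj (hIoc n) (hIoc m) hnm)
  -- membership of θ values
  have hθmem : ∀ n m, n < m → θf n ∈ {r : ℝ | r ∈ (aux m).1.map Prod.snd} := by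
    intro n m h
    have hn : n < (aux m).1.length := hlen' n m h
    have : entry n ∈ (aux m).1 := by
      rw [← hentry n m hn]
      exact List.getElem_mem _
    exact List.mem_map_of_mem (f := Prod.snd) this
  -- irrationality
  have hirr : ∀ n, Irrational (θf n) := by
    intro n
    have hmem' : entry n ∈ (aux (n+1)).1 := by
      rw [← hentry n (n+1) (hlen' n (n+1) (Nat.lt_succ_self n))]
      exact List.getElem_mem _
    exact freshL_irrational (aux (n+1)).2.1.2 _ (List.mem_map_of_mem (f := Prod.snd) hmem')
  -- linear independence
  have hindep : ∀ s : Finset ℕ, LinearIndependent ℚ (fun n : s => θf (n : ℕ)) := by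
    intro s
    set m := (s.sup id) + 1 with hm
    have hns : ∀ n ∈ s, n < m := fun n hn => Nat.lt_succ_of_le (Finset.le_sup (f := id) hn)
    have hbase : IndepSet ({1} ∪ (∅ : Set ℝ)) := by
      have h1 : IndepSet ({1} : Set ℝ) := (linearIndepOn_singleton_iff (R := ℚ) (v := id)).mpr one_ne_zero
      exact h1.congr (by simp)
    have hindS : IndepSet ({1} ∪ ((∅ : Set ℝ) ∪ {r | r ∈ (aux m).1.map Prod.snd})) :=
      freshL_indep hbase (aux m).2.1.2
    set S : Set ℝ := {1} ∪ ((∅ : Set ℝ) ∪ {r | r ∈ (aux m).1.map Prod.snd}) with hS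
    have hf : ∀ n : s, θf (n : ℕ) ∈ S := fun n =>
      Or.inr (Or.inr (hθmem _ m (hns _ n.2)))
    have hinj2 : Function.Injective (fun n : s => (⟨θf (n:ℕ), hf n⟩ : S)) := by
      intro a b hab
      have hv : θf (a:ℕ) = θf (b:ℕ) := congrArg Subtype.val hab
      exact Subtype.ext (hθinj hv)
    exact hindS.comp (fun n : s => (⟨θf (n:ℕ), hf n⟩ : S)) hinj2
  -- postconditions at every stage
  have hpost : ∀ n, Post (tsk n) (aux n).1 (bF (aux n).1 (tsk n) (aux n).2.1 (aux n).2.2) :=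
    fun n => hbPost (aux n).1 (tsk n) (aux n).2.1 (aux n).2.2
  have hbatchmem : ∀ n e, e ∈ bF (aux n).1 (tsk n) (aux n).2.1 (aux n).2.2 →
      ∃ i, (aux n).1.length ≤ i ∧ entry i = e := by
    intro n e he
    obtain ⟨j, hj, hje⟩ := List.mem_iff_getElem.mp he
    have hlt : (aux n).1.length + j < (aux (n+1)).1.length := by
      rw [aux_succ, List.length_append]
      omega
    refine ⟨(aux n).1.length + j, Nat.le_add_right _ _, ?_⟩
    rw [← hentry _ (n+1) hlt]
    have h2 : (aux (n+1)).1[(aux n).1.length + j]'hlt =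
        (bF (aux n).1 (tsk n) (aux n).2.1 (aux n).2.2)[j]'hj := by
      have h3 := List.getElem_of_eq (aux_succ n) hlt
      rw [h3, List.getElem_append_right (Nat.le_add_right _ _)]
      congr 1
      omega
    rw [h2]
    exact hje
  have hrange : ∀ n e, e ∈ (aux n).1 → e.1 ∈ Set.range x := by
    intro n e he
    obtain ⟨j, hj, hje⟩ := List.mem_iff_getElem.mp he
    have : entry j = e := by rw [← hentry j n hj]; exact hje
    exact ⟨j, congrArg Prod.fst this⟩
  -- density
  have hdense : Dense (Submodule.span ℂ (Set.range x) : Set X) := by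
    rw [Metric.dense_iff]
    intro z r hr
    obtain ⟨j, hj⟩ := hySeq.exists_dist_lt z (by positivity : (0:ℝ) < r/2)
    obtain ⟨p, hp⟩ := exists_nat_one_div_lt (show (0:ℝ) < r/2 by positivity)
    obtain ⟨n, _, htn⟩ := htsk (Sum.inl (j, p)) 0
    obtain ⟨zz, hzz, hzzd⟩ := (hpost n).1 j p (by rw [htn])
    refine ⟨zz, ?_, ?_⟩
    · rw [Metric.mem_ball]
      calc dist zz z ≤ dist zz (ySeq j) + dist (ySeq j) z := dist_triangle _ _ _
        _ < r/2 + r/2 := by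
            apply add_lt_add
            · rw [dist_eq_norm, norm_sub_rev]
              exact lt_trans hzzd hp
            · rw [dist_comm]
              exact hj
        _ = r := by ring
    · have hsub : {v : X | ∃ θ', (v,θ') ∈ bF (aux n).1 (tsk n) (aux n).2.1 (aux n).2.2} ⊆
          Set.range x := by
        intro v hv
        obtain ⟨θ', hθ'⟩ := hv
        have hmem2 : (v, θ') ∈ (aux (n+1)).1 := by
          rw [aux_succ]
          exact List.mem_append_right _ hθ'
        exact hrange (n+1) (v,θ') hmem2
      exact Submodule.span_mono hsub hzz
  -- condition (3)
  have hclosure : ∀ F : Set ℂ, F.Finite →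
      closure (Set.range x) = closure (x '' {k : ℕ | lam k ∉ F}) := by
    intro F hF
    apply subset_antisymm
    · apply closure_minimal ?_ isClosed_closure
      rintro _ ⟨n, rfl⟩
      by_cases hnF : lam n ∈ F
      · have hKfin : {k : ℕ | lam k ∈ F}.Finite := hF.preimage hlaminj.injOn
        obtain ⟨N, hN⟩ := hKfin.bddAbove
        rw [Metric.mem_closure_iff]
        intro ε hε
        obtain ⟨q, hq⟩ := exists_nat_one_div_lt hε
        obtain ⟨n', hn'ge, htn'⟩ := htsk (Sum.inr (n, q)) (max (N+1) (n+1))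
        have hnlt : n < (aux n').1.length :=
          hlen' n n' (lt_of_lt_of_le (Nat.lt_succ_self n) (le_trans (le_max_right _ _) hn'ge))
        obtain ⟨e, heb, hed⟩ := (hpost n').2 n q (by rw [htn']) hnlt
        obtain ⟨i, hi, hie⟩ := hbatchmem n' e heb
        have hxn : ((aux n').1[n]'hnlt).1 = x n := congrArg Prod.fst (hentry n n' hnlt)
        have hxi : x i = e.1 := congrArg Prod.fst hie
        have hiN : N + 1 ≤ i := by
          have h1 : N + 1 ≤ n' := le_trans (le_max_left _ _) hn'ge
          have h2 : n' < (aux n').1.length := hlen n'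
          omega
        have hlami : lam i ∉ F := by
          intro hcon
          have hmem3 : i ∈ {k : ℕ | lam k ∈ F} := hcon
          have := hN hmem3
          omega
        refine ⟨x i, Set.mem_image_of_mem x hlami, ?_⟩
        have hdle : dist (x n) (x i) ≤ 1/((q:ℝ)+1) := by
          rw [dist_eq_norm, norm_sub_rev, hxi, ← hxn]
          exact hed
        exact lt_of_le_of_lt hdle hq
      · exact subset_closure (Set.mem_image_of_mem x hnF)
    · exact closure_mono (Set.image_subset_range x _)
  refine ⟨x, lam, θf, hEig, fun n => evH_norm _, hIoc, fun n => rfl, hnorm1, ?_,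
    hdense, fun F hF _ => hclosure F hF⟩
  intro s _
  exact ⟨fun n _ => hirr n, hindep s⟩

end Construction


lemma countable_span_rat {s : Set ℝ} (hs : s.Countable) :
    (↑(Submodule.span ℚ s) : Set ℝ).Countable := by
  haveI := hs.to_subtype
  rw [← Subtype.range_coe (s := s)]
  have : Countable (Submodule.span ℚ (Set.range ((↑) : s → ℝ))) := inferInstance
  exact Set.countable_coe_iff.mp this

/-- If `T` has a perfectly spanning set of unimodular eigenvectors, then `T`
satisfies assumption (H): there exist a sequence `(x n)` of unit eigenvectors with
eigenvalues `lam n = exp (2 i π (θ n))`, `θ n ∈ (0, 1]`, such that (1) indices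
carrying distinct eigenvalues have ℚ-linearly independent irrational arguments,
(2) the `x n` span a dense subspace, and (3) for any finite set `F` of unimodular
eigenvalues the closure of `{x n : n ≥ 1}` equals the closure of
`{x n : lam n ∉ F}`. -/
theorem perfectlySpanning_implies_assumptionH
    {X : Type*} [NormedAddCommGroup X] [NormedSpace ℂ X] [CompleteSpace X]
    [TopologicalSpace.SeparableSpace X] (hdim : ¬ FiniteDimensional ℂ X)
    (T : X →L[ℂ] X) (hT : PerfectlySpanning T) :
    ∃ (x : ℕ → X) (lam : ℕ → ℂ) (θ : ℕ → ℝ),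
      (∀ n, T (x n) = lam n • x n) ∧
      (∀ n, ‖lam n‖ = 1) ∧
      (∀ n, θ n ∈ Set.Ioc (0 : ℝ) 1) ∧
      (∀ n, lam n = Complex.exp ((2 * Real.pi * θ n : ℝ) * Complex.I)) ∧
      (∀ n, ‖x n‖ = 1) ∧
      (∀ s : Finset ℕ, Set.InjOn lam ↑s →
        (∀ n ∈ s, Irrational (θ n)) ∧ LinearIndependent ℚ (fun n : s => θ (n : ℕ))) ∧
      Dense (Submodule.span ℂ (Set.range x) : Set X) ∧
      (∀ F : Set ℂ, F.Finite →
        F ⊆ {c : ℂ | ‖c‖ = 1 ∧ ∃ v : X, v ≠ 0 ∧ T v = c • v} →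
        closure (Set.range x) = closure (x '' {k : ℕ | lam k ∉ F})) := by
  classical
  obtain ⟨σ, hprob, hatom, hcirc, hspan⟩ := hT
  haveI := hprob
  haveI : NullSingletonClass σ := ⟨hatom⟩
  have hnt' : Nontrivial X := by
    by_contra h
    rw [not_nontrivial_iff_subsingleton] at h
    exact hdim (Module.Finite.of_basis (Module.Basis.empty X (ι := Fin 0)))
  haveI : Nonempty X := ⟨0⟩
  set ySeq := TopologicalSpace.denseSeq X with hySeqDef
  have hySeq := TopologicalSpace.denseRange_denseSeq X
  -- the sets of approximate eigenvalues
  set E : X → ℝ → Set ℂ :=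
    fun u ε => {c : ℂ | ∃ v : X, ‖v‖ = 1 ∧ T v = c • v ∧ ‖v - u‖ ≤ ε} with hEDef
  set Z : Set ℂ := ⋃ (n : ℕ) (k : ℕ),
    if σ (E (ySeq n) (1/((k:ℝ)+1))) = 0 then E (ySeq n) (1/((k:ℝ)+1)) else ∅ with hZDef
  have hZ : σ Z = 0 := by
    apply measure_iUnion_null
    intro n
    apply measure_iUnion_null
    intro k
    split_ifs with h
    · exact h
    · simp
  have hZ' : σ (toMeasurable σ Z) = 0 := by rwa [measure_toMeasurable]
  have hcircmeas : MeasurableSet {c : ℂ | ‖c‖ = 1} :=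
    (isClosed_singleton.preimage continuous_norm).measurableSet
  set A : Set ℂ := {c : ℂ | ‖c‖ = 1} \ toMeasurable σ Z with hADef
  have hAsub : A ⊆ {c : ℂ | ‖c‖ = 1} := Set.diff_subset
  have hAmeas : MeasurableSet A := hcircmeas.diff (measurableSet_toMeasurable σ Z)
  have hA1 : σ A = 1 := by
    rw [hADef, measure_diff_null hZ']
    exact hcirc
  have hcompl : σ ({c : ℂ | ‖c‖ = 1}ᶜ) = 0 := by
    rw [measure_compl hcircmeas (measure_ne_top σ _), hcirc, measure_univ, tsub_self]
  -- goodness: eigenvalues in A have positive measure of approximate eigenvalues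
  have hgoodpos : ∀ (u : X) (c : ℂ), ‖u‖ = 1 → T u = c • u → c ∈ A →
      ∀ ε : ℝ, 0 < ε → σ (E u ε) ≠ 0 := by
    intro u c hu hTu hcA ε hε h0
    obtain ⟨k, hk⟩ := exists_nat_one_div_lt (show (0:ℝ) < ε/2 by positivity)
    set ρ : ℝ := 1/((k:ℝ)+1) with hρDef
    have hρpos : 0 < ρ := by positivity
    obtain ⟨n, hn⟩ := hySeq.exists_dist_lt u (show (0:ℝ) < ρ/2 by positivity)
    have hsub : E (ySeq n) ρ ⊆ E u ε := by
      rintro c' ⟨v, hv1, hv2, hv3⟩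
      refine ⟨v, hv1, hv2, ?_⟩
      have hud : ‖u - ySeq n‖ < ρ/2 := by
        rw [← dist_eq_norm]
        exact hn
      have : ‖v - u‖ ≤ ‖v - ySeq n‖ + ‖ySeq n - u‖ := by
        convert norm_add_le _ _ using 2
        · rfl
        abel
      rw [norm_sub_rev] at hud
      have hρε : ρ < ε/2 := hk
      linarith
    have h00 : σ (E (ySeq n) ρ) = 0 := measure_mono_null hsub h0
    have hZsub : E (ySeq n) ρ ⊆ Z := by
      intro c' hc'
      rw [hZDef]
      refine Set.mem_iUnion.mpr ⟨n, Set.mem_iUnion.mpr ⟨k, ?_⟩⟩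
      rw [if_pos h00]
      exact hc'
    have hcE : c ∈ E (ySeq n) ρ := by
      refine ⟨u, hu, hTu, ?_⟩
      have : ‖u - ySeq n‖ < ρ/2 := by rw [← dist_eq_norm]; exact hn
      linarith
    exact hcA.2 (subset_toMeasurable σ Z (hZsub hcE))
  -- the predicate Q
  set Q : X → ℝ → Prop :=
    fun u θ => ‖u‖ = 1 ∧ θ ∈ Set.Ioc (0:ℝ) 1 ∧ T u = evH θ • u ∧ evH θ ∈ A with hQDef
  have hQproj : ∀ u θ, Q u θ → ‖u‖ = 1 ∧ θ ∈ Set.Ioc (0:ℝ) 1 ∧ T u = evH θ • u :=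
    fun u θ h => ⟨h.1, h.2.1, h.2.2.1⟩
  -- freshness
  have hfresh : ∀ u θ, Q u θ → ∀ ε : ℝ, 0 < ε → ∀ Θ : Set ℝ, Θ.Countable →
      ∃ u' θ', Q u' θ' ∧ θ' ∉ Submodule.span ℚ ({1} ∪ Θ) ∧ ‖u' - u‖ ≤ ε := by
    intro u θ hQu ε hε Θ hΘ
    set B : Set ℂ := evH '' (↑(Submodule.span ℚ ({1} ∪ Θ)) : Set ℝ) with hBDef
    have hBc : B.Countable := (countable_span_rat (by
      exact (Set.countable_singleton 1).union hΘ)).image _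
    set bad : Set ℂ := toMeasurable σ Z ∪ B ∪ {c : ℂ | ‖c‖ = 1}ᶜ with hbadDef
    have hbadnull : σ bad = 0 :=
      measure_union_null (measure_union_null hZ' (hBc.measure_zero σ)) hcompl
    have hpos := hgoodpos u (evH θ) hQu.1 hQu.2.2.1 hQu.2.2.2 ε hε
    have hne : (E u ε \ bad).Nonempty := by
      rw [Set.nonempty_iff_ne_empty]
      intro h
      apply hpos
      have hsub2 : E u ε ⊆ (E u ε \ bad) ∪ bad := by
        intro c hc
        by_cases hb : c ∈ bad
        · exact Or.inr hb
        · exact Or.inl ⟨hc, hb⟩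
      refine le_antisymm ?_ zero_le
      calc σ (E u ε) ≤ σ ((E u ε \ bad) ∪ bad) := measure_mono hsub2
        _ ≤ σ (E u ε \ bad) + σ bad := measure_union_le _ _
        _ = 0 := by rw [h, hbadnull]; simp
    obtain ⟨c, hcE, hcbad⟩ := hne
    have hcZ' : c ∉ toMeasurable σ Z := fun h => hcbad (Or.inl (Or.inl h))
    have hcB : c ∉ B := fun h => hcbad (Or.inl (Or.inr h))
    have hcnorm : ‖c‖ = 1 := by
      by_contra h
      exact hcbad (Or.inr h)
    obtain ⟨v, hv1, hv2, hv3⟩ := hcE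
    obtain ⟨θ', hθ'Ioc, rfl⟩ := evH_surj hcnorm
    refine ⟨v, θ', ⟨hv1, hθ'Ioc, hv2, ⟨hcnorm, hcZ'⟩⟩, ?_, hv3⟩
    intro hsp
    exact hcB ⟨θ', hsp, rfl⟩
  -- a seed pair
  have hdA := hspan A hAsub hAmeas hA1
  have hseedQ : ∃ u θ, Q u θ := by
    have hUne : ∃ v : X, v ≠ 0 ∧ v ∈ ⋃ c ∈ A, {x : X | T x = c • x} := by
      by_contra h
      push_neg at h
      have hU0 : (⋃ c ∈ A, {x : X | T x = c • x}) ⊆ {(0:X)} := by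
        intro v hv
        rcases eq_or_ne v 0 with rfl | hne
        · rfl
        · exact absurd hv (h v hne)
      have hsple : Submodule.span ℂ (⋃ c ∈ A, {x : X | T x = c • x}) ≤ ⊥ := by
        rw [← Submodule.span_zero_singleton ℂ]
        exact Submodule.span_mono hU0
      obtain ⟨w, hw⟩ := exists_ne (0 : X)
      have hwmem : w ∈ closure (Submodule.span ℂ (⋃ c ∈ A, {x : X | T x = c • x}) : Set X) :=
        hdA w
      have hsub3 : (Submodule.span ℂ (⋃ c ∈ A, {x : X | T x = c • x}) : Set X) ⊆ {0} := by
        intro v hv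
        have := hsple hv
        simpa using this
      have := (closure_mono hsub3) hwmem
      rw [closure_singleton] at this
      exact hw this
    obtain ⟨v, hv0, hvU⟩ := hUne
    rw [Set.mem_iUnion₂] at hvU
    obtain ⟨c, hcA, hTv⟩ := hvU
    obtain ⟨θ₀, hθ₀, rfl⟩ := evH_surj (hAsub hcA)
    have hn0 : ‖v‖ ≠ 0 := norm_ne_zero_iff.mpr hv0
    have hn0' : ((‖v‖ : ℝ) : ℂ) ≠ 0 := by
      simpa using hn0
    refine ⟨(‖v‖ : ℂ)⁻¹ • v, θ₀, ?_, hθ₀, ?_, hcA⟩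
    · rw [norm_smul, norm_inv, Complex.norm_real, norm_norm]
      field_simp
    · rw [_root_.map_smul, show T v = evH θ₀ • v from hTv, smul_comm]
  -- combination lemma
  have hcombo : ∀ (y : X) (δ : ℝ), 0 < δ →
      ∃ l : List (ℂ × X × ℝ), (∀ e ∈ l, Q e.2.1 e.2.2) ∧
        ‖y - (l.map fun e => e.1 • e.2.1).sum‖ < δ := by
    intro y δ hδ
    have hy := hdA y
    rw [Metric.mem_closure_iff] at hy
    obtain ⟨z, hz, hzd⟩ := hy δ hδ
    rw [SetLike.mem_coe] at hz
    obtain ⟨m, f, g, hsum⟩ := Submodule.mem_span_set'.mp hz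
    have hgU : ∀ i : Fin m, ∃ c ∈ A, T (g i : X) = c • (g i : X) := by
      intro i
      have hgi := (g i).2
      rw [Set.mem_iUnion₂] at hgi
      obtain ⟨c, hc1, hc2⟩ := hgi
      exact ⟨c, hc1, hc2⟩
    choose cF hcF hTF using hgU
    have hsurjF : ∀ i : Fin m, ∃ θ' ∈ Set.Ioc (0:ℝ) 1, cF i = evH θ' :=
      fun i => evH_surj (hAsub (hcF i))
    choose θF hθF hθeq using hsurjF
    obtain ⟨u₀, θ₀, hQ₀⟩ := hseedQ
    set mk : Fin m → ℂ × X × ℝ := fun i =>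
      if (g i : X) = 0 then ((0:ℂ), u₀, θ₀)
      else (f i * (‖(g i : X)‖ : ℂ), ((‖(g i : X)‖ : ℝ) : ℂ)⁻¹ • (g i : X), θF i) with hmkDef
    refine ⟨List.ofFn mk, ?_, ?_⟩
    · intro e he
      rw [List.mem_ofFn] at he
      obtain ⟨i, rfl⟩ := he
      rw [hmkDef]
      simp only
      split_ifs with h
      · exact hQ₀
      · have hn0 : ‖(g i : X)‖ ≠ 0 := norm_ne_zero_iff.mpr h
        refine ⟨?_, hθF i, ?_, ?_⟩
        · rw [norm_smul, norm_inv, Complex.norm_real, norm_norm]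
          field_simp
        · rw [_root_.map_smul, hTF i, ← hθeq i, smul_comm]
        · rw [← hθeq i]
          exact hcF i
    · have hmap : (List.ofFn mk).map (fun e => e.1 • e.2.1) =
          List.ofFn (fun i => (mk i).1 • (mk i).2.1) := by
        rw [List.map_ofFn]
        rfl
      rw [hmap, List.sum_ofFn]
      have hsum2 : ∑ i, (mk i).1 • (mk i).2.1 = ∑ i, f i • (g i : X) := by
        apply Finset.sum_congr rfl
        intro i _
        rw [hmkDef]
        simp only
        split_ifs with h
        · simp [h]
        · have hn0 : ((‖(g i : X)‖ : ℝ) : ℂ) ≠ 0 := by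
            simpa using norm_ne_zero_iff.mpr h
          rw [smul_smul, mul_assoc, mul_inv_cancel₀ hn0, mul_one]
      rw [hsum2, hsum, ← dist_eq_norm]
      exact hzd
  obtain ⟨u₀, θ₀, hQu₀⟩ := hseedQ
  exact assumptionH_construction T Q hQproj hfresh hcombo ⟨u₀, hQu₀.1⟩ ySeq hySeq
end
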